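/- arXiv:2006.11429 — 9 statements merged into one kernel-verified Lean document; each statement's English description precedes it below -/
import Mathlib

section
/- Let μ, ν ≥ 0 be real numbers. For g : Finset ℤ × Finset ℤ → ℝ define the norm ‖g‖ = ∑_{(X,Y)} |g(X,Y)|·exp(μ|X| + ν|Y|) (a sum over all pairs of finite subsets of ℤ, where |X| denotes cardinality). If g₁ and g₂ have finite norm, then the convolution product (g₁ ∗ g₂)(X,Y) = ∑_{X₁ Δ X₂ = X, Y₁ Δ Y₂ = Y} g₁(X₁,Y₁) g₂(X₂,Y₂) (sum over all quadruples of finite sets whose symmetric differences equal X and Y respectively) is absolutely convergent for every (X,Y), and ‖g₁ ∗ g₂‖ ≤ ‖g₁‖·‖g₂‖. -/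
open scoped symmDiff

def convFiberEquiv (p : Finset ℤ × Finset ℤ) :
    {q : (Finset ℤ × Finset ℤ) × (Finset ℤ × Finset ℤ) //
      q.1.1 ∆ q.2.1 = p.1 ∧ q.1.2 ∆ q.2.2 = p.2} ≃
    {q : (Finset ℤ × Finset ℤ) × (Finset ℤ × Finset ℤ) //
      (q.1.1 ∆ q.2.1, q.1.2 ∆ q.2.2) = p} where
  toFun q := ⟨q.1, Prod.ext q.2.1 q.2.2⟩
  invFun q := ⟨q.1, congrArg Prod.fst q.2, congrArg Prod.snd q.2⟩
  left_inv q := rfl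
  right_inv q := rfl

set_option maxHeartbeats 1000000 in
/-- Banach algebra property of the weighted `ℓ¹` norm
`‖g‖ = ∑_{X,Y} |g(X,Y)|·exp(μ|X| + ν|Y|)` under the convolution product
`(g₁ ∗ g₂)(X,Y) = ∑_{X₁ Δ X₂ = X, Y₁ Δ Y₂ = Y} g₁(X₁,Y₁)·g₂(X₂,Y₂)`:
the convolution converges absolutely at each `(X,Y)`, its norm sum is
summable, and `‖g₁ ∗ g₂‖ ≤ ‖g₁‖·‖g₂‖`. -/
theorem conv_norm_le (μ ν : ℝ) (hμ : 0 ≤ μ) (hν : 0 ≤ ν)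
    (g₁ g₂ : Finset ℤ × Finset ℤ → ℝ)
    (h₁ : Summable fun p : Finset ℤ × Finset ℤ =>
      |g₁ p| * Real.exp (μ * p.1.card + ν * p.2.card))
    (h₂ : Summable fun p : Finset ℤ × Finset ℤ =>
      |g₂ p| * Real.exp (μ * p.1.card + ν * p.2.card)) :
    (∀ X Y : Finset ℤ,
      Summable fun q : {q : (Finset ℤ × Finset ℤ) × (Finset ℤ × Finset ℤ) //
          q.1.1 ∆ q.2.1 = X ∧ q.1.2 ∆ q.2.2 = Y} =>
        |g₁ q.1.1 * g₂ q.1.2|) ∧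
    (Summable fun p : Finset ℤ × Finset ℤ =>
      |∑' q : {q : (Finset ℤ × Finset ℤ) × (Finset ℤ × Finset ℤ) //
          q.1.1 ∆ q.2.1 = p.1 ∧ q.1.2 ∆ q.2.2 = p.2}, g₁ q.1.1 * g₂ q.1.2| *
        Real.exp (μ * p.1.card + ν * p.2.card)) ∧
    (∑' p : Finset ℤ × Finset ℤ,
      |∑' q : {q : (Finset ℤ × Finset ℤ) × (Finset ℤ × Finset ℤ) //
          q.1.1 ∆ q.2.1 = p.1 ∧ q.1.2 ∆ q.2.2 = p.2}, g₁ q.1.1 * g₂ q.1.2| *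
        Real.exp (μ * p.1.card + ν * p.2.card)) ≤
      (∑' p : Finset ℤ × Finset ℤ, |g₁ p| * Real.exp (μ * p.1.card + ν * p.2.card)) *
      (∑' p : Finset ℤ × Finset ℤ, |g₂ p| * Real.exp (μ * p.1.card + ν * p.2.card)) := by
  classical
  set w : Finset ℤ × Finset ℤ → ℝ := fun p => Real.exp (μ * p.1.card + ν * p.2.card) with hw
  have hwpos : ∀ p, 0 < w p := fun p => Real.exp_pos _
  set f : (Finset ℤ × Finset ℤ) × (Finset ℤ × Finset ℤ) → Finset ℤ × Finset ℤ :=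
    fun q => (q.1.1 ∆ q.2.1, q.1.2 ∆ q.2.2) with hf
  set G : (Finset ℤ × Finset ℤ) × (Finset ℤ × Finset ℤ) → ℝ :=
    fun q => |g₁ q.1 * g₂ q.2| * w (f q) with hG
  have hcard : ∀ A B : Finset ℤ, ((A ∆ B).card : ℝ) ≤ A.card + B.card := by
    intro A B
    have h1 : A ∆ B ⊆ A ∪ B := symmDiff_le_sup
    have := (Finset.card_le_card h1).trans (Finset.card_union_le A B)
    exact_mod_cast this
  have hGle : ∀ q, G q ≤ (|g₁ q.1| * w q.1) * (|g₂ q.2| * w q.2) := by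
    intro q
    have hwle : w (f q) ≤ w q.1 * w q.2 := by
      rw [hw, ← Real.exp_add]
      apply Real.exp_le_exp.2
      have h1 := mul_le_mul_of_nonneg_left (hcard q.1.1 q.2.1) hμ
      have h2 := mul_le_mul_of_nonneg_left (hcard q.1.2 q.2.2) hν
      simp only [hf]
      nlinarith
    calc G q = |g₁ q.1| * |g₂ q.2| * w (f q) := by simp only [hG, abs_mul]
    _ ≤ |g₁ q.1| * |g₂ q.2| * (w q.1 * w q.2) := by
        apply mul_le_mul_of_nonneg_left hwle; positivity
    _ = (|g₁ q.1| * w q.1) * (|g₂ q.2| * w q.2) := by ring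
  have hF : Summable fun q : (Finset ℤ × Finset ℤ) × (Finset ℤ × Finset ℤ) =>
      (|g₁ q.1| * w q.1) * (|g₂ q.2| * w q.2) :=
    h₁.mul_of_nonneg h₂ (fun p => by positivity) (fun p => by positivity)
  have hGsum : Summable G :=
    hF.of_nonneg_of_le (fun q => by positivity) hGle
  -- sigma decomposition over fibers of f
  have hsig : Summable fun x : (p : Finset ℤ × Finset ℤ) × {q // f q = p} => G x.2 := by
    have := (Equiv.sigmaFiberEquiv f).summable_iff.2 hGsum
    exact this
  have hfib : ∀ p : Finset ℤ × Finset ℤ, Summable fun q : {q // f q = p} => G q :=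
    fun p => hsig.sigma_factor p
  -- equivalence between the statement's subtype and the fiber subtype
  let e : ∀ p : Finset ℤ × Finset ℤ,
      {q : (Finset ℤ × Finset ℤ) × (Finset ℤ × Finset ℤ) //
        q.1.1 ∆ q.2.1 = p.1 ∧ q.1.2 ∆ q.2.2 = p.2} ≃ {q // f q = p} :=
    fun p => convFiberEquiv p
  -- part 1
  have part1 : ∀ X Y : Finset ℤ,
      Summable fun q : {q : (Finset ℤ × Finset ℤ) × (Finset ℤ × Finset ℤ) //
          q.1.1 ∆ q.2.1 = X ∧ q.1.2 ∆ q.2.2 = Y} =>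
        |g₁ q.1.1 * g₂ q.1.2| := by
    intro X Y
    have h := hfib (X, Y)
    have h' : Summable fun q : {q // f q = (X, Y)} =>
        |g₁ q.1.1 * g₂ q.1.2| * w (X, Y) := by
      apply h.congr
      intro q
      show |g₁ q.1.1 * g₂ q.1.2| * w (f q.1) = _
      rw [q.2]
    have h'' := (summable_mul_right_iff (hwpos (X, Y)).ne').1 h'
    exact ((Equiv.summable_iff (e (X, Y))).2 h'').congr fun q => rfl
  -- key pointwise bound relating the statement's tsum to the fiber sums
  have hpt : ∀ p : Finset ℤ × Finset ℤ,
      |∑' q : {q : (Finset ℤ × Finset ℤ) × (Finset ℤ × Finset ℤ) //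
          q.1.1 ∆ q.2.1 = p.1 ∧ q.1.2 ∆ q.2.2 = p.2}, g₁ q.1.1 * g₂ q.1.2| * w p
        ≤ ∑' q : {q // f q = p}, G q := by
    intro p
    have hs := part1 p.1 p.2
    have habs : |∑' q : {q : (Finset ℤ × Finset ℤ) × (Finset ℤ × Finset ℤ) //
          q.1.1 ∆ q.2.1 = p.1 ∧ q.1.2 ∆ q.2.2 = p.2}, g₁ q.1.1 * g₂ q.1.2|
        ≤ ∑' q : {q : (Finset ℤ × Finset ℤ) × (Finset ℤ × Finset ℤ) //
          q.1.1 ∆ q.2.1 = p.1 ∧ q.1.2 ∆ q.2.2 = p.2}, |g₁ q.1.1 * g₂ q.1.2| := by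
      have hsnorm : Summable fun q : {q : (Finset ℤ × Finset ℤ) × (Finset ℤ × Finset ℤ) //
          q.1.1 ∆ q.2.1 = p.1 ∧ q.1.2 ∆ q.2.2 = p.2} => ‖g₁ q.1.1 * g₂ q.1.2‖ :=
        hs.congr fun q => (Real.norm_eq_abs _).symm
      have := norm_tsum_le_tsum_norm hsnorm
      simpa only [Real.norm_eq_abs] using this
    calc |∑' q : {q : (Finset ℤ × Finset ℤ) × (Finset ℤ × Finset ℤ) //
          q.1.1 ∆ q.2.1 = p.1 ∧ q.1.2 ∆ q.2.2 = p.2}, g₁ q.1.1 * g₂ q.1.2| * w p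
        ≤ (∑' q : {q : (Finset ℤ × Finset ℤ) × (Finset ℤ × Finset ℤ) //
          q.1.1 ∆ q.2.1 = p.1 ∧ q.1.2 ∆ q.2.2 = p.2}, |g₁ q.1.1 * g₂ q.1.2|) * w p :=
          mul_le_mul_of_nonneg_right habs (hwpos p).le
      _ = ∑' q : {q : (Finset ℤ × Finset ℤ) × (Finset ℤ × Finset ℤ) //
          q.1.1 ∆ q.2.1 = p.1 ∧ q.1.2 ∆ q.2.2 = p.2}, |g₁ q.1.1 * g₂ q.1.2| * w p := by
          rw [tsum_mul_right]
      _ = ∑' q : {q // f q = p}, G q := by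
          rw [← Equiv.tsum_eq (e p) (fun q : {q // f q = p} => G q)]
          apply tsum_congr
          intro q
          have hq : f (↑q : (Finset ℤ × Finset ℤ) × (Finset ℤ × Finset ℤ)) = p :=
            Prod.ext q.2.1 q.2.2
          show |g₁ q.1.1 * g₂ q.1.2| * w p = |g₁ q.1.1 * g₂ q.1.2| * w (f q.1)
          rw [hq]
  have hSsum : Summable fun p : Finset ℤ × Finset ℤ => ∑' q : {q // f q = p}, G q :=
    hsig.sigma
  have hSnn : ∀ p : Finset ℤ × Finset ℤ, (0:ℝ) ≤
      |∑' q : {q : (Finset ℤ × Finset ℤ) × (Finset ℤ × Finset ℤ) //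
          q.1.1 ∆ q.2.1 = p.1 ∧ q.1.2 ∆ q.2.2 = p.2}, g₁ q.1.1 * g₂ q.1.2| * w p :=
    fun p => by positivity
  have part2 : Summable fun p : Finset ℤ × Finset ℤ =>
      |∑' q : {q : (Finset ℤ × Finset ℤ) × (Finset ℤ × Finset ℤ) //
          q.1.1 ∆ q.2.1 = p.1 ∧ q.1.2 ∆ q.2.2 = p.2}, g₁ q.1.1 * g₂ q.1.2| * w p :=
    hSsum.of_nonneg_of_le hSnn hpt
  refine ⟨part1, part2, ?_⟩
  calc (∑' p : Finset ℤ × Finset ℤ,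
      |∑' q : {q : (Finset ℤ × Finset ℤ) × (Finset ℤ × Finset ℤ) //
          q.1.1 ∆ q.2.1 = p.1 ∧ q.1.2 ∆ q.2.2 = p.2}, g₁ q.1.1 * g₂ q.1.2| * w p)
      ≤ ∑' p : Finset ℤ × Finset ℤ, ∑' q : {q // f q = p}, G q :=
        Summable.tsum_le_tsum hpt part2 hSsum
    _ = ∑' x : (p : Finset ℤ × Finset ℤ) × {q // f q = p}, G x.2 := (Summable.tsum_sigma hsig).symm
    _ = ∑' q : (Finset ℤ × Finset ℤ) × (Finset ℤ × Finset ℤ), G q :=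
        Equiv.tsum_eq (Equiv.sigmaFiberEquiv f) G
    _ ≤ ∑' q : (Finset ℤ × Finset ℤ) × (Finset ℤ × Finset ℤ),
        (|g₁ q.1| * w q.1) * (|g₂ q.2| * w q.2) := Summable.tsum_le_tsum hGle hGsum hF
    _ = (∑' p : Finset ℤ × Finset ℤ, |g₁ p| * w p) *
        (∑' p : Finset ℤ × Finset ℤ, |g₂ p| * w p) := by
        have hA : Summable fun p : Finset ℤ × Finset ℤ => ‖|g₁ p| * w p‖ :=
          h₁.congr fun p => (Real.norm_of_nonneg (by positivity)).symm
        have hB : Summable fun p : Finset ℤ × Finset ℤ => ‖|g₂ p| * w p‖ :=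
          h₂.congr fun p => (Real.norm_of_nonneg (by positivity)).symm
        exact (tsum_mul_tsum_of_summable_norm hA hB).symm
end

section
/- Let A be a commutative unital real Banach algebra (with ‖ab‖ ≤ ‖a‖‖b‖ and ‖1‖ = 1), and let T : A → A be a linear map with T(1) = 1 and ‖T(g)‖ ≤ ‖g‖ for all g ∈ A. Let δ ∈ A with ‖δ‖ < ln 2. Then T(exp δ) is invertible in A, and for every g ∈ A, ‖T(g·exp δ)·(T(exp δ))⁻¹ − T(g)‖ ≤ ρ(‖δ‖)·‖g‖, where ρ(r) = 2(e^r − 1)/(2 − e^r). -/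
open Nat

lemma exp_sub_one_norm_le' {A : Type*} [NormedCommRing A] [NormedAlgebra ℝ A]
    [CompleteSpace A] [NormOneClass A] (x : A) :
    ‖NormedSpace.exp x - 1‖ ≤ Real.exp ‖x‖ - 1 := by
  have hs : Summable fun n : ℕ => ((n ! : ℝ)⁻¹) • x ^ n :=
    NormedSpace.expSeries_summable' (𝕂 := ℝ) x
  have hrs : Summable fun n : ℕ => ((n ! : ℝ)⁻¹) • ‖x‖ ^ n :=
    NormedSpace.expSeries_summable' (𝕂 := ℝ) ‖x‖
  have hre : Real.exp ‖x‖ = ∑' n : ℕ, ((n ! : ℝ)⁻¹) • ‖x‖ ^ n := by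
    rw [Real.exp_eq_exp_ℝ, NormedSpace.exp_eq_tsum ℝ]
  have hkey : HasSum (fun n : ℕ => (((n + 1)! : ℝ)⁻¹) • ‖x‖ ^ (n + 1))
      (Real.exp ‖x‖ - 1) := by
    have h := (hasSum_nat_add_iff' (f := fun n : ℕ => ((n ! : ℝ)⁻¹) • ‖x‖ ^ n) 1).mpr
      hrs.hasSum
    simpa [hre] using h
  have hx1 : NormedSpace.exp x - 1 = ∑' n : ℕ, (((n + 1)! : ℝ)⁻¹) • x ^ (n + 1) := by
    rw [NormedSpace.exp_eq_tsum ℝ]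
    show (∑' n : ℕ, ((n ! : ℝ)⁻¹) • x ^ n) - 1 = _
    rw [Summable.tsum_eq_zero_add hs]
    simp
  rw [hx1]
  refine tsum_of_norm_bounded hkey fun n => ?_
  rw [norm_smul]
  have h1 : ‖x ^ (n + 1)‖ ≤ ‖x‖ ^ (n + 1) := norm_pow_le' x (Nat.succ_pos n)
  have h2 : (0 : ℝ) ≤ ((n + 1)! : ℝ)⁻¹ := by positivity
  calc ‖(((n + 1)! : ℝ)⁻¹)‖ * ‖x ^ (n + 1)‖
      = ((n + 1)! : ℝ)⁻¹ * ‖x ^ (n + 1)‖ := by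
        rw [Real.norm_eq_abs, abs_of_nonneg h2]
    _ ≤ ((n + 1)! : ℝ)⁻¹ * ‖x‖ ^ (n + 1) := by
        exact mul_le_mul_of_nonneg_left h1 h2
    _ = (((n + 1)! : ℝ)⁻¹) • ‖x‖ ^ (n + 1) := by rw [smul_eq_mul]

/-- Abstract perturbation bound for the expectation functional: if `T` is a
unital norm-contracting linear map on a commutative unital real Banach algebra
and `‖δ‖ < ln 2`, then `T(exp δ)` is invertible and the perturbed functional
`g ↦ T(g·exp δ)·(T(exp δ))⁻¹` differs from `T` by at most
`ρ(‖δ‖)·‖g‖` where `ρ(r) = 2(eʳ − 1)/(2 − eʳ)`. -/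
theorem perturbation_bound_expectation
    {A : Type*} [NormedCommRing A] [NormedAlgebra ℝ A] [CompleteSpace A]
    [NormOneClass A]
    (T : A →ₗ[ℝ] A) (hT1 : T 1 = 1) (hTnorm : ∀ g : A, ‖T g‖ ≤ ‖g‖)
    (δ : A) (hδ : ‖δ‖ < Real.log 2) :
    IsUnit (T (NormedSpace.exp δ)) ∧
    ∀ g : A,
      ‖T (g * NormedSpace.exp δ) * Ring.inverse (T (NormedSpace.exp δ)) - T g‖ ≤
        2 * (Real.exp ‖δ‖ - 1) / (2 - Real.exp ‖δ‖) * ‖g‖ := by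
  set E := NormedSpace.exp δ with hE
  have h2 : Real.exp ‖δ‖ < 2 := by
    have := Real.exp_lt_exp.mpr hδ
    rwa [Real.exp_log (by norm_num : (0:ℝ) < 2)] at this
  have he1 : 1 ≤ Real.exp ‖δ‖ := Real.one_le_exp (norm_nonneg δ)
  have hE1 : ‖E - 1‖ ≤ Real.exp ‖δ‖ - 1 := exp_sub_one_norm_le' δ
  have hTE1 : ‖T E - 1‖ ≤ Real.exp ‖δ‖ - 1 := by
    calc ‖T E - 1‖ = ‖T (E - 1)‖ := by rw [map_sub, hT1]
      _ ≤ ‖E - 1‖ := hTnorm _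
      _ ≤ _ := hE1
  set t := 1 - T E with ht
  have htle : ‖t‖ ≤ Real.exp ‖δ‖ - 1 := by
    rw [ht, ← neg_sub, norm_neg]; exact hTE1
  have htn : ‖t‖ < 1 := lt_of_le_of_lt htle (by linarith)
  have hTEt : T E = 1 - t := by rw [ht]; ring
  have hunit : IsUnit (T E) := by
    rw [hTEt]; exact isUnit_one_sub_of_norm_lt_one htn
  refine ⟨hunit, fun g => ?_⟩
  have hinv : Ring.inverse (T E) = ∑' n : ℕ, t ^ n := by
    rw [hTEt, ← geom_series_eq_inverse t htn]
  have hinvn : ‖Ring.inverse (T E)‖ ≤ (1 - ‖t‖)⁻¹ := by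
    rw [hinv]
    have := tsum_geometric_le_of_norm_lt_one t htn
    simpa using this
  have hcancel : T E * Ring.inverse (T E) = 1 := Ring.mul_inverse_cancel _ hunit
  have hdiff : T (g * E) * Ring.inverse (T E) - T g
      = (T (g * E) - T g * T E) * Ring.inverse (T E) := by
    rw [sub_mul, mul_assoc, hcancel, mul_one]
  have hX : ‖T (g * E) - T g * T E‖ ≤ 2 * (Real.exp ‖δ‖ - 1) * ‖g‖ := by
    have hsplit : T (g * E) - T g * T E = T (g * (E - 1)) + T g * t := by
      rw [ht, mul_sub, map_sub, mul_one]
      ring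
    rw [hsplit]
    have h1 : ‖T (g * (E - 1))‖ ≤ ‖g‖ * (Real.exp ‖δ‖ - 1) :=
      calc ‖T (g * (E - 1))‖ ≤ ‖g * (E - 1)‖ := hTnorm _
        _ ≤ ‖g‖ * ‖E - 1‖ := norm_mul_le _ _
        _ ≤ ‖g‖ * (Real.exp ‖δ‖ - 1) :=
            mul_le_mul_of_nonneg_left hE1 (norm_nonneg g)
    have h2' : ‖T g * t‖ ≤ ‖g‖ * (Real.exp ‖δ‖ - 1) :=
      calc ‖T g * t‖ ≤ ‖T g‖ * ‖t‖ := norm_mul_le _ _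
        _ ≤ ‖g‖ * (Real.exp ‖δ‖ - 1) :=
            mul_le_mul (hTnorm g) htle (norm_nonneg t) (norm_nonneg g)
    calc ‖T (g * (E - 1)) + T g * t‖ ≤ ‖T (g * (E - 1))‖ + ‖T g * t‖ := norm_add_le _ _
      _ ≤ 2 * (Real.exp ‖δ‖ - 1) * ‖g‖ := by linarith
  have hinvn' : ‖Ring.inverse (T E)‖ ≤ (2 - Real.exp ‖δ‖)⁻¹ := by
    refine hinvn.trans ?_
    apply inv_anti₀ (by linarith)
    linarith
  rw [hdiff]
  calc ‖(T (g * E) - T g * T E) * Ring.inverse (T E)‖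
      ≤ ‖T (g * E) - T g * T E‖ * ‖Ring.inverse (T E)‖ := norm_mul_le _ _
    _ ≤ (2 * (Real.exp ‖δ‖ - 1) * ‖g‖) * (2 - Real.exp ‖δ‖)⁻¹ := by
        have hpos : (0:ℝ) < 2 - Real.exp ‖δ‖ := by linarith
        apply mul_le_mul hX hinvn' (norm_nonneg _)
        nlinarith [norm_nonneg g]
    _ = 2 * (Real.exp ‖δ‖ - 1) / (2 - Real.exp ‖δ‖) * ‖g‖ := by ring
end

section
/- Let 1 < α < 2. There exists a constant c > 0 such that for all p ∈ (0, π]: ∑_{n=1}^∞ (1 − cos(n·p))·n^{−α} ≥ c·p^{α−1}. -/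
open Real Finset

private lemma sq_sum_lower (N : ℕ) : (N : ℝ)^3 / 6 ≤ ∑ n ∈ Finset.Icc 1 N, (n:ℝ)^2 := by
  induction N with
  | zero => simp
  | succ k ih =>
    rw [Finset.sum_Icc_succ_top (by omega)]
    push_cast
    push_cast at ih
    nlinarith [ih, Nat.cast_nonneg (α := ℝ) k]

/-- Lower bound on the Fourier transform of the power-law coupling: for
`1 < α < 2` there is `c > 0` with
`∑_{n=1}^∞ (1 − cos(np)) n^{−α} ≥ c·p^{α−1}` for all `p ∈ (0, π]`.
(The `n = 0` term of the sum below vanishes, so the sum over `ℕ` is the sum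
over `n ≥ 1`.) -/
theorem powerLaw_fourier_lower_bound (α : ℝ) (hα1 : 1 < α) (hα2 : α < 2) :
    ∃ c : ℝ, 0 < c ∧ ∀ p : ℝ, 0 < p → p ≤ Real.pi →
      c * p ^ (α - 1) ≤ ∑' n : ℕ, (1 - Real.cos (n * p)) * (n : ℝ) ^ (-α) := by
  have hπ : (0:ℝ) < π := Real.pi_pos
  refine ⟨(π/2) ^ (3-α) / (3 * π^2), by positivity, ?_⟩
  intro p hp hpπ
  -- nonnegativity of terms
  have hterm : ∀ n : ℕ, 0 ≤ (1 - Real.cos (n * p)) * (n : ℝ) ^ (-α) := by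
    intro n
    have := Real.cos_le_one ((n:ℝ) * p)
    have : (0:ℝ) ≤ 1 - Real.cos (n * p) := by linarith
    positivity
  -- summability
  have hS : Summable (fun n : ℕ => (1 - Real.cos (n * p)) * (n : ℝ) ^ (-α)) := by
    apply Summable.of_nonneg_of_le hterm (fun n => ?_)
      ((Real.summable_nat_rpow.mpr (by linarith : -α < -1)).mul_left 2)
    have h1 : 1 - Real.cos (n * p) ≤ 2 := by
      have := Real.neg_one_le_cos ((n:ℝ) * p); linarith
    have h2 : (0:ℝ) ≤ (n:ℝ) ^ (-α) := Real.rpow_nonneg (Nat.cast_nonneg n) _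
    calc (1 - Real.cos (n * p)) * (n : ℝ) ^ (-α) ≤ 2 * (n:ℝ) ^ (-α) :=
          mul_le_mul_of_nonneg_right h1 h2
      _ = _ := rfl
  set N : ℕ := ⌊π / p⌋₊ with hN
  have hπp1 : (1:ℝ) ≤ π / p := (one_le_div hp).mpr hpπ
  have hN1 : 1 ≤ N := Nat.le_floor (by exact_mod_cast hπp1)
  have hNpos : (0:ℝ) < N := by exact_mod_cast hN1
  -- N ≥ π/(2p)
  have hNlow : π / (2 * p) ≤ (N:ℝ) := by
    rcases le_or_gt (π / p) 2 with h | h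
    · have : π / (2*p) ≤ 1 := by
        rw [div_le_one (by positivity)]
        calc π ≤ 2 * p := by
                have := (div_le_iff₀ hp).mp h; linarith
          _ ≤ 2 * p := le_refl _
      exact this.trans (by exact_mod_cast hN1)
    · have h2 : π / p - 1 ≤ (N:ℝ) := le_of_lt (by
        have := Nat.sub_one_lt_floor (π / p); linarith)
      have : π / (2*p) ≤ π / p - 1 := by
        have : (2:ℝ) ≤ π / p := h.le
        have hd : π / (2*p) = (π / p) / 2 := by ring
        rw [hd]; linarith
      linarith
  -- lower bound each term for 1 ≤ n ≤ N
  have hkey : ∀ n ∈ Finset.Icc 1 N,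
      2 / π^2 * p^2 * (N:ℝ) ^ (-α) * (n:ℝ)^2
        ≤ (1 - Real.cos (n * p)) * (n : ℝ) ^ (-α) := by
    intro n hn
    rw [Finset.mem_Icc] at hn
    have hn1 : (1:ℝ) ≤ (n:ℝ) := by exact_mod_cast hn.1
    have hnN : (n:ℝ) ≤ N := by exact_mod_cast hn.2
    have hnpπ : (n:ℝ) * p ≤ π := by
      have : (n:ℝ) ≤ π / p := hnN.trans (Nat.floor_le (by positivity))
      calc (n:ℝ) * p ≤ (π / p) * p := by
            exact mul_le_mul_of_nonneg_right this hp.le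
        _ = π := by field_simp
    have hnp0 : 0 ≤ (n:ℝ) * p := by positivity
    have hcos : Real.cos ((n:ℝ)*p) ≤ 1 - 2 / π^2 * ((n:ℝ)*p)^2 :=
      Real.cos_le_one_sub_mul_cos_sq (by rw [abs_of_nonneg hnp0]; exact hnpπ)
    have h1 : 2 / π^2 * ((n:ℝ)*p)^2 ≤ 1 - Real.cos ((n:ℝ)*p) := by linarith
    have hmono : (N:ℝ) ^ (-α) ≤ (n:ℝ) ^ (-α) :=
      Real.rpow_le_rpow_of_nonpos (by linarith) hnN (by linarith)
    have hrne : (0:ℝ) ≤ (n:ℝ) ^ (-α) := Real.rpow_nonneg (by linarith) _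
    calc 2 / π^2 * p^2 * (N:ℝ) ^ (-α) * (n:ℝ)^2
        = (2 / π^2 * ((n:ℝ)*p)^2) * (N:ℝ) ^ (-α) := by ring
      _ ≤ (1 - Real.cos ((n:ℝ)*p)) * (N:ℝ) ^ (-α) := by
          apply mul_le_mul_of_nonneg_right h1 (Real.rpow_nonneg hNpos.le _)
      _ ≤ (1 - Real.cos ((n:ℝ)*p)) * (n:ℝ) ^ (-α) := by
          apply mul_le_mul_of_nonneg_left hmono (by linarith [Real.cos_le_one ((n:ℝ)*p)])
  -- chain of inequalities
  have hsum : ∑ n ∈ Finset.Icc 1 N, (1 - Real.cos (n * p)) * (n : ℝ) ^ (-α)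
      ≤ ∑' n : ℕ, (1 - Real.cos (n * p)) * (n : ℝ) ^ (-α) :=
    Summable.sum_le_tsum _ (fun n _ => hterm n) hS
  have hsum2 : 2 / π^2 * p^2 * (N:ℝ) ^ (-α) * ((N:ℝ)^3/6)
      ≤ ∑ n ∈ Finset.Icc 1 N, (1 - Real.cos (n * p)) * (n : ℝ) ^ (-α) := by
    calc 2 / π^2 * p^2 * (N:ℝ) ^ (-α) * ((N:ℝ)^3/6)
        ≤ 2 / π^2 * p^2 * (N:ℝ) ^ (-α) * ∑ n ∈ Finset.Icc 1 N, (n:ℝ)^2 := by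
          apply mul_le_mul_of_nonneg_left (sq_sum_lower N) (by positivity)
      _ = ∑ n ∈ Finset.Icc 1 N, 2 / π^2 * p^2 * (N:ℝ) ^ (-α) * (n:ℝ)^2 := by
          rw [Finset.mul_sum]
      _ ≤ _ := Finset.sum_le_sum hkey
  -- now the algebra on the left side
  have hfin : (π/2) ^ (3-α) / (3 * π^2) * p ^ (α - 1)
      ≤ 2 / π^2 * p^2 * (N:ℝ) ^ (-α) * ((N:ℝ)^3/6) := by
    have hNcube : (N:ℝ) ^ (-α) * (N:ℝ)^3 = (N:ℝ) ^ (3-α) := by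
      rw [← Real.rpow_natCast (N:ℝ) 3, ← Real.rpow_add hNpos]
      norm_num
      congr 1
      ring
    have hNge : (π/(2*p)) ^ (3-α) ≤ (N:ℝ) ^ (3-α) :=
      Real.rpow_le_rpow (by positivity) hNlow (by linarith)
    have hsplit : (π/(2*p)) ^ (3-α) = (π/2) ^ (3-α) * p ^ (α-3) := by
      rw [show π/(2*p) = (π/2) * p⁻¹ by ring, Real.mul_rpow (by positivity) (by positivity),
        Real.inv_rpow hp.le, ← Real.rpow_neg hp.le, show -(3-α) = α-3 by ring]
    have hp2 : p^2 * p ^ (α-3) = p ^ (α-1) := by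
      rw [← Real.rpow_natCast p 2, ← Real.rpow_add hp]
      norm_num
      congr 1
      ring
    calc (π/2) ^ (3-α) / (3 * π^2) * p ^ (α - 1)
        = 2 / π^2 * p^2 * ((π/2) ^ (3-α) * p ^ (α-3)) / 6 := by
          rw [← hp2]; ring
      _ ≤ 2 / π^2 * p^2 * (N:ℝ) ^ (3-α) / 6 := by
          have h0 : (0:ℝ) ≤ 2 / π^2 * p^2 := by positivity
          have := hsplit ▸ hNge
          have := mul_le_mul_of_nonneg_left this h0
          linarith
      _ = 2 / π^2 * p^2 * (N:ℝ) ^ (-α) * ((N:ℝ)^3/6) := by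
          rw [show 2 / π^2 * p^2 * (N:ℝ) ^ (-α) * ((N:ℝ)^3/6)
            = 2 / π^2 * p^2 * ((N:ℝ) ^ (-α) * (N:ℝ)^3) / 6 by ring, hNcube]
  linarith
end

section
/- Let 1 < α < 2. Then the integral ∫_0^π dp / (∑_{n=1}^∞ (1 − cos(n·p))·n^{−α}) is finite, i.e., the function p ↦ (∑_{n=1}^∞ (1 − cos(np)) n^{−α})^{−1} is integrable on (0, π]. -/
open Real MeasureTheory Set

lemma term_nonneg (α p : ℝ) (n : ℕ) : 0 ≤ (1 - Real.cos (n * p)) * (n : ℝ) ^ (-α) :=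
  mul_nonneg (by nlinarith [Real.cos_le_one ((n : ℝ) * p)]) (Real.rpow_nonneg n.cast_nonneg _)

lemma summable_R (α : ℝ) (hα1 : 1 < α) (p : ℝ) :
    Summable (fun n : ℕ => (1 - Real.cos (n * p)) * (n : ℝ) ^ (-α)) := by
  have hs : Summable (fun n : ℕ => 2 * (n : ℝ) ^ (-α)) :=
    (Real.summable_nat_rpow.mpr (by linarith : -α < -1)).mul_left 2
  refine Summable.of_nonneg_of_le (term_nonneg α p) (fun n => ?_) hs
  have h1 := Real.neg_one_le_cos ((n : ℝ) * p)
  have h2 : (0:ℝ) ≤ (n : ℝ) ^ (-α) := Real.rpow_nonneg n.cast_nonneg _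
  nlinarith

lemma continuous_R (α : ℝ) (hα1 : 1 < α) :
    Continuous (fun p : ℝ => ∑' n : ℕ, (1 - Real.cos (n * p)) * (n : ℝ) ^ (-α)) := by
  refine continuous_tsum (fun n => by fun_prop)
    ((Real.summable_nat_rpow.mpr (by linarith : -α < -1)).mul_left 2) (fun n x => ?_)
  have h1 := Real.neg_one_le_cos ((n : ℝ) * x)
  have h2 := Real.cos_le_one ((n : ℝ) * x)
  have h3 : (0:ℝ) ≤ (n : ℝ) ^ (-α) := Real.rpow_nonneg n.cast_nonneg _
  rw [norm_mul, Real.norm_of_nonneg (by linarith), Real.norm_of_nonneg h3]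
  nlinarith

lemma R_lower (α p : ℝ) (hα1 : 1 < α) (hp : 0 < p) (hp4 : p ≤ 1/4) :
    7/384 * p ^ (α - 1) ≤ ∑' n : ℕ, (1 - Real.cos (n * p)) * (n : ℝ) ^ (-α) := by
  set N : ℕ := Nat.floor (1/(2*p)) with hNdef
  have hNle : (N : ℝ) ≤ 1/(2*p) := Nat.floor_le (by positivity)
  have hfloor : 1/(2*p) < (N : ℝ) + 1 := Nat.lt_floor_add_one _
  have h14 : (1:ℝ) ≤ 1/(4*p) := (le_div_iff₀ (by positivity)).mpr (by linarith)
  have heq : 1/(2*p) = 2 * (1/(4*p)) := by field_simp; ring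
  have hNge : 1/(4*p) ≤ (N : ℝ) := by linarith
  have key : ∀ n ∈ Finset.Ioc N (2*N), 7/96 * p ^ α ≤ (1 - Real.cos (n * p)) * (n : ℝ) ^ (-α) := by
    intro n hn
    obtain ⟨h1, h2⟩ := Finset.mem_Ioc.mp hn
    have h1' : (N : ℝ) + 1 ≤ (n : ℝ) := by exact_mod_cast Nat.succ_le_of_lt h1
    have h2' : (n : ℝ) ≤ 2 * N := by exact_mod_cast h2
    have hnp1 : 1/2 < (n : ℝ) * p := by
      have : 1/(2*p) < (n : ℝ) := by linarith
      calc (1:ℝ)/2 = (1/(2*p)) * p := by field_simp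
        _ < (n : ℝ) * p := by exact mul_lt_mul_of_pos_right this hp
    have hnp2 : (n : ℝ) * p ≤ 1 := by
      calc (n : ℝ) * p ≤ (2 * N) * p := mul_le_mul_of_nonneg_right h2' hp.le
        _ ≤ (2 * (1/(2*p))) * p := by nlinarith
        _ = 1 := by field_simp
    have hcos : Real.cos ((n : ℝ) * p) ≤ 89/96 := by
      have hb := Real.cos_bound (x := (n : ℝ) * p) (by rw [abs_of_nonneg (by linarith)]; exact hnp2)
      rw [abs_of_nonneg (by linarith : (0:ℝ) ≤ (n:ℝ)*p)] at hb
      have hb' := (abs_le.mp hb).2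
      have hx4 : ((n:ℝ) * p) ^ 4 ≤ 1 := pow_le_one₀ (by linarith) hnp2
      have hx2 : 1/4 ≤ ((n:ℝ) * p) ^ 2 := by nlinarith
      nlinarith
    have hrpow : p ^ α ≤ (n : ℝ) ^ (-α) := by
      have hn0 : (0:ℝ) < (n : ℝ) := by linarith
      have h1 : (p * n) ^ α ≤ 1 :=
        Real.rpow_le_one (by positivity) (by nlinarith) (by linarith)
      rw [Real.mul_rpow hp.le hn0.le] at h1
      have hn' : (0:ℝ) < (n:ℝ) ^ α := Real.rpow_pos_of_pos hn0 α
      rw [Real.rpow_neg hn0.le, inv_eq_one_div, le_div_iff₀ hn']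
      exact h1
    calc 7/96 * p ^ α ≤ (1 - Real.cos ((n:ℝ) * p)) * ((n : ℝ) ^ (-α)) :=
        mul_le_mul (by linarith) hrpow (Real.rpow_nonneg hp.le α) (by linarith)
      _ = _ := rfl
  have hsum := Finset.card_nsmul_le_sum (Finset.Ioc N (2*N)) _ _ key
  rw [Nat.card_Ioc] at hsum
  have hcard : 2*N - N = N := by omega
  rw [hcard, nsmul_eq_mul] at hsum
  have htsum : ∑ n ∈ Finset.Ioc N (2*N), (1 - Real.cos (n * p)) * (n : ℝ) ^ (-α)
      ≤ ∑' n : ℕ, (1 - Real.cos (n * p)) * (n : ℝ) ^ (-α) :=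
    Summable.sum_le_tsum _ (fun n _ => term_nonneg α p n) (summable_R α hα1 p)
  have hpow : p ^ (α - 1) = p ^ α / p := by
    rw [Real.rpow_sub hp, Real.rpow_one]
  have hpα : (0:ℝ) ≤ p ^ α := Real.rpow_nonneg hp.le α
  have : 7/384 * p ^ (α-1) ≤ (N:ℝ) * (7/96 * p ^ α) := by
    rw [hpow]
    have h4 : 1/(4*p) * (7/96 * p^α) ≤ (N:ℝ) * (7/96 * p^α) :=
      mul_le_mul_of_nonneg_right hNge (by positivity)
    have he : 7/384 * (p^α/p) = 1/(4*p) * (7/96 * p^α) := by field_simp; ring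
    linarith
  linarith

/-- For `1 < α < 2` the function `p ↦ (∑_{n=1}^∞ (1 − cos(np)) n^{−α})⁻¹` is
integrable on `(0, π]`, i.e. `∫_0^π dp / R(p) < ∞`.
(The `n = 0` term of the sum below vanishes, so the sum over `ℕ` is the sum
over `n ≥ 1`.) -/
theorem inverse_R_integrable (α : ℝ) (hα1 : 1 < α) (hα2 : α < 2) :
    MeasureTheory.IntegrableOn
      (fun p : ℝ => (∑' n : ℕ, (1 - Real.cos (n * p)) * (n : ℝ) ^ (-α))⁻¹)
      (Set.Ioc 0 Real.pi) MeasureTheory.volume := by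
  set R : ℝ → ℝ := fun p => ∑' n : ℕ, (1 - Real.cos (n * p)) * (n : ℝ) ^ (-α) with hR
  have hRnonneg : ∀ p, 0 ≤ R p := fun p => tsum_nonneg (term_nonneg α p)
  have hcos14 : Real.cos (1/4) ≤ 97/100 := by
    have hb := (abs_le.mp (Real.cos_bound (x := (1:ℝ)/4) (by rw [abs_of_nonneg]; norm_num; norm_num))).2
    rw [abs_of_nonneg (by norm_num : (0:ℝ) ≤ 1/4)] at hb
    norm_num at hb ⊢
    linarith
  -- dominating function
  set g : ℝ → ℝ := fun p => 384/7 * p ^ (1 - α) + (1 - Real.cos (1/4))⁻¹ with hg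
  have hgint : IntegrableOn g (Set.Ioc 0 Real.pi) volume := by
    apply MeasureTheory.Integrable.add
    · have h1 : IntervalIntegrable (fun x : ℝ => x ^ (1 - α)) volume 0 Real.pi :=
        intervalIntegral.intervalIntegrable_rpow' (by linarith)
      rw [intervalIntegrable_iff_integrableOn_Ioc_of_le Real.pi_nonneg] at h1
      exact h1.const_mul _
    · exact integrableOn_const measure_Ioc_lt_top.ne
  refine MeasureTheory.Integrable.mono' hgint ?_ ?_
  · exact ((continuous_R α hα1).measurable.inv).aestronglyMeasurable
  · rw [MeasureTheory.ae_restrict_iff' measurableSet_Ioc]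
    refine MeasureTheory.ae_of_all _ (fun p hp => ?_)
    obtain ⟨hp0, hpπ⟩ := hp
    have hnorm : ‖(R p)⁻¹‖ = (R p)⁻¹ := Real.norm_of_nonneg (inv_nonneg.mpr (hRnonneg p))
    rw [hnorm]
    rcases le_or_gt p (1/4) with hcase | hcase
    · -- small p
      have hlow := R_lower α p hα1 hp0 hcase
      have hpos : (0:ℝ) < 7/384 * p ^ (α - 1) := by positivity
      have hinv : (R p)⁻¹ ≤ (7/384 * p ^ (α - 1))⁻¹ :=
        inv_anti₀ hpos hlow
      have heq : (7/384 * p ^ (α - 1))⁻¹ = 384/7 * p ^ (1 - α) := by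
        rw [mul_inv, ← Real.rpow_neg hp0.le, neg_sub]
        norm_num
      have hc : (0:ℝ) ≤ (1 - Real.cos (1/4))⁻¹ := by
        apply inv_nonneg.mpr; linarith
      calc (R p)⁻¹ ≤ 384/7 * p ^ (1 - α) := by rw [← heq]; exact hinv
        _ ≤ g p := by simp [hg]; linarith
    · -- p > 1/4
      have hterm : (1 - Real.cos ((1:ℕ) * p)) * ((1:ℕ) : ℝ) ^ (-α) ≤ R p :=
        Summable.le_tsum (summable_R α hα1 p) 1 (fun n _ => term_nonneg α p n)
      have hterm' : 1 - Real.cos p ≤ R p := by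
        simpa using hterm
      have hcosp : Real.cos p ≤ Real.cos (1/4) :=
        Real.cos_le_cos_of_nonneg_of_le_pi (by norm_num) hpπ hcase.le
      have hpos14 : (0:ℝ) < 1 - Real.cos (1/4) := by linarith
      have hRpos : 0 < R p := by linarith
      have hinv : (R p)⁻¹ ≤ (1 - Real.cos (1/4))⁻¹ := by
        apply inv_anti₀ hpos14; linarith
      have hrp : (0:ℝ) ≤ 384/7 * p ^ (1 - α) := by positivity
      calc (R p)⁻¹ ≤ (1 - Real.cos (1/4))⁻¹ := hinv
        _ ≤ g p := by simp [hg]; linarith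
end

section
/- Let 1 < α < 2 and ε > 0, and set R(p) = ∑_{n=1}^∞ (1 − cos(n·p))·n^{−α}. Then lim_{γ → ∞} ∫_0^π dp / (γ·(1 − cos p) + ε·R(p)) = 0 (limit as γ → +∞ along the reals). -/
open Filter MeasureTheory Set

namespace InfraredAux

lemma one_sub_cos_lb {x : ℝ} (h0 : 0 ≤ x) (hπ : x ≤ Real.pi) :
    2 / Real.pi ^ 2 * x ^ 2 ≤ 1 - Real.cos x := by
  have hπ0 : (0:ℝ) < Real.pi := Real.pi_pos
  have hs : 2 / Real.pi * (x/2) ≤ Real.sin (x/2) :=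
    Real.mul_le_sin (by linarith) (by linarith)
  have h1 : 1 - Real.cos x = 2 * Real.sin (x/2)^2 := by
    have h := Real.sin_sq_eq_half_sub (x/2)
    rw [show 2*(x/2) = x by ring] at h; linarith
  have hsin0 : 0 ≤ Real.sin (x/2) :=
    Real.sin_nonneg_of_nonneg_of_le_pi (by linarith) (by linarith)
  have h2 : (2 / Real.pi * (x/2))^2 ≤ Real.sin (x/2)^2 := by
    apply sq_le_sq' _ hs
    have : 0 ≤ 2 / Real.pi * (x/2) := by positivity
    linarith
  have h3 : (2 / Real.pi * (x/2))^2 = x^2 / Real.pi^2 := by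
    field_simp
  rw [h1]
  rw [h3] at h2
  rw [div_mul_eq_mul_div, div_le_iff₀ (by positivity)] at *
  nlinarith

lemma sq_sum_lb (N : ℕ) : (N:ℝ)^3 ≤ 6 * ∑ n ∈ Finset.Icc 1 N, (n:ℝ)^2 := by
  induction N with
  | zero => simp
  | succ N ih =>
    rw [Finset.sum_Icc_succ_top (by omega)]
    push_cast
    push_cast at ih
    have h0 : (0:ℝ) ≤ (N:ℝ) := N.cast_nonneg
    nlinarith

lemma Rsummable (α : ℝ) (hα1 : 1 < α) (p : ℝ) :
    Summable (fun n : ℕ => (1 - Real.cos (n * p)) * (n:ℝ) ^ (-α)) := by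
  have hs : Summable (fun n : ℕ => 2 * (n:ℝ) ^ (-α)) :=
    (Real.summable_nat_rpow.mpr (by linarith)).mul_left 2
  refine Summable.of_nonneg_of_le (fun n => ?_) (fun n => ?_) hs
  · exact mul_nonneg (by nlinarith [Real.cos_le_one ((n:ℝ)*p)])
      (Real.rpow_nonneg n.cast_nonneg _)
  · exact mul_le_mul_of_nonneg_right (by nlinarith [Real.neg_one_le_cos ((n:ℝ)*p)])
      (Real.rpow_nonneg n.cast_nonneg _)

lemma Rterm_nonneg (α p : ℝ) (n : ℕ) : 0 ≤ (1 - Real.cos (n * p)) * (n:ℝ) ^ (-α) :=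
  mul_nonneg (by nlinarith [Real.cos_le_one ((n:ℝ)*p)]) (Real.rpow_nonneg n.cast_nonneg _)

lemma R_lb (α : ℝ) (hα1 : 1 < α) (hα2 : α < 2) {p : ℝ} (hp0 : 0 < p) (hpπ : p ≤ Real.pi) :
    (Real.pi/2) ^ (3-α) / (3 * Real.pi^2) * p ^ (α-1)
      ≤ ∑' n : ℕ, (1 - Real.cos (n * p)) * (n:ℝ) ^ (-α) := by
  have hπ0 : (0:ℝ) < Real.pi := Real.pi_pos
  set N : ℕ := ⌊Real.pi / p⌋₊ with hN
  have hx1 : (1:ℝ) ≤ Real.pi / p := (one_le_div hp0).mpr hpπ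
  have hN1 : 1 ≤ N := Nat.le_floor (by exact_mod_cast hx1)
  have hN1' : (1:ℝ) ≤ (N:ℝ) := by exact_mod_cast hN1
  have hNle : (N:ℝ) ≤ Real.pi / p := Nat.floor_le (by positivity)
  have hN2 : Real.pi / p < 2 * (N:ℝ) := by
    have := Nat.lt_floor_add_one (Real.pi / p)
    rw [← hN] at this
    linarith
  have hNpos : (0:ℝ) < N := by linarith
  -- termwise lower bound on Icc 1 N
  have step1 : ∀ n ∈ Finset.Icc 1 N,
      2 / Real.pi ^ 2 * p ^ 2 * (n:ℝ)^2 * (N:ℝ) ^ (-α)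
        ≤ (1 - Real.cos (n * p)) * (n:ℝ) ^ (-α) := by
    intro n hn
    rw [Finset.mem_Icc] at hn
    have hn1 : (1:ℝ) ≤ (n:ℝ) := by exact_mod_cast hn.1
    have hnN : (n:ℝ) ≤ (N:ℝ) := by exact_mod_cast hn.2
    have hnp : (n:ℝ) * p ≤ Real.pi := by
      have : (n:ℝ) ≤ Real.pi / p := le_trans hnN hNle
      calc (n:ℝ) * p ≤ (Real.pi / p) * p := by nlinarith
        _ = Real.pi := by field_simp
    have hcos : 2 / Real.pi ^ 2 * ((n:ℝ) * p) ^ 2 ≤ 1 - Real.cos ((n:ℝ) * p) :=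
      one_sub_cos_lb (by positivity) hnp
    have hrpow : (N:ℝ) ^ (-α) ≤ (n:ℝ) ^ (-α) :=
      Real.rpow_le_rpow_of_nonpos (by linarith) hnN (by linarith)
    calc 2 / Real.pi ^ 2 * p ^ 2 * (n:ℝ)^2 * (N:ℝ) ^ (-α)
        = (2 / Real.pi ^ 2 * ((n:ℝ) * p) ^ 2) * (N:ℝ) ^ (-α) := by ring
      _ ≤ (1 - Real.cos ((n:ℝ) * p)) * (n:ℝ) ^ (-α) := by
          apply mul_le_mul (by linarith [hcos]) hrpow
            (Real.rpow_nonneg (by positivity) _) (le_trans (by positivity) hcos)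
      _ = (1 - Real.cos (n * p)) * (n:ℝ) ^ (-α) := by norm_num
  have step2 : (Real.pi/2) ^ (3-α) / (3 * Real.pi^2) * p ^ (α-1)
      ≤ ∑ n ∈ Finset.Icc 1 N, 2 / Real.pi ^ 2 * p ^ 2 * (n:ℝ)^2 * (N:ℝ) ^ (-α) := by
    have hsum : ∑ n ∈ Finset.Icc 1 N, 2 / Real.pi ^ 2 * p ^ 2 * (n:ℝ)^2 * (N:ℝ) ^ (-α)
        = 2 / Real.pi ^ 2 * p ^ 2 * (N:ℝ) ^ (-α) * ∑ n ∈ Finset.Icc 1 N, (n:ℝ)^2 := by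
      rw [Finset.mul_sum]; apply Finset.sum_congr rfl; intro n _; ring
    rw [hsum]
    have hss := sq_sum_lb N
    have hNcube : (N:ℝ)^3 * (N:ℝ)^(-α) = (N:ℝ)^((3:ℝ)-α) := by
      rw [show ((3:ℝ)-α) = (3:ℝ) + (-α) by ring, Real.rpow_add hNpos,
        show ((3:ℝ)) = ((3:ℕ):ℝ) by norm_num, Real.rpow_natCast]
    have hkey : (Real.pi/(2*p)) ^ ((3:ℝ)-α) ≤ (N:ℝ)^((3:ℝ)-α) := by
      have hπlt : Real.pi < 2 * (N:ℝ) * p := by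
        rw [div_lt_iff₀ hp0] at hN2; linarith
      apply Real.rpow_le_rpow (by positivity) (by
        rw [div_le_iff₀ (by positivity)]
        linarith) (by linarith)
    have hsplit : (Real.pi/(2*p)) ^ ((3:ℝ)-α)
        = (Real.pi/2) ^ ((3:ℝ)-α) * p ^ (α-(3:ℝ)) := by
      rw [show Real.pi/(2*p) = (Real.pi/2) / p by ring,
        Real.div_rpow (by positivity) hp0.le,
        show (α-(3:ℝ)) = -((3:ℝ)-α) by ring, Real.rpow_neg hp0.le, div_eq_mul_inv]
    have hpow2 : p^2 * p ^ (α-(3:ℝ)) = p ^ (α-1) := by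
      rw [show (p:ℝ)^2 = p^((2:ℕ):ℝ) by rw [Real.rpow_natCast],
        ← Real.rpow_add hp0]
      congr 1
      push_cast
      ring
    have hrn : 0 ≤ (N:ℝ)^(-α) := Real.rpow_nonneg (by positivity) _
    calc (Real.pi/2) ^ (3-α) / (3 * Real.pi^2) * p ^ (α-1)
        = (2 / Real.pi ^ 2 * (p ^ 2 * p ^ (α-(3:ℝ)))) * (Real.pi/2) ^ ((3:ℝ)-α) / 6 := by
          rw [hpow2]; ring
      _ = (2 / Real.pi ^ 2 * p ^ 2) * ((Real.pi/(2*p)) ^ ((3:ℝ)-α)) / 6 := by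
          rw [hsplit]; ring
      _ ≤ (2 / Real.pi ^ 2 * p ^ 2) * ((N:ℝ)^((3:ℝ)-α)) / 6 := by gcongr
      _ = (2 / Real.pi ^ 2 * p ^ 2 * (N:ℝ)^(-α)) * ((N:ℝ)^3) / 6 := by
          rw [← hNcube]; ring
      _ ≤ (2 / Real.pi ^ 2 * p ^ 2 * (N:ℝ)^(-α)) * (6 * ∑ n ∈ Finset.Icc 1 N, (n:ℝ)^2) / 6 := by
          gcongr
      _ = 2 / Real.pi ^ 2 * p ^ 2 * (N:ℝ) ^ (-α) * ∑ n ∈ Finset.Icc 1 N, (n:ℝ)^2 := by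
          ring
  refine le_trans (le_trans step2 (Finset.sum_le_sum step1)) ?_
  exact Summable.sum_le_tsum _ (fun n _ => Rterm_nonneg α p n) (Rsummable α hα1 p)

end InfraredAux

open InfraredAux

/-- For fixed `ε > 0` and `1 < α < 2`, the infrared-bound integral
`∫_0^π dp / (γ(1 − cos p) + ε·R(p))` tends to `0` as the nearest-neighbor
coupling `γ → +∞`, where `R(p) = ∑_{n=1}^∞ (1 − cos(np)) n^{−α}`.
(The `n = 0` term of the sum below vanishes, so the sum over `ℕ` is the sum
over `n ≥ 1`.) -/
theorem infrared_integral_tendsto_zero (α ε : ℝ) (hα1 : 1 < α) (hα2 : α < 2)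
    (hε : 0 < ε) :
    Tendsto
      (fun γ : ℝ => ∫ p in Set.Ioc (0 : ℝ) Real.pi,
        (γ * (1 - Real.cos p) +
          ε * ∑' n : ℕ, (1 - Real.cos (n * p)) * (n : ℝ) ^ (-α))⁻¹)
      atTop (nhds 0) := by
  have hπ0 : (0:ℝ) < Real.pi := Real.pi_pos
  set c : ℝ := (Real.pi/2) ^ (3-α) / (3 * Real.pi^2) with hc
  have hcpos : 0 < c := by positivity
  set R : ℝ → ℝ := fun p => ∑' n : ℕ, (1 - Real.cos (n * p)) * (n:ℝ) ^ (-α) with hRdef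
  have hRcont : Continuous R := by
    apply continuous_tsum (u := fun n : ℕ => 2 * (n:ℝ)^(-α))
    · intro n
      exact (continuous_const.sub (Real.continuous_cos.comp
        (continuous_const.mul continuous_id))).mul continuous_const
    · exact (Real.summable_nat_rpow.mpr (by linarith)).mul_left 2
    · intro n x
      rw [Real.norm_eq_abs, abs_mul, abs_of_nonneg (Real.rpow_nonneg n.cast_nonneg _)]
      apply mul_le_mul_of_nonneg_right _ (Real.rpow_nonneg n.cast_nonneg _)
      rw [abs_le]
      constructor <;> nlinarith [Real.cos_le_one ((n:ℝ)*x), Real.neg_one_le_cos ((n:ℝ)*x)]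
  have hRlb : ∀ p ∈ Set.Ioc (0:ℝ) Real.pi, c * p ^ (α-1) ≤ R p := fun p hp =>
    R_lb α hα1 hα2 hp.1 hp.2
  -- the bound function
  have hbound_int : Integrable (fun p => (ε*c)⁻¹ * p ^ ((1:ℝ)-α))
      (volume.restrict (Set.Ioc 0 Real.pi)) := by
    have h1 := intervalIntegral.intervalIntegrable_rpow' (a := 0) (b := Real.pi)
      (r := 1-α) (by linarith)
    have h2 := (intervalIntegrable_iff_integrableOn_Ioc_of_le hπ0.le).mp h1
    exact h2.const_mul _
  have main := tendsto_integral_filter_of_dominated_convergence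
    (μ := volume.restrict (Set.Ioc (0:ℝ) Real.pi)) (l := atTop)
    (F := fun γ : ℝ => fun p =>
      (γ * (1 - Real.cos p) + ε * R p)⁻¹)
    (f := fun _ => (0:ℝ))
    (fun p => (ε*c)⁻¹ * p ^ ((1:ℝ)-α))
    (by
      apply Eventually.of_forall
      intro γ
      exact (((continuous_const.mul (continuous_const.sub Real.continuous_cos)).add
        (continuous_const.mul hRcont)).measurable.inv).aestronglyMeasurable)
    (by
      filter_upwards [eventually_ge_atTop (0:ℝ)] with γ hγ
      rw [MeasureTheory.ae_restrict_iff' measurableSet_Ioc]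
      apply Eventually.of_forall
      intro p hp
      have hp0 := hp.1
      have hplb : c * p ^ (α-1) ≤ R p := hRlb p hp
      have hppos : 0 < p ^ (α-1) := Real.rpow_pos_of_pos hp0 _
      have hRpos : 0 < R p := lt_of_lt_of_le (by positivity) hplb
      have hcos : 0 ≤ 1 - Real.cos p := by nlinarith [Real.cos_le_one p]
      have hden : ε * (c * p ^ (α-1)) ≤ γ * (1 - Real.cos p) + ε * R p := by
        nlinarith
      have hdpos : 0 < γ * (1 - Real.cos p) + ε * R p :=
        lt_of_lt_of_le (by positivity) hden
      rw [Real.norm_eq_abs, abs_of_nonneg (le_of_lt (inv_pos.mpr hdpos))]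
      have h1 : (γ * (1 - Real.cos p) + ε * R p)⁻¹ ≤ (ε * (c * p ^ (α-1)))⁻¹ :=
        inv_anti₀ (by positivity) hden
      refine le_trans h1 (le_of_eq ?_)
      rw [show ε * (c * p ^ (α-1)) = (ε*c) * p ^ (α-1) by ring, mul_inv,
        ← Real.rpow_neg hp0.le, show -(α-1) = 1-α by ring])
    hbound_int
    (by
      rw [MeasureTheory.ae_restrict_iff' measurableSet_Ioc]
      apply Eventually.of_forall
      intro p hp
      have hp0 := hp.1
      have hcos : 0 < 1 - Real.cos p := by
        have h := Real.cos_lt_cos_of_nonneg_of_le_pi (le_refl 0) hp.2 hp0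
        rw [Real.cos_zero] at h
        linarith
      have hplb : c * p ^ (α-1) ≤ R p := hRlb p hp
      have hRpos : 0 < R p :=
        lt_of_lt_of_le (by positivity) hplb
      have hden : Tendsto (fun γ : ℝ => γ * (1 - Real.cos p) + ε * R p) atTop atTop := by
        apply tendsto_atTop_add_const_right
        exact Tendsto.atTop_mul_const hcos tendsto_id
      exact (tendsto_inv_atTop_zero).comp hden)
  simpa using main
end

section
/- Let α > 1, let m ≥ 1 be an integer, and let 1 ≤ j, k ≤ m be integers. Then ∑_{n ∈ ℤ} |j + k − 1 + 2mn|^{−α} = (1/Γ(α)) · ∫_0^1 (λ^{j+k−2} + λ^{2m−j−k}) · (1 − λ^{2m})^{−1} · (−log λ)^{α−1} dλ. -/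
open MeasureTheory Set Real
open scoped ENNReal NNReal


lemma aux_gamma_int (α : ℝ) (hα : 0 < α) (b : ℝ) (hb : 0 < b) :
    IntegrableOn (fun x : ℝ => x ^ (b - 1) * (-Real.log x) ^ (α - 1)) (Set.Ioo 0 1) ∧
    (∫ x in Set.Ioo (0:ℝ) 1, x ^ (b - 1) * (-Real.log x) ^ (α - 1))
      = Real.Gamma α * b ^ (-α) := by
  set f : ℝ → ℝ := fun x => Real.exp (-(x / b)) with hf
  set C : ℝ := b⁻¹ * (b ^ (α - 1))⁻¹ with hC
  have himg : f '' Set.Ioi 0 = Set.Ioo 0 1 := by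
    ext y
    constructor
    · rintro ⟨x, hx, rfl⟩
      have : (0:ℝ) < x / b := div_pos hx hb
      exact ⟨Real.exp_pos _, Real.exp_lt_one_iff.mpr (by linarith)⟩
    · rintro ⟨hy0, hy1⟩
      refine ⟨-b * Real.log y, ?_, ?_⟩
      · have : Real.log y < 0 := Real.log_neg hy0 hy1
        simp only [Set.mem_Ioi]
        nlinarith
      · have : -((-b * Real.log y) / b) = Real.log y := by field_simp
        rw [hf]; simp only []; rw [this, Real.exp_log hy0]
  have hderiv : ∀ x ∈ Set.Ioi (0:ℝ), HasDerivWithinAt f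
      (-b⁻¹ * Real.exp (-(x / b))) (Set.Ioi 0) x := by
    intro x hx
    have h1 : HasDerivAt (fun x : ℝ => -(x / b)) (-b⁻¹) x := by
      simpa using ((hasDerivAt_id x).div_const b).fun_neg
    have := (Real.hasDerivAt_exp (-(x / b))).comp x h1
    rw [hf]; simpa [mul_comm, Function.comp_def] using this.hasDerivWithinAt
  have hinj : Set.InjOn f (Set.Ioi 0) := by
    intro x _ y _ h
    have := Real.exp_injective h
    field_simp at this
    exact neg_injective this
  have heq : ∀ x ∈ Set.Ioi (0:ℝ),
      |(-b⁻¹ * Real.exp (-(x / b)))| • ((f x) ^ (b - 1) * (-Real.log (f x)) ^ (α - 1))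
        = C * (Real.exp (-x) * x ^ (α - 1)) := by
    intro x hx
    have hx0 : 0 < x := hx
    have habs : |(-b⁻¹ * Real.exp (-(x / b)))| = b⁻¹ * Real.exp (-(x / b)) := by
      rw [abs_mul, abs_neg, abs_of_pos (by positivity), abs_of_pos (Real.exp_pos _)]
    have hlog : Real.log (f x) = -(x / b) := Real.log_exp _
    have hpow : (f x) ^ (b - 1) = Real.exp (-(x / b) * (b - 1)) := by
      rw [Real.rpow_def_of_pos (Real.exp_pos _), hlog]
    have hquot : (x / b) ^ (α - 1) = x ^ (α - 1) / b ^ (α - 1) :=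
      Real.div_rpow hx0.le hb.le _
    rw [smul_eq_mul, habs, hpow, hlog, neg_neg, hquot]
    have hexp : Real.exp (-(x / b)) * Real.exp (-(x / b) * (b - 1)) = Real.exp (-x) := by
      rw [← Real.exp_add]
      congr 1
      field_simp
      ring
    calc b⁻¹ * Real.exp (-(x / b)) * (Real.exp (-(x / b) * (b - 1)) * (x ^ (α - 1) / b ^ (α - 1)))
        = (Real.exp (-(x / b)) * Real.exp (-(x / b) * (b - 1))) * (b⁻¹ * (x ^ (α - 1) / b ^ (α - 1))) := by ring
      _ = C * (Real.exp (-x) * x ^ (α - 1)) := by rw [hexp, hC]; ring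
  have hCb : Real.Gamma α * b ^ (-α) = C * Real.Gamma α := by
    have : b ^ (-α) = C := by
      rw [hC, Real.rpow_neg hb.le]
      have h2 : b ^ α = b ^ (1:ℝ) * b ^ (α - 1) := by
        rw [← Real.rpow_add hb]; norm_num
      rw [h2, Real.rpow_one, mul_inv]
    rw [this]; ring
  constructor
  · rw [← himg, integrableOn_image_iff_integrableOn_abs_deriv_smul measurableSet_Ioi hderiv hinj]
    apply (IntegrableOn.congr_fun _ (fun x hx => (heq x hx).symm) measurableSet_Ioi)
    exact (Real.GammaIntegral_convergent hα).const_mul C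
  · rw [← himg, integral_image_eq_integral_abs_deriv_smul measurableSet_Ioi hderiv hinj,
      setIntegral_congr_fun measurableSet_Ioi heq, integral_const_mul, ← Real.Gamma_eq_integral hα,
      hCb]



/-- Integral representation of the periodized power-law coupling across the
reflection bond: for `α > 1`, `m ≥ 1` and `1 ≤ j, k ≤ m`,
`∑_{n∈ℤ} |j+k−1+2mn|^{−α}
  = Γ(α)⁻¹ ∫_0^1 (λ^{j+k−2} + λ^{2m−j−k})(1−λ^{2m})⁻¹(−log λ)^{α−1} dλ`. -/
theorem periodized_coupling_integral_rep (α : ℝ) (hα : 1 < α)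
    (m j k : ℕ) (hm : 1 ≤ m) (hj1 : 1 ≤ j) (hjm : j ≤ m) (hk1 : 1 ≤ k) (hkm : k ≤ m) :
    (∑' n : ℤ, |(j : ℝ) + (k : ℝ) - 1 + 2 * (m : ℝ) * (n : ℝ)| ^ (-α)) =
      (1 / Real.Gamma α) *
        ∫ l in Set.Ioo (0 : ℝ) 1,
          (l ^ (j + k - 2) + l ^ (2 * m - j - k)) * (1 - l ^ (2 * m))⁻¹ *
            (-Real.log l) ^ (α - 1) := by
  have hα0 : 0 < α := by linarith
  have hΓpos : 0 < Real.Gamma α := Real.Gamma_pos_of_pos hα0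
  have hjR : (1:ℝ) ≤ (j:ℝ) := by exact_mod_cast hj1
  have hkR : (1:ℝ) ≤ (k:ℝ) := by exact_mod_cast hk1
  have hmR : (1:ℝ) ≤ (m:ℝ) := by exact_mod_cast hm
  have hjkR : (j:ℝ) + (k:ℝ) ≤ 2 * (m:ℝ) := by
    have : j + k ≤ 2 * m := by omega
    exact_mod_cast this
  have hc : ((j + k - 2 : ℕ) : ℝ) = (j:ℝ) + k - 2 := by
    have h : (j + k - 2) + 2 = j + k := by omega
    have := congrArg (Nat.cast (R := ℝ)) h
    push_cast at this; linarith
  have hd : ((2 * m - j - k : ℕ) : ℝ) = 2 * (m:ℝ) - j - k := by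
    have h : (2 * m - j - k) + (j + k) = 2 * m := by omega
    have := congrArg (Nat.cast (R := ℝ)) h
    push_cast at this; linarith
  set b1 : ℕ → ℝ := fun p => (j:ℝ) + k - 1 + 2 * m * p with hb1def
  set b2 : ℕ → ℝ := fun p => 2 * (m:ℝ) - j - k + 1 + 2 * m * p with hb2def
  have hcast : ∀ p : ℕ, (0:ℝ) ≤ 2 * (m:ℝ) * (p:ℕ) := fun p => by positivity
  have hb1pos : ∀ p, 0 < b1 p := by
    intro p; simp only [hb1def]; have := hcast p; nlinarith
  have hb2pos : ∀ p, 0 < b2 p := by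
    intro p; simp only [hb2def]; have := hcast p; nlinarith
  have hpemp : ∀ p : ℕ, (p:ℝ) ≤ 2 * (m:ℝ) * p := by
    intro p; have : (0:ℝ) ≤ (p:ℝ) := Nat.cast_nonneg p; nlinarith
  have hb1ge : ∀ p : ℕ, (p:ℝ) + 1 ≤ b1 p := by
    intro p; simp only [hb1def]; have := hpemp p; nlinarith
  have hb2ge : ∀ p : ℕ, (p:ℝ) + 1 ≤ b2 p := by
    intro p; simp only [hb2def]; have := hpemp p; nlinarith
  -- summability
  have hs0 : Summable (fun p : ℕ => ((p:ℝ) + 1) ^ (-α)) := by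
    have h := (Real.summable_nat_rpow (p := -α)).mpr (by linarith)
    have := (_root_.summable_nat_add_iff 1).mpr h
    simpa using this
  have hs1 : Summable (fun p : ℕ => (b1 p) ^ (-α)) := by
    refine Summable.of_nonneg_of_le (fun p => Real.rpow_nonneg (hb1pos p).le _) (fun p => ?_) hs0
    exact Real.rpow_le_rpow_of_nonpos (by positivity) (hb1ge p) (by linarith)
  have hs2 : Summable (fun p : ℕ => (b2 p) ^ (-α)) := by
    refine Summable.of_nonneg_of_le (fun p => Real.rpow_nonneg (hb2pos p).le _) (fun p => ?_) hs0
    exact Real.rpow_le_rpow_of_nonpos (by positivity) (hb2ge p) (by linarith)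
  have hsum : Summable (fun p : ℕ => (b1 p) ^ (-α) + (b2 p) ^ (-α)) := hs1.add hs2
  -- LHS
  have hL : (∑' n : ℤ, |(j : ℝ) + (k : ℝ) - 1 + 2 * (m : ℝ) * (n : ℝ)| ^ (-α))
      = ∑' p : ℕ, ((b1 p) ^ (-α) + (b2 p) ^ (-α)) := by
    have hpos : (fun n : ℕ => |(j : ℝ) + (k : ℝ) - 1 + 2 * (m : ℝ) * ((n : ℤ) : ℝ)| ^ (-α))
        = fun n : ℕ => (b1 n) ^ (-α) := by
      funext n
      have h1 : (j : ℝ) + (k : ℝ) - 1 + 2 * (m : ℝ) * ((n : ℤ) : ℝ) = b1 n := by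
        simp only [hb1def]; push_cast; ring
      rw [h1, abs_of_pos (hb1pos n)]
    have hneg : (fun n : ℕ => |(j : ℝ) + (k : ℝ) - 1 + 2 * (m : ℝ) * (((-(n+1) : ℤ)) : ℝ)| ^ (-α))
        = fun n : ℕ => (b2 n) ^ (-α) := by
      funext n
      have h1 : (j : ℝ) + (k : ℝ) - 1 + 2 * (m : ℝ) * (((-(n+1) : ℤ)) : ℝ) = -(b2 n) := by
        simp only [hb2def]; push_cast; ring
      rw [h1, abs_neg, abs_of_pos (hb2pos n)]
    rw [tsum_of_nat_of_neg_add_one (by rw [hpos]; exact hs1) (by rw [hneg]; exact hs2),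
      hpos, hneg, ← Summable.tsum_add hs1 hs2]
  -- the summands
  set g : ℕ → ℝ → ℝ := fun p l =>
    (l ^ (j + k - 2 + 2 * m * p) + l ^ (2 * m - j - k + 2 * m * p)) * (-Real.log l) ^ (α - 1)
    with hgdef
  have he1 : ∀ p : ℕ, ((j + k - 2 + 2 * m * p : ℕ) : ℝ) = b1 p - 1 := by
    intro p
    have : ((j + k - 2 + 2 * m * p : ℕ) : ℝ) = ((j + k - 2 : ℕ) : ℝ) + 2 * m * p := by
      push_cast; ring
    rw [this, hc]; simp only [hb1def]; ring
  have he2 : ∀ p : ℕ, ((2 * m - j - k + 2 * m * p : ℕ) : ℝ) = b2 p - 1 := by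
    intro p
    have : ((2 * m - j - k + 2 * m * p : ℕ) : ℝ) = ((2 * m - j - k : ℕ) : ℝ) + 2 * m * p := by
      push_cast; ring
    rw [this, hd]; simp only [hb2def]; ring
  have heqon : ∀ p : ℕ, Set.EqOn
      (fun l : ℝ => l ^ (b1 p - 1) * (-Real.log l) ^ (α - 1)
        + l ^ (b2 p - 1) * (-Real.log l) ^ (α - 1)) (g p) (Set.Ioo 0 1) := by
    intro p l hl
    simp only [hgdef]
    rw [← he1 p, ← he2 p, Real.rpow_natCast, Real.rpow_natCast]
    ring
  have hInt : ∀ p, IntegrableOn (g p) (Set.Ioo 0 1) := by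
    intro p
    exact MeasureTheory.IntegrableOn.congr_fun
      ((aux_gamma_int α hα0 (b1 p) (hb1pos p)).1.add
        (aux_gamma_int α hα0 (b2 p) (hb2pos p)).1) (heqon p) measurableSet_Ioo
  have hval : ∀ p, (∫ l in Set.Ioo (0:ℝ) 1, g p l)
      = Real.Gamma α * ((b1 p) ^ (-α) + (b2 p) ^ (-α)) := by
    intro p
    rw [← setIntegral_congr_fun measurableSet_Ioo (heqon p),
      integral_add (aux_gamma_int α hα0 (b1 p) (hb1pos p)).1
        (aux_gamma_int α hα0 (b2 p) (hb2pos p)).1,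
      (aux_gamma_int α hα0 (b1 p) (hb1pos p)).2,
      (aux_gamma_int α hα0 (b2 p) (hb2pos p)).2]
    ring
  have hgmeas : ∀ p, AEStronglyMeasurable (g p) (volume.restrict (Set.Ioo 0 1)) := by
    intro p
    apply ContinuousOn.aestronglyMeasurable _ measurableSet_Ioo
    apply continuousOn_of_forall_continuousAt
    intro l hl
    have h0 : (0:ℝ) < l := hl.1
    have hlogc : ContinuousAt (fun x : ℝ => (-Real.log x) ^ (α - 1)) l := by
      have h1 : ContinuousAt (fun x : ℝ => -Real.log x) l :=
        (Real.continuousAt_log h0.ne').neg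
      exact h1.rpow_const (Or.inr (by linarith))
    simp only [hgdef]
    exact (((continuousAt_pow _ _).add (continuousAt_pow _ _)).mul hlogc)
  have hnn : ∀ p, 0 ≤ᵐ[volume.restrict (Set.Ioo (0:ℝ) 1)] g p := by
    intro p
    filter_upwards [ae_restrict_mem measurableSet_Ioo] with l hl
    have h0 : 0 < l := hl.1
    have hlog : 0 ≤ -Real.log l := by
      have := Real.log_neg h0 hl.2; linarith
    exact mul_nonneg (by positivity) (Real.rpow_nonneg hlog _)
  have hlint : (∑' (p : ℕ), ∫⁻ l in Set.Ioo (0:ℝ) 1, (‖g p l‖₊ : ℝ≥0∞)) ≠ ⊤ := by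
    have hre : ∀ p : ℕ, (∫⁻ l in Set.Ioo (0:ℝ) 1, (‖g p l‖₊ : ℝ≥0∞))
        = ENNReal.ofReal (Real.Gamma α * ((b1 p) ^ (-α) + (b2 p) ^ (-α))) := by
      intro p
      rw [← hval p, ofReal_integral_eq_lintegral_ofReal (hInt p) (hnn p)]
      apply lintegral_congr_ae
      filter_upwards [hnn p] with l hl
      rw [← enorm_eq_nnnorm, Real.enorm_eq_ofReal hl]
    simp_rw [hre]
    rw [← ENNReal.ofReal_tsum_of_nonneg
      (fun p => by
        have := Real.rpow_nonneg (hb1pos p).le (-α)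
        have := Real.rpow_nonneg (hb2pos p).le (-α)
        positivity)
      (hsum.mul_left _)]
    exact ENNReal.ofReal_ne_top
  have hptwise : Set.EqOn
      (fun l : ℝ => (l ^ (j + k - 2) + l ^ (2 * m - j - k)) * (1 - l ^ (2 * m))⁻¹ *
        (-Real.log l) ^ (α - 1)) (fun l => ∑' p, g p l) (Set.Ioo 0 1) := by
    intro l hl
    have h0 : 0 < l := hl.1
    have hgeo : ∑' p : ℕ, (l ^ (2 * m)) ^ p = (1 - l ^ (2 * m))⁻¹ :=
      tsum_geometric_of_lt_one (by positivity) (pow_lt_one₀ h0.le hl.2 (by omega))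
    have hfe : ∀ p, g p l = ((l ^ (j + k - 2) + l ^ (2 * m - j - k)) *
        (-Real.log l) ^ (α - 1)) * (l ^ (2 * m)) ^ p := by
      intro p
      simp only [hgdef]
      rw [pow_add, pow_add, ← pow_mul]
      ring
    show (l ^ (j + k - 2) + l ^ (2 * m - j - k)) * (1 - l ^ (2 * m))⁻¹ *
        (-Real.log l) ^ (α - 1) = ∑' p, g p l
    calc (l ^ (j + k - 2) + l ^ (2 * m - j - k)) * (1 - l ^ (2 * m))⁻¹ *
          (-Real.log l) ^ (α - 1)
        = ((l ^ (j + k - 2) + l ^ (2 * m - j - k)) * (-Real.log l) ^ (α - 1)) *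
          ((1 - l ^ (2 * m))⁻¹) := by ring
      _ = ((l ^ (j + k - 2) + l ^ (2 * m - j - k)) * (-Real.log l) ^ (α - 1)) *
          ∑' p : ℕ, (l ^ (2 * m)) ^ p := by rw [hgeo]
      _ = ∑' p : ℕ, ((l ^ (j + k - 2) + l ^ (2 * m - j - k)) * (-Real.log l) ^ (α - 1)) *
          (l ^ (2 * m)) ^ p := tsum_mul_left.symm
      _ = ∑' p, g p l := tsum_congr fun p => (hfe p).symm
  have hRint : (∫ l in Set.Ioo (0 : ℝ) 1,
      (l ^ (j + k - 2) + l ^ (2 * m - j - k)) * (1 - l ^ (2 * m))⁻¹ *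
        (-Real.log l) ^ (α - 1))
      = ∑' p : ℕ, Real.Gamma α * ((b1 p) ^ (-α) + (b2 p) ^ (-α)) := by
    rw [setIntegral_congr_fun measurableSet_Ioo hptwise, integral_tsum hgmeas hlint]
    exact tsum_congr hval
  rw [hL, hRint, tsum_mul_left, one_div, inv_mul_cancel_left₀ hΓpos.ne']
end

section
/- Fix 1 < α < 2 and γ ≥ ε > 0. For an integer m ≥ 1 let Λ = {1−m, …, m} ⊆ ℤ (a periodic lattice of 2m sites, indices taken mod 2m). For j, k ∈ Λ set J_{j,k} = ∑_{n∈ℤ} |j − k + 2mn|^{−α} if j ≢ k (mod 2m) and J_{j,j} = 0; set N_{j,k} = 1 if j − k ≡ ±1 (mod 2m) and 0 otherwise; and set K_{j,k} = (γ−ε)·N_{j,k} + ε·J_{j,k}. For h : Λ → ℝ define Z(h) = ∑_{σ ∈ {−1,1}^Λ} exp(−(1/2)·∑_{j,k∈Λ} K_{j,k}·(σ_j − σ_k − h_j + h_k)²). Let r : Λ → Λ be the reflection r(j) = 1 − j (which maps Λ bijectively to itself). Given h : Λ → ℝ, define h⁺ : Λ → ℝ by h⁺(j) = h(j) for 1 ≤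 j ≤ m and h⁺(j) = h(1−j) for 1−m ≤ j ≤ 0, and define h⁻ : Λ → ℝ by h⁻(j) = h(j) for 1−m ≤ j ≤ 0 and h⁻(j) = h(1−j) for 1 ≤ j ≤ m. Then for every h : Λ → ℝ: Z(h)² ≤ Z(h⁺)·Z(h⁻). -/
/-- The periodic lattice `Λ = {1−m, …, m}` of `2m` sites, as a type. -/
abbrev Site (m : ℕ) : Type := Finset.Icc (1 - (m : ℤ)) (m : ℤ)

/-- Ising spin configurations `{−1,1}^Λ`. -/
abbrev Spin (m : ℕ) : Type := Site m → ({-1, 1} : Finset ℝ)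

/-- Periodized power-law coupling `J_{j,k} = ∑_{n∈ℤ} |j−k+2mn|^{−α}` for
`j ≢ k (mod 2m)`, and `0` for `j ≡ k (mod 2m)`. -/
noncomputable def Jc (α : ℝ) (m : ℕ) (j k : ℤ) : ℝ :=
  if (2 * (m : ℤ)) ∣ (j - k) then 0
  else ∑' n : ℤ, |(j : ℝ) - (k : ℝ) + 2 * (m : ℝ) * (n : ℝ)| ^ (-α)

/-- Periodic nearest-neighbor indicator: `1` if `j − k ≡ ±1 (mod 2m)`. -/
noncomputable def Nc (m : ℕ) (j k : ℤ) : ℝ :=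
  if (2 * (m : ℤ)) ∣ (j - k - 1) ∨ (2 * (m : ℤ)) ∣ (j - k + 1) then 1 else 0

/-- Total coupling `K_{j,k} = (γ−ε)·N_{j,k} + ε·J_{j,k}`. -/
noncomputable def Kc (α γ ε : ℝ) (m : ℕ) (j k : ℤ) : ℝ :=
  (γ - ε) * Nc m j k + ε * Jc α m j k

/-- The Gaussian-domination partition function
`Z(h) = ∑_{σ∈{−1,1}^Λ} exp(−(1/2)∑_{j,k∈Λ} K_{j,k}(σ_j − σ_k − h_j + h_k)²)`.
Only the values of `h` on `Λ` are used. -/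
noncomputable def Zf (α γ ε : ℝ) (m : ℕ) (h : ℤ → ℝ) : ℝ :=
  ∑ σ : Spin m, Real.exp (-(1 / 2) * ∑ j : Site m, ∑ k : Site m,
    Kc α γ ε m (j : ℤ) (k : ℤ) *
      ((σ j : ℝ) - (σ k : ℝ) - h (j : ℤ) + h (k : ℤ)) ^ 2)

open Finset Nat MeasureTheory


/-- PSD of the kernel `(a j + a k) ^ (-α)` for positive `a` on a finite index set. -/
lemma power_kernel_psd {α : ℝ} (hα : 0 < α) (s : Finset ℤ) {a : ℤ → ℝ}
    (ha : ∀ i ∈ s, 0 < a i) (w : ℤ → ℝ) :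
    0 ≤ ∑ j ∈ s, ∑ k ∈ s, w j * w k * (a j + a k) ^ (-α) := by
  have hint : ∀ r : ℝ, 0 < r → IntegrableOn
      (fun t : ℝ => t ^ (α - 1) * Real.exp (-(r * t))) (Set.Ioi 0) := by
    intro r hr
    have := integrableOn_rpow_mul_exp_neg_mul_rpow (p := 1) (s := α - 1) (b := r)
      (by linarith) one_pos hr
    refine this.congr_fun (fun t ht => by beta_reduce; rw [Real.rpow_one]; ring_nf) measurableSet_Ioi
  have key : ∀ j ∈ s, ∀ k ∈ s, w j * w k * (a j + a k) ^ (-α)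
      = (Real.Gamma α)⁻¹ * ∫ t in Set.Ioi (0:ℝ),
          (w j * w k) * (t ^ (α - 1) * Real.exp (-((a j + a k) * t))) := by
    intro j hj k hk
    have hr : 0 < a j + a k := add_pos (ha j hj) (ha k hk)
    rw [MeasureTheory.integral_const_mul,
      Real.integral_rpow_mul_exp_neg_mul_Ioi hα hr]
    rw [one_div, Real.inv_rpow hr.le, ← Real.rpow_neg hr.le]
    have hG : Real.Gamma α ≠ 0 := (Real.Gamma_pos_of_pos hα).ne'
    field_simp
  rw [← Finset.sum_product']
  calc (0:ℝ) ≤ (Real.Gamma α)⁻¹ * ∫ t in Set.Ioi (0:ℝ),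
      ∑ p ∈ s ×ˢ s, (w p.1 * w p.2) * (t ^ (α - 1) * Real.exp (-((a p.1 + a p.2) * t))) := by
        apply mul_nonneg (by positivity)
        apply MeasureTheory.setIntegral_nonneg measurableSet_Ioi
        intro t ht
        have hexp : ∀ p ∈ s ×ˢ s, (w p.1 * w p.2) *
            (t ^ (α - 1) * Real.exp (-((a p.1 + a p.2) * t)))
            = t ^ (α - 1) * ((w p.1 * Real.exp (-(a p.1 * t))) *
              (w p.2 * Real.exp (-(a p.2 * t)))) := by
          intro p _
          rw [show -((a p.1 + a p.2) * t) = -(a p.1 * t) + -(a p.2 * t) by ring, Real.exp_add]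
          ring
        rw [Finset.sum_congr rfl hexp, ← Finset.mul_sum, Finset.sum_product]
        dsimp only
        rw [← Finset.sum_mul_sum]
        have h1 : (0:ℝ) ≤ t ^ (α - 1) := Real.rpow_nonneg (le_of_lt ht) _
        have h2 : (0:ℝ) ≤ (∑ i ∈ s, w i * Real.exp (-(a i * t))) *
            ∑ j ∈ s, w j * Real.exp (-(a j * t)) := mul_self_nonneg _
        exact mul_nonneg h1 h2
    _ = ∑ p ∈ s ×ˢ s, w p.1 * w p.2 * (a p.1 + a p.2) ^ (-α) := by
        rw [MeasureTheory.integral_finset_sum]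
        · rw [Finset.mul_sum]
          refine Finset.sum_congr rfl (fun p hp => ?_)
          obtain ⟨h1, h2⟩ := Finset.mem_product.mp hp
          exact (key p.1 h1 p.2 h2).symm
        · intro p hp
          obtain ⟨h1, h2⟩ := Finset.mem_product.mp hp
          exact ((hint _ (add_pos (ha _ h1) (ha _ h2))).const_mul _)

lemma dvd_small {M d : ℤ} (hM : 0 < M) (h1 : 0 ≤ d) (h2 : d < M) (hd : M ∣ d) : d = 0 := by
  obtain ⟨c, rfl⟩ := hd
  rcases lt_trichotomy c 0 with hc | hc | hc
  · nlinarith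
  · simp [hc]
  · nlinarith

lemma summable_shift {α : ℝ} (hα : 1 < α) {c M : ℝ} (hc : 1 ≤ c) (hM : 1 ≤ M) :
    Summable (fun n : ℕ => (c + M * n) ^ (-α)) := by
  have base : Summable (fun n : ℕ => ((n : ℝ) + 1) ^ (-α)) := by
    have := (Real.summable_nat_rpow (p := -α)).2 (by linarith)
    have h2 := (summable_nat_add_iff (f := fun n : ℕ => (n : ℝ) ^ (-α)) 1).2 this
    refine h2.congr (fun n => ?_)
    push_cast
    ring_nf
  refine Summable.of_nonneg_of_le (fun n => Real.rpow_nonneg (by positivity) _)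
    (fun n => ?_) base
  have h1 : (0:ℝ) < (n : ℝ) + 1 := by positivity
  have h2 : (n : ℝ) + 1 ≤ c + M * n := by nlinarith [Nat.cast_nonneg (α := ℝ) n]
  exact Real.rpow_le_rpow_of_nonpos h1 h2 (by linarith)

lemma cross_psd {α γ ε : ℝ} (hα1 : 1 < α) (hε : 0 < ε) (hγε : ε ≤ γ) {m : ℕ} (hm : 1 ≤ m)
    (w : ℤ → ℝ) :
    0 ≤ ∑ j ∈ Icc (1:ℤ) (m:ℤ), ∑ k ∈ Icc (1:ℤ) (m:ℤ), w j * w k * Kc α γ ε m j (1 - k) := by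
  have hm' : (1:ℤ) ≤ (m:ℤ) := by exact_mod_cast hm
  have hα0 : (0:ℝ) < α := by linarith
  -- the J-part expansion
  set A1 : ℕ → ℤ → ℝ := fun n t => (t:ℝ) - 1/2 + (m:ℝ) * n with hA1
  set A2 : ℕ → ℤ → ℝ := fun n t => (m:ℝ) - (t:ℝ) + 1/2 + (m:ℝ) * n with hA2
  have hJ : ∀ j ∈ Icc (1:ℤ) (m:ℤ), ∀ k ∈ Icc (1:ℤ) (m:ℤ),
      w j * w k * Jc α m j (1 - k)
      = (∑' n : ℕ, w j * w k * (A1 n j + A1 n k) ^ (-α))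
      + (∑' n : ℕ, w j * w k * (A2 n j + A2 n k) ^ (-α)) := by
    intro j hj k hk
    obtain ⟨hj1, hj2⟩ := mem_Icc.mp hj
    obtain ⟨hk1, hk2⟩ := mem_Icc.mp hk
    have hjk1 : (1:ℝ) ≤ (j:ℝ) + (k:ℝ) - 1 := by
      have : (1:ℝ) ≤ (j:ℝ) := by exact_mod_cast hj1
      have : (1:ℝ) ≤ (k:ℝ) := by exact_mod_cast hk1
      linarith [show (1:ℝ) ≤ (j:ℝ) from by exact_mod_cast hj1]
    have hjk2 : (j:ℝ) + (k:ℝ) - 1 ≤ 2*(m:ℝ) - 1 := by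
      have h1 : (j:ℝ) ≤ (m:ℝ) := by exact_mod_cast hj2
      have h2 : (k:ℝ) ≤ (m:ℝ) := by exact_mod_cast hk2
      linarith
    have hnd : ¬ (2*(m:ℤ)) ∣ (j - (1 - k)) := by
      intro hd
      have h0 : j - (1-k) - 0 = j + k - 1 := by ring
      have := dvd_small (M := 2*(m:ℤ)) (d := j - (1-k)) (by omega) (by omega) (by omega) hd
      omega
    rw [Jc, if_neg hnd]
    set f : ℤ → ℝ := fun n => |(j : ℝ) - ((1 - k : ℤ) : ℝ) + 2 * (m : ℝ) * (n : ℝ)| ^ (-α) with hf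
    have e1 : ∀ n : ℕ, f (n : ℤ) = (A1 n j + A1 n k) ^ (-α) := by
      intro n
      rw [hf]; dsimp only
      have harg : (j : ℝ) - ((1 - k : ℤ) : ℝ) + 2 * (m : ℝ) * (((n:ℤ)) : ℝ)
          = A1 n j + A1 n k := by rw [hA1]; push_cast; ring
      rw [harg, abs_of_pos]
      have : (0:ℝ) ≤ (m:ℝ) * n := by positivity
      rw [hA1]; dsimp only
      nlinarith [show (1:ℝ) ≤ (j:ℝ) from by exact_mod_cast hj1,
        show (1:ℝ) ≤ (k:ℝ) from by exact_mod_cast hk1]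
    have e2 : ∀ n : ℕ, f (-((n : ℤ) + 1)) = (A2 n j + A2 n k) ^ (-α) := by
      intro n
      rw [hf]; dsimp only
      have hmn : (0:ℝ) ≤ (m:ℝ) * n := by positivity
      have hm1 : (1:ℝ) ≤ (m:ℝ) := by exact_mod_cast hm
      have harg : (j : ℝ) - ((1 - k : ℤ) : ℝ) + 2 * (m : ℝ) * (((-((n:ℤ) + 1)) : ℤ) : ℝ)
          = -(A2 n j + A2 n k) := by rw [hA2]; push_cast; ring
      rw [harg, abs_neg, abs_of_pos]
      rw [hA2]; dsimp only
      nlinarith [show (j:ℝ) ≤ (m:ℝ) from by exact_mod_cast hj2,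
        show (k:ℝ) ≤ (m:ℝ) from by exact_mod_cast hk2]
    have hs1 : Summable (fun n : ℕ => f (n : ℤ)) := by
      refine ((summable_shift hα1 (c := (j:ℝ) + k - 1) (M := 2*(m:ℝ)) hjk1
        (by linarith [show (1:ℝ) ≤ (m:ℝ) from by exact_mod_cast hm])).congr
        (fun n => ?_)).congr (fun n => (e1 n).symm)
      congr 1
      rw [hA1]; dsimp only; ring
    have hs2 : Summable (fun n : ℕ => f (-((n:ℤ) + 1))) := by
      refine ((summable_shift hα1 (c := 2*(m:ℝ) - ((j:ℝ) + k - 1)) (M := 2*(m:ℝ))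
        (by linarith) (by linarith [show (1:ℝ) ≤ (m:ℝ) from by exact_mod_cast hm])).congr
        (fun n => ?_)).congr (fun n => (e2 n).symm)
      congr 1
      rw [hA2]; dsimp only; ring
    rw [tsum_of_nat_of_neg_add_one hs1 hs2]
    rw [tsum_congr e1, tsum_congr e2, mul_add, ← tsum_mul_left, ← tsum_mul_left]
  -- split the Kc sum
  have hsplit : ∀ j ∈ Icc (1:ℤ) (m:ℤ), ∀ k ∈ Icc (1:ℤ) (m:ℤ),
      w j * w k * Kc α γ ε m j (1 - k)
      = (γ - ε) * (w j * w k * Nc m j (1 - k))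
        + ε * ((∑' n : ℕ, w j * w k * (A1 n j + A1 n k) ^ (-α))
          + (∑' n : ℕ, w j * w k * (A2 n j + A2 n k) ^ (-α))) := by
    intro j hj k hk
    rw [← hJ j hj k hk, Kc]
    ring
  rw [Finset.sum_congr rfl (fun j hj => Finset.sum_congr rfl (fun k hk => hsplit j hj k hk))]
  simp only [mul_add, Finset.sum_add_distrib, ← Finset.mul_sum]
  have hN : 0 ≤ ∑ j ∈ Icc (1:ℤ) (m:ℤ), ∑ k ∈ Icc (1:ℤ) (m:ℤ), w j * w k * Nc m j (1 - k) := by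
    refine Finset.sum_nonneg (fun j hj => Finset.sum_nonneg (fun k hk => ?_))
    obtain ⟨hj1, hj2⟩ := mem_Icc.mp hj
    obtain ⟨hk1, hk2⟩ := mem_Icc.mp hk
    by_cases hc : (2*(m:ℤ)) ∣ (j - (1-k) - 1) ∨ (2*(m:ℤ)) ∣ (j - (1-k) + 1)
    · have hjk : j = k := by
        rcases hc with hc | hc
        · have := dvd_small (M := 2*(m:ℤ)) (d := j - (1-k) - 1) (by omega) (by omega)
            (by omega) hc
          omega
        · have h2 : (2*(m:ℤ)) ∣ (2*(m:ℤ) - (j - (1-k) + 1)) := dvd_sub (dvd_refl _) hc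
          have := dvd_small (M := 2*(m:ℤ)) (d := 2*(m:ℤ) - (j - (1-k) + 1)) (by omega)
            (by omega) (by omega) h2
          omega
      rw [Nc, if_pos hc, hjk]
      nlinarith [mul_self_nonneg (w k)]
    · rw [Nc, if_neg hc]
      simp
  have hT : ∀ (A : ℕ → ℤ → ℝ), (∀ n : ℕ, ∀ i ∈ Icc (1:ℤ) (m:ℤ), 0 < A n i) →
      (∀ j ∈ Icc (1:ℤ) (m:ℤ), ∀ k ∈ Icc (1:ℤ) (m:ℤ),
        Summable (fun n : ℕ => w j * w k * (A n j + A n k) ^ (-α))) →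
      0 ≤ ∑ j ∈ Icc (1:ℤ) (m:ℤ), ∑ k ∈ Icc (1:ℤ) (m:ℤ),
        ∑' n : ℕ, w j * w k * (A n j + A n k) ^ (-α) := by
    intro A hpos hsum
    have step1 : ∀ j ∈ Icc (1:ℤ) (m:ℤ),
        ∑ k ∈ Icc (1:ℤ) (m:ℤ), ∑' n : ℕ, w j * w k * (A n j + A n k) ^ (-α)
        = ∑' n : ℕ, ∑ k ∈ Icc (1:ℤ) (m:ℤ), w j * w k * (A n j + A n k) ^ (-α) := by
      intro j hj
      exact (Summable.tsum_finsetSum (fun k hk => hsum j hj k hk)).symm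
    rw [Finset.sum_congr rfl step1,
      ← Summable.tsum_finsetSum (fun j hj => summable_sum (fun k hk => hsum j hj k hk))]
    refine tsum_nonneg (fun n => ?_)
    exact power_kernel_psd hα0 _ (fun i hi => hpos n i hi) w
  have hsA1 : ∀ j ∈ Icc (1:ℤ) (m:ℤ), ∀ k ∈ Icc (1:ℤ) (m:ℤ),
      Summable (fun n : ℕ => w j * w k * (A1 n j + A1 n k) ^ (-α)) := by
    intro j hj k hk
    obtain ⟨hj1, hj2⟩ := mem_Icc.mp hj
    obtain ⟨hk1, hk2⟩ := mem_Icc.mp hk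
    have hjk1 : (1:ℝ) ≤ (j:ℝ) + (k:ℝ) - 1 := by
      have a1 : (1:ℝ) ≤ (j:ℝ) := by exact_mod_cast hj1
      have a2 : (1:ℝ) ≤ (k:ℝ) := by exact_mod_cast hk1
      linarith
    refine Summable.mul_left _ ?_
    refine (summable_shift hα1 (c := (j:ℝ) + k - 1) (M := 2*(m:ℝ)) hjk1
      (by linarith [show (1:ℝ) ≤ (m:ℝ) from by exact_mod_cast hm])).congr (fun n => ?_)
    congr 1
    rw [hA1]; dsimp only; ring
  have hsA2 : ∀ j ∈ Icc (1:ℤ) (m:ℤ), ∀ k ∈ Icc (1:ℤ) (m:ℤ),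
      Summable (fun n : ℕ => w j * w k * (A2 n j + A2 n k) ^ (-α)) := by
    intro j hj k hk
    obtain ⟨hj1, hj2⟩ := mem_Icc.mp hj
    obtain ⟨hk1, hk2⟩ := mem_Icc.mp hk
    have hjk2 : (1:ℝ) ≤ 2*(m:ℝ) - ((j:ℝ) + (k:ℝ) - 1) := by
      have a1 : (j:ℝ) ≤ (m:ℝ) := by exact_mod_cast hj2
      have a2 : (k:ℝ) ≤ (m:ℝ) := by exact_mod_cast hk2
      linarith
    refine Summable.mul_left _ ?_
    refine (summable_shift hα1 (c := 2*(m:ℝ) - ((j:ℝ) + (k:ℝ) - 1)) (M := 2*(m:ℝ)) hjk2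
      (by linarith [show (1:ℝ) ≤ (m:ℝ) from by exact_mod_cast hm])).congr (fun n => ?_)
    congr 1
    rw [hA2]; dsimp only; ring
  have hp1 : ∀ n : ℕ, ∀ i ∈ Icc (1:ℤ) (m:ℤ), 0 < A1 n i := by
    intro n i hi
    obtain ⟨h1, _⟩ := mem_Icc.mp hi
    have a1 : (1:ℝ) ≤ (i:ℝ) := by exact_mod_cast h1
    have a2 : (0:ℝ) ≤ (m:ℝ)*n := by positivity
    rw [hA1]; dsimp only; linarith
  have hp2 : ∀ n : ℕ, ∀ i ∈ Icc (1:ℤ) (m:ℤ), 0 < A2 n i := by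
    intro n i hi
    obtain ⟨_, h2⟩ := mem_Icc.mp hi
    have a1 : (i:ℝ) ≤ (m:ℝ) := by exact_mod_cast h2
    have a2 : (0:ℝ) ≤ (m:ℝ)*n := by positivity
    rw [hA2]; dsimp only; linarith
  have t1 := hT A1 hp1 hsA1
  have t2 := hT A2 hp2 hsA2
  have hge : (0:ℝ) ≤ γ - ε := by linarith
  have c1 := mul_nonneg hge hN
  have c2 := mul_nonneg hε.le t1
  have c3 := mul_nonneg hε.le t2
  linarith

lemma exp_dot_kernel_psd {T ι : Type*} [Fintype T] [Fintype ι] (g : T → ℝ) (Φ : T → ι → ℝ) :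
    0 ≤ ∑ s : T, ∑ t : T, g s * g t * Real.exp (∑ i, Φ s i * Φ t i) := by
  classical
  set d : T → T → ℝ := fun s t => ∑ i, Φ s i * Φ t i with hd
  have hexp : ∀ s t : T, g s * g t * Real.exp (d s t)
      = ∑' n : ℕ, g s * g t * (d s t ^ n / n !) := by
    intro s t
    rw [Real.exp_eq_exp_ℝ, NormedSpace.exp_eq_tsum_div, ← tsum_mul_left]
  rw [← Finset.sum_product']
  have hrw : ∀ p ∈ (univ ×ˢ univ : Finset (T × T)),
      g p.1 * g p.2 * Real.exp (d p.1 p.2) = ∑' n : ℕ, g p.1 * g p.2 * (d p.1 p.2 ^ n / n !) :=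
    fun p _ => hexp p.1 p.2
  rw [Finset.sum_congr rfl hrw]
  have hswap := Summable.tsum_finsetSum (f := fun (p : T × T) (n : ℕ) => g p.1 * g p.2 * (d p.1 p.2 ^ n / n !))
    (s := (univ ×ˢ univ : Finset (T × T))) (fun p _ =>
    (Real.summable_pow_div_factorial (d p.1 p.2)).mul_left (g p.1 * g p.2))
  rw [← hswap]
  refine tsum_nonneg (fun n => ?_)
  have key : ∀ p : T × T, g p.1 * g p.2 * (d p.1 p.2 ^ n / n !)
      = ∑ v : Fin n → ι,
        ((g p.1 * ∏ l, Φ p.1 (v l)) * (g p.2 * ∏ l, Φ p.2 (v l))) / (n ! : ℝ) := by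
    intro p
    rw [hd]; dsimp only
    rw [Fintype.sum_pow (fun i => Φ p.1 i * Φ p.2 i) n, Finset.sum_div, Finset.mul_sum]
    refine Finset.sum_congr rfl (fun v _ => ?_)
    rw [Finset.prod_mul_distrib]
    ring
  rw [Finset.sum_congr rfl (fun p _ => key p), Finset.sum_comm]
  refine Finset.sum_nonneg (fun v _ => ?_)
  rw [← Finset.sum_div, Finset.sum_product]
  dsimp only
  rw [← Finset.sum_mul_sum]
  exact div_nonneg (mul_self_nonneg _) (by positivity)

lemma Jc_sub_eq (α : ℝ) (m : ℕ) {j k j' k' : ℤ} (h : j - k = j' - k') :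
    Jc α m j k = Jc α m j' k' := by
  have hr : (j:ℝ) - (k:ℝ) = (j':ℝ) - (k':ℝ) := by
    have := congrArg (fun z : ℤ => (z : ℝ)) h
    push_cast at this
    linarith
  have hr2 : ∀ n : ℝ, (j:ℝ) - (k:ℝ) + 2*(m:ℝ)*n = (j':ℝ) - (k':ℝ) + 2*(m:ℝ)*n := by
    intro n; linarith
  simp only [Jc, h, hr]

lemma Nc_sub_eq (m : ℕ) {j k j' k' : ℤ} (h : j - k = j' - k') :
    Nc m j k = Nc m j' k' := by
  have h1 : j - k - 1 = j' - k' - 1 := by omega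
  have h2 : j - k + 1 = j' - k' + 1 := by omega
  simp only [Nc, h1, h2]

lemma Kc_sub_eq (α γ ε : ℝ) (m : ℕ) {j k j' k' : ℤ} (h : j - k = j' - k') :
    Kc α γ ε m j k = Kc α γ ε m j' k' := by
  rw [Kc, Kc, Nc_sub_eq m h, Jc_sub_eq α m h]

lemma Jc_symm (α : ℝ) (m : ℕ) (j k : ℤ) : Jc α m j k = Jc α m k j := by
  simp only [Jc]
  by_cases hd : (2*(m:ℤ)) ∣ (j - k)
  · rw [if_pos hd, if_pos (dvd_sub_comm.mp hd)]
  · rw [if_neg hd, if_neg (fun hc => hd (dvd_sub_comm.mp hc))]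
    rw [← Equiv.tsum_eq (Equiv.neg ℤ) (fun n : ℤ => |(k:ℝ) - (j:ℝ) + 2*(m:ℝ)*(n:ℝ)| ^ (-α))]
    refine tsum_congr (fun n => ?_)
    have hc : ((Equiv.neg ℤ n : ℤ) : ℝ) = -(n:ℝ) := by simp
    rw [hc]
    congr 1
    rw [show (k:ℝ) - j + 2*m*(-(n:ℝ)) = -((j:ℝ) - k + 2*m*n) by ring, abs_neg]

lemma Nc_symm (m : ℕ) (j k : ℤ) : Nc m j k = Nc m k j := by
  simp only [Nc]
  have h1 : (2*(m:ℤ)) ∣ (j - k - 1) ↔ (2*(m:ℤ)) ∣ (k - j + 1) := by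
    constructor
    · intro hd; have := Int.dvd_neg.mpr hd
      convert this using 1; ring
    · intro hd; have := Int.dvd_neg.mpr hd
      convert this using 1; ring
  have h2 : (2*(m:ℤ)) ∣ (j - k + 1) ↔ (2*(m:ℤ)) ∣ (k - j - 1) := by
    constructor
    · intro hd; have := Int.dvd_neg.mpr hd
      convert this using 1; ring
    · intro hd; have := Int.dvd_neg.mpr hd
      convert this using 1; ring
  exact if_congr (by rw [h1, h2]; exact or_comm) rfl rfl

lemma Kc_symm (α γ ε : ℝ) (m : ℕ) (j k : ℤ) : Kc α γ ε m j k = Kc α γ ε m k j := by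
  rw [Kc, Kc, Nc_symm, Jc_symm]

lemma Kc_cross_symm (α γ ε : ℝ) (m : ℕ) (j k : ℤ) :
    Kc α γ ε m j (1 - k) = Kc α γ ε m k (1 - j) :=
  Kc_sub_eq α γ ε m (by ring)

/-! structural definitions -/

abbrev HSp (m : ℕ) : Type := Finset.Icc (1:ℤ) (m:ℤ) → ({-1, 1} : Finset ℝ)

noncomputable def xv (m : ℕ) (x : HSp m) : ℤ → ℝ :=
  fun t => if ht : t ∈ Finset.Icc (1:ℤ) (m:ℤ) then (x ⟨t, ht⟩ : ℝ) else 0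

noncomputable def sv (m : ℕ) (x y : HSp m) : ℤ → ℝ :=
  fun t => if 1 ≤ t then xv m x t else xv m y (1 - t)

noncomputable def qd (α γ ε : ℝ) (m : ℕ) (v a : ℤ → ℝ) : ℝ :=
  ∑ j ∈ Finset.Icc (1:ℤ) (m:ℤ), ∑ k ∈ Finset.Icc (1:ℤ) (m:ℤ),
    Kc α γ ε m j k * (v j - v k - a j + a k) ^ 2

noncomputable def cr (α γ ε : ℝ) (m : ℕ) (v a u b : ℤ → ℝ) : ℝ :=
  ∑ j ∈ Finset.Icc (1:ℤ) (m:ℤ), ∑ k ∈ Finset.Icc (1:ℤ) (m:ℤ),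
    Kc α γ ε m j (1 - k) * ((v j - a j) - (u k - b k)) ^ 2

noncomputable def Sf (α γ ε : ℝ) (m : ℕ) (a b : ℤ → ℝ) : ℝ :=
  ∑ x : HSp m, ∑ y : HSp m, Real.exp (-(1/2) * (qd α γ ε m (xv m x) a + qd α γ ε m (xv m y) b
    + 2 * cr α γ ε m (xv m x) a (xv m y) b))

def spinEquiv (m : ℕ) : HSp m × HSp m ≃ Spin m where
  toFun p := fun s => if hs : 1 ≤ (s : ℤ) then
      p.1 ⟨(s:ℤ), by
        have := s.2
        simp only [Finset.mem_Icc] at this ⊢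
        omega⟩
    else
      p.2 ⟨1 - (s:ℤ), by
        have := s.2
        simp only [Finset.mem_Icc] at this ⊢
        omega⟩
  invFun σ := (fun j => σ ⟨(j:ℤ), by
      have := j.2
      simp only [Finset.mem_Icc] at this ⊢
      omega⟩,
    fun j => σ ⟨1 - (j:ℤ), by
      have := j.2
      simp only [Finset.mem_Icc] at this ⊢
      omega⟩)
  left_inv := by
    rintro ⟨x, y⟩
    refine Prod.ext ?_ ?_
    · funext j
      have hj : 1 ≤ (j:ℤ) := by
        have := j.2
        simp only [Finset.mem_Icc] at this
        omega
      dsimp only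
      rw [dif_pos hj]
    · funext j
      have hj : ¬ (1 ≤ 1 - (j:ℤ)) := by
        have := j.2
        simp only [Finset.mem_Icc] at this
        omega
      dsimp only
      rw [dif_neg hj]
      congr 1
      exact Subtype.ext (by push_cast; ring)
  right_inv := by
    intro σ
    funext s
    dsimp only
    by_cases hs : 1 ≤ (s:ℤ)
    · rw [dif_pos hs]
    · rw [dif_neg hs]
      congr 1
      exact Subtype.ext (by push_cast; ring)

lemma mg_val (m : ℕ) (x y : HSp m) (s : Site m) :
    ((spinEquiv m (x, y) s : ({-1,1} : Finset ℝ)) : ℝ) = sv m x y (s:ℤ) := by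
  rw [spinEquiv, sv]
  dsimp only [Equiv.coe_fn_mk]
  by_cases hs : 1 ≤ (s:ℤ)
  · rw [dif_pos hs, if_pos hs, xv]
    have hmem : (s:ℤ) ∈ Finset.Icc (1:ℤ) (m:ℤ) := by
      have := s.2
      simp only [Finset.mem_Icc] at this ⊢
      omega
    rw [dif_pos hmem]
  · rw [dif_neg hs, if_neg hs, xv]
    have hmem : 1 - (s:ℤ) ∈ Finset.Icc (1:ℤ) (m:ℤ) := by
      have := s.2
      simp only [Finset.mem_Icc] at this ⊢
      omega
    rw [dif_pos hmem]

lemma sum_split (m : ℕ) (hm : 1 ≤ m) (f : ℤ → ℝ) :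
    ∑ j ∈ Finset.Icc (1-(m:ℤ)) (m:ℤ), f j
    = (∑ j ∈ Finset.Icc (1:ℤ) (m:ℤ), f (1 - j)) + ∑ j ∈ Finset.Icc (1:ℤ) (m:ℤ), f j := by
  have hm' : (1:ℤ) ≤ (m:ℤ) := by exact_mod_cast hm
  have hu : Finset.Icc (1-(m:ℤ)) (m:ℤ) = Finset.Icc (1-(m:ℤ)) 0 ∪ Finset.Icc 1 (m:ℤ) := by
    ext t
    simp only [Finset.mem_Icc, Finset.mem_union]
    omega
  have hd : Disjoint (Finset.Icc (1-(m:ℤ)) 0) (Finset.Icc 1 (m:ℤ)) := by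
    rw [Finset.disjoint_left]
    intro t ht ht'
    simp only [Finset.mem_Icc] at ht ht'
    omega
  rw [hu, Finset.sum_union hd]
  congr 1
  refine Finset.sum_nbij' (fun j => 1 - j) (fun j => 1 - j) ?_ ?_ ?_ ?_ ?_
  · intro a ha; simp only [Finset.mem_Icc] at ha ⊢; omega
  · intro a ha; simp only [Finset.mem_Icc] at ha ⊢; omega
  · intro a _; omega
  · intro a _; omega
  · intro a _; congr 1; omega

lemma Zrw (α γ ε : ℝ) (m : ℕ) (hm : 1 ≤ m) (h : ℤ → ℝ) :
    Zf α γ ε m h = Sf α γ ε m h (fun j => h (1 - j)) := by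
  rw [Zf, Sf, ← Equiv.sum_comp (spinEquiv m) (fun σ : Spin m =>
      Real.exp (-(1 / 2) * ∑ j : Site m, ∑ k : Site m,
        Kc α γ ε m (j : ℤ) (k : ℤ) *
          ((σ j : ℝ) - (σ k : ℝ) - h (j : ℤ) + h (k : ℤ)) ^ 2)),
    Fintype.sum_prod_type]
  refine Finset.sum_congr rfl (fun x _ => Finset.sum_congr rfl (fun y _ => ?_))
  congr 1
  have hval : ∀ s : Site m, ((spinEquiv m (x, y) s : ({-1,1}:Finset ℝ)) : ℝ) = sv m x y (s:ℤ) :=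
    mg_val m x y
  have hA : ∀ j ∈ Finset.Icc (1:ℤ) (m:ℤ), sv m x y j = xv m x j := by
    intro j hj
    obtain ⟨h1, _⟩ := Finset.mem_Icc.mp hj
    simp only [sv]
    rw [if_pos h1]
  have hB : ∀ j ∈ Finset.Icc (1:ℤ) (m:ℤ), sv m x y (1-j) = xv m y j := by
    intro j hj
    obtain ⟨h1, _⟩ := Finset.mem_Icc.mp hj
    simp only [sv]
    rw [if_neg (by omega), sub_sub_cancel]
  have e1 : (∑ j : Site m, ∑ k : Site m,
        Kc α γ ε m (j : ℤ) (k : ℤ) *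
          (((spinEquiv m (x, y)) j : ℝ) - ((spinEquiv m (x, y)) k : ℝ)
            - h (j : ℤ) + h (k : ℤ)) ^ 2)
      = ∑ j ∈ Finset.Icc (1-(m:ℤ)) (m:ℤ), ∑ k ∈ Finset.Icc (1-(m:ℤ)) (m:ℤ),
        Kc α γ ε m j k * (sv m x y j - sv m x y k - h j + h k) ^ 2 := by
    rw [← Finset.sum_coe_sort (Finset.Icc (1-(m:ℤ)) (m:ℤ))
      (fun j => ∑ k ∈ Finset.Icc (1-(m:ℤ)) (m:ℤ),
        Kc α γ ε m j k * (sv m x y j - sv m x y k - h j + h k) ^ 2)]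
    refine Finset.sum_congr rfl (fun j _ => ?_)
    rw [← Finset.sum_coe_sort (Finset.Icc (1-(m:ℤ)) (m:ℤ))
      (fun k => Kc α γ ε m (j:ℤ) k * (sv m x y (j:ℤ) - sv m x y k - h (j:ℤ) + h k) ^ 2)]
    refine Finset.sum_congr rfl (fun k _ => ?_)
    rw [hval j, hval k]
  rw [e1]
  rw [sum_split m hm (fun j => ∑ k ∈ Finset.Icc (1-(m:ℤ)) (m:ℤ),
    Kc α γ ε m j k * (sv m x y j - sv m x y k - h j + h k) ^ 2)]
  have einL : ∀ j : ℤ, ∑ k ∈ Finset.Icc (1-(m:ℤ)) (m:ℤ),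
      Kc α γ ε m j k * (sv m x y j - sv m x y k - h j + h k) ^ 2
      = (∑ k ∈ Finset.Icc (1:ℤ) (m:ℤ),
          Kc α γ ε m j (1-k) * (sv m x y j - sv m x y (1-k) - h j + h (1-k)) ^ 2)
        + ∑ k ∈ Finset.Icc (1:ℤ) (m:ℤ),
          Kc α γ ε m j k * (sv m x y j - sv m x y k - h j + h k) ^ 2 := by
    intro j
    exact sum_split m hm (fun k => Kc α γ ε m j k * (sv m x y j - sv m x y k - h j + h k) ^ 2)
  simp only [einL, Finset.sum_add_distrib]
  -- four blocks
  have eRR : ∑ j ∈ Finset.Icc (1:ℤ) (m:ℤ), ∑ k ∈ Finset.Icc (1:ℤ) (m:ℤ),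
      Kc α γ ε m j k * (sv m x y j - sv m x y k - h j + h k) ^ 2
      = qd α γ ε m (xv m x) h := by
    rw [qd]
    refine Finset.sum_congr rfl (fun j hj => Finset.sum_congr rfl (fun k hk => ?_))
    rw [hA j hj, hA k hk]
  have eLL : ∑ j ∈ Finset.Icc (1:ℤ) (m:ℤ), ∑ k ∈ Finset.Icc (1:ℤ) (m:ℤ),
      Kc α γ ε m (1-j) (1-k) * (sv m x y (1-j) - sv m x y (1-k) - h (1-j) + h (1-k)) ^ 2
      = qd α γ ε m (xv m y) (fun t => h (1-t)) := by
    rw [qd]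
    refine Finset.sum_congr rfl (fun j hj => Finset.sum_congr rfl (fun k hk => ?_))
    rw [hB j hj, hB k hk,
      show Kc α γ ε m (1-j) (1-k) = Kc α γ ε m j k from
        (Kc_sub_eq α γ ε m (by ring)).trans (Kc_symm α γ ε m k j)]
  have eRL : ∑ j ∈ Finset.Icc (1:ℤ) (m:ℤ), ∑ k ∈ Finset.Icc (1:ℤ) (m:ℤ),
      Kc α γ ε m j (1-k) * (sv m x y j - sv m x y (1-k) - h j + h (1-k)) ^ 2
      = cr α γ ε m (xv m x) h (xv m y) (fun t => h (1-t)) := by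
    rw [cr]
    refine Finset.sum_congr rfl (fun j hj => Finset.sum_congr rfl (fun k hk => ?_))
    rw [hA j hj, hB k hk]
    ring_nf
  have eLR : ∑ j ∈ Finset.Icc (1:ℤ) (m:ℤ), ∑ k ∈ Finset.Icc (1:ℤ) (m:ℤ),
      Kc α γ ε m (1-j) k * (sv m x y (1-j) - sv m x y k - h (1-j) + h k) ^ 2
      = cr α γ ε m (xv m x) h (xv m y) (fun t => h (1-t)) := by
    rw [cr, Finset.sum_comm]
    refine Finset.sum_congr rfl (fun k hk => Finset.sum_congr rfl (fun j hj => ?_))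
    rw [hA k hk, hB j hj, Kc_symm α γ ε m (1-j) k]
    ring_nf
  rw [eRR, eLL, eRL, eLR]
  ring

lemma Sf_psd (α γ ε : ℝ) (hα1 : 1 < α) (hε : 0 < ε) (hγε : ε ≤ γ) (m : ℕ) (hm : 1 ≤ m)
    {T : Type*} [Fintype T] (w : T → ℝ) (P : T → HSp m × (ℤ → ℝ)) :
    0 ≤ ∑ s : T, ∑ t : T, w s * w t *
      Real.exp (-(1/2) * (qd α γ ε m (xv m (P s).1) (P s).2
        + qd α γ ε m (xv m (P t).1) (P t).2
        + 2 * cr α γ ε m (xv m (P s).1) (P s).2 (xv m (P t).1) (P t).2)) := by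
  classical
  set U : T → ℤ → ℝ := fun s t => xv m (P s).1 t - (P s).2 t with hU
  set CM : Matrix {z // z ∈ Finset.Icc (1:ℤ) (m:ℤ)} {z // z ∈ Finset.Icc (1:ℤ) (m:ℤ)} ℝ :=
    Matrix.of (fun j k => Kc α γ ε m (j:ℤ) (1 - (k:ℤ))) with hCM
  have hCapp : ∀ j k : {z // z ∈ Finset.Icc (1:ℤ) (m:ℤ)},
      CM j k = Kc α γ ε m (j:ℤ) (1 - (k:ℤ)) := fun j k => rfl
  have hCsymm : ∀ j k : {z // z ∈ Finset.Icc (1:ℤ) (m:ℤ)}, CM j k = CM k j := by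
    intro j k
    rw [hCapp, hCapp]
    exact Kc_sub_eq α γ ε m (by ring)
  have hPSD : CM.PosSemidef := by
    refine Matrix.PosSemidef.of_dotProduct_mulVec_nonneg ?_ ?_
    · ext j k
      rw [Matrix.conjTranspose_apply, star_trivial]
      exact hCsymm k j
    · intro v
      have hsv : star v = v := by
        funext i
        exact star_trivial _
      rw [hsv]
      set wv : ℤ → ℝ := fun z => if hz : z ∈ Finset.Icc (1:ℤ) (m:ℤ) then v ⟨z, hz⟩ else 0
        with hwv
      have e1 : ∀ j : {z // z ∈ Finset.Icc (1:ℤ) (m:ℤ)}, wv (j:ℤ) = v j := by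
        intro j
        rw [hwv]
        dsimp only
        rw [dif_pos j.2]
      have conv : (∑ j ∈ Finset.Icc (1:ℤ) (m:ℤ), ∑ k ∈ Finset.Icc (1:ℤ) (m:ℤ),
          wv j * wv k * Kc α γ ε m j (1 - k)) = dotProduct v (CM.mulVec v) := by
        rw [← Finset.sum_coe_sort (Finset.Icc (1:ℤ) (m:ℤ))
          (fun j => ∑ k ∈ Finset.Icc (1:ℤ) (m:ℤ), wv j * wv k * Kc α γ ε m j (1 - k))]
        simp only [dotProduct]
        refine Finset.sum_congr rfl (fun j _ => ?_)
        rw [← Finset.sum_coe_sort (Finset.Icc (1:ℤ) (m:ℤ))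
          (fun k => wv (j:ℤ) * wv k * Kc α γ ε m (j:ℤ) (1 - k))]
        simp only [Matrix.mulVec, dotProduct]
        rw [Finset.mul_sum]
        refine Finset.sum_congr rfl (fun k _ => ?_)
        rw [e1 j, e1 k, hCapp]
        ring
      rw [← conv]
      exact cross_psd hα1 hε hγε hm wv
  obtain ⟨B, hB⟩ : ∃ B : Matrix {z // z ∈ Finset.Icc (1:ℤ) (m:ℤ)} {z // z ∈ Finset.Icc (1:ℤ) (m:ℤ)} ℝ,
      CM = B.conjTranspose * B := by
    open scoped MatrixOrder in exact CStarAlgebra.nonneg_iff_eq_star_mul_self.mp hPSD.nonneg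
  have hCB : ∀ j k : {z // z ∈ Finset.Icc (1:ℤ) (m:ℤ)},
      CM j k = ∑ i : {z // z ∈ Finset.Icc (1:ℤ) (m:ℤ)}, B i j * B i k := by
    intro j k
    rw [hB]
    rw [Matrix.mul_apply]
    refine Finset.sum_congr rfl (fun i _ => ?_)
    rw [Matrix.conjTranspose_apply, star_trivial]
  set gq : T → ℝ := fun s => ∑ j ∈ Finset.Icc (1:ℤ) (m:ℤ), ∑ k ∈ Finset.Icc (1:ℤ) (m:ℤ),
    Kc α γ ε m j (1 - k) * (U s j)^2 with hgq
  set bil : T → T → ℝ := fun s t => ∑ j ∈ Finset.Icc (1:ℤ) (m:ℤ),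
    ∑ k ∈ Finset.Icc (1:ℤ) (m:ℤ), Kc α γ ε m j (1 - k) * (U s j) * (U t k) with hbil
  have hcr : ∀ s t : T, cr α γ ε m (xv m (P s).1) (P s).2 (xv m (P t).1) (P t).2
      = gq s + gq t - 2 * bil s t := by
    intro s t
    have flip : ∑ j ∈ Finset.Icc (1:ℤ) (m:ℤ), ∑ k ∈ Finset.Icc (1:ℤ) (m:ℤ),
        Kc α γ ε m j (1 - k) * (U t k)^2 = gq t := by
      rw [hgq, Finset.sum_comm]
      refine Finset.sum_congr rfl (fun j _ => Finset.sum_congr rfl (fun k _ => ?_))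
      rw [← Kc_cross_symm α γ ε m j k]
    have expand : ∀ j ∈ Finset.Icc (1:ℤ) (m:ℤ), ∀ k ∈ Finset.Icc (1:ℤ) (m:ℤ),
        Kc α γ ε m j (1 - k) * ((U s j) - (U t k))^2
        = (Kc α γ ε m j (1 - k) * (U s j)^2 + Kc α γ ε m j (1 - k) * (U t k)^2)
          - 2 * (Kc α γ ε m j (1 - k) * (U s j) * (U t k)) := fun j _ k _ => by ring
    have crU : cr α γ ε m (xv m (P s).1) (P s).2 (xv m (P t).1) (P t).2
        = ∑ j ∈ Finset.Icc (1:ℤ) (m:ℤ), ∑ k ∈ Finset.Icc (1:ℤ) (m:ℤ),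
          Kc α γ ε m j (1 - k) * ((U s j) - (U t k))^2 := rfl
    rw [crU, Finset.sum_congr rfl (fun j hj => Finset.sum_congr rfl
      (fun k hk => expand j hj k hk))]
    simp only [Finset.sum_add_distrib, Finset.sum_sub_distrib, ← Finset.mul_sum]
    rw [flip]
  set ψ : T → {z // z ∈ Finset.Icc (1:ℤ) (m:ℤ)} → ℝ :=
    fun s i => Real.sqrt 2 * ∑ j : {z // z ∈ Finset.Icc (1:ℤ) (m:ℤ)}, B i j * U s (j:ℤ) with hψ
  have hbil2 : ∀ s t : T, 2 * bil s t
      = ∑ i : {z // z ∈ Finset.Icc (1:ℤ) (m:ℤ)}, ψ s i * ψ t i := by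
    intro s t
    have conv : bil s t = ∑ j : {z // z ∈ Finset.Icc (1:ℤ) (m:ℤ)},
        ∑ k : {z // z ∈ Finset.Icc (1:ℤ) (m:ℤ)}, CM j k * U s (j:ℤ) * U t (k:ℤ) := by
      rw [hbil]
      dsimp only
      rw [← Finset.sum_coe_sort (Finset.Icc (1:ℤ) (m:ℤ))
        (fun j => ∑ k ∈ Finset.Icc (1:ℤ) (m:ℤ), Kc α γ ε m j (1 - k) * U s j * U t k)]
      refine Finset.sum_congr rfl (fun j _ => ?_)
      rw [← Finset.sum_coe_sort (Finset.Icc (1:ℤ) (m:ℤ))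
        (fun k => Kc α γ ε m (j:ℤ) (1 - k) * U s (j:ℤ) * U t k)]
      refine Finset.sum_congr rfl (fun k _ => ?_)
      rw [hCapp]
    rw [conv]
    have step1 : ∑ j : {z // z ∈ Finset.Icc (1:ℤ) (m:ℤ)},
        ∑ k : {z // z ∈ Finset.Icc (1:ℤ) (m:ℤ)}, CM j k * U s (j:ℤ) * U t (k:ℤ)
        = ∑ i : {z // z ∈ Finset.Icc (1:ℤ) (m:ℤ)},
          (∑ j : {z // z ∈ Finset.Icc (1:ℤ) (m:ℤ)}, B i j * U s (j:ℤ))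
            * (∑ k : {z // z ∈ Finset.Icc (1:ℤ) (m:ℤ)}, B i k * U t (k:ℤ)) := by
      calc ∑ j : {z // z ∈ Finset.Icc (1:ℤ) (m:ℤ)},
          ∑ k : {z // z ∈ Finset.Icc (1:ℤ) (m:ℤ)}, CM j k * U s (j:ℤ) * U t (k:ℤ)
          = ∑ j : {z // z ∈ Finset.Icc (1:ℤ) (m:ℤ)},
            ∑ k : {z // z ∈ Finset.Icc (1:ℤ) (m:ℤ)},
              ∑ i : {z // z ∈ Finset.Icc (1:ℤ) (m:ℤ)},
                (B i j * U s (j:ℤ)) * (B i k * U t (k:ℤ)) := by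
            refine Finset.sum_congr rfl (fun j _ => Finset.sum_congr rfl (fun k _ => ?_))
            rw [hCB j k, Finset.sum_mul, Finset.sum_mul]
            exact Finset.sum_congr rfl (fun i _ => by ring)
        _ = ∑ j : {z // z ∈ Finset.Icc (1:ℤ) (m:ℤ)},
            ∑ i : {z // z ∈ Finset.Icc (1:ℤ) (m:ℤ)},
              ∑ k : {z // z ∈ Finset.Icc (1:ℤ) (m:ℤ)},
                (B i j * U s (j:ℤ)) * (B i k * U t (k:ℤ)) :=
            Finset.sum_congr rfl (fun j _ => Finset.sum_comm)
        _ = ∑ i : {z // z ∈ Finset.Icc (1:ℤ) (m:ℤ)},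
            ∑ j : {z // z ∈ Finset.Icc (1:ℤ) (m:ℤ)},
              ∑ k : {z // z ∈ Finset.Icc (1:ℤ) (m:ℤ)},
                (B i j * U s (j:ℤ)) * (B i k * U t (k:ℤ)) := Finset.sum_comm
        _ = ∑ i : {z // z ∈ Finset.Icc (1:ℤ) (m:ℤ)},
            (∑ j : {z // z ∈ Finset.Icc (1:ℤ) (m:ℤ)}, B i j * U s (j:ℤ))
              * (∑ k : {z // z ∈ Finset.Icc (1:ℤ) (m:ℤ)}, B i k * U t (k:ℤ)) :=
            Finset.sum_congr rfl (fun i _ => (Finset.sum_mul_sum _ _ _ _).symm)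
    rw [step1, Finset.mul_sum]
    refine Finset.sum_congr rfl (fun i _ => ?_)
    rw [hψ]
    dsimp only
    rw [mul_mul_mul_comm, Real.mul_self_sqrt (by norm_num)]
  set fG : T → ℝ := fun s => -(1/2) * qd α γ ε m (xv m (P s).1) (P s).2 - gq s with hfG
  have hexp : ∀ s t : T, -(1/2) * (qd α γ ε m (xv m (P s).1) (P s).2
      + qd α γ ε m (xv m (P t).1) (P t).2
      + 2 * cr α γ ε m (xv m (P s).1) (P s).2 (xv m (P t).1) (P t).2)
      = fG s + fG t + ∑ i : {z // z ∈ Finset.Icc (1:ℤ) (m:ℤ)}, ψ s i * ψ t i := by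
    intro s t
    rw [← hbil2, hcr s t, hfG]
    dsimp only
    ring
  calc (0:ℝ) ≤ ∑ s : T, ∑ t : T, (w s * Real.exp (fG s)) * (w t * Real.exp (fG t)) *
      Real.exp (∑ i : {z // z ∈ Finset.Icc (1:ℤ) (m:ℤ)}, ψ s i * ψ t i) :=
      exp_dot_kernel_psd (fun s => w s * Real.exp (fG s)) ψ
    _ = ∑ s : T, ∑ t : T, w s * w t *
      Real.exp (-(1/2) * (qd α γ ε m (xv m (P s).1) (P s).2
        + qd α γ ε m (xv m (P t).1) (P t).2
        + 2 * cr α γ ε m (xv m (P s).1) (P s).2 (xv m (P t).1) (P t).2)) := by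
      refine Finset.sum_congr rfl (fun s _ => Finset.sum_congr rfl (fun t _ => ?_))
      rw [hexp s t, Real.exp_add, Real.exp_add]
      ring

lemma cr_symm (α γ ε : ℝ) (m : ℕ) (v a u b : ℤ → ℝ) :
    cr α γ ε m v a u b = cr α γ ε m u b v a := by
  rw [cr, cr, Finset.sum_comm]
  refine Finset.sum_congr rfl (fun j _ => Finset.sum_congr rfl (fun k _ => ?_))
  rw [← Kc_cross_symm α γ ε m j k]
  ring

lemma Sf_symm (α γ ε : ℝ) (m : ℕ) (a b : ℤ → ℝ) : Sf α γ ε m a b = Sf α γ ε m b a := by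
  rw [Sf, Sf, Finset.sum_comm]
  refine Finset.sum_congr rfl (fun x _ => Finset.sum_congr rfl (fun y _ => ?_))
  congr 1
  rw [cr_symm]
  ring

lemma Sf_congr (α γ ε : ℝ) (m : ℕ) {a b a' b' : ℤ → ℝ}
    (ha : ∀ j ∈ Finset.Icc (1:ℤ) (m:ℤ), a j = a' j)
    (hb : ∀ j ∈ Finset.Icc (1:ℤ) (m:ℤ), b j = b' j) :
    Sf α γ ε m a b = Sf α γ ε m a' b' := by
  have hqd : ∀ (v c c' : ℤ → ℝ), (∀ j ∈ Finset.Icc (1:ℤ) (m:ℤ), c j = c' j) →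
      qd α γ ε m v c = qd α γ ε m v c' := by
    intro v c c' hc
    rw [qd, qd]
    refine Finset.sum_congr rfl (fun j hj => Finset.sum_congr rfl (fun k hk => ?_))
    rw [hc j hj, hc k hk]
  have hcr2 : ∀ (v u c c' d d' : ℤ → ℝ), (∀ j ∈ Finset.Icc (1:ℤ) (m:ℤ), c j = c' j) →
      (∀ j ∈ Finset.Icc (1:ℤ) (m:ℤ), d j = d' j) →
      cr α γ ε m v c u d = cr α γ ε m v c' u d' := by
    intro v u c c' d d' hc hd2
    rw [cr, cr]
    refine Finset.sum_congr rfl (fun j hj => Finset.sum_congr rfl (fun k hk => ?_))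
    rw [hc j hj, hd2 k hk]
  rw [Sf, Sf]
  refine Finset.sum_congr rfl (fun x _ => Finset.sum_congr rfl (fun y _ => ?_))
  rw [hqd _ a a' ha, hqd _ b b' hb, hcr2 _ _ a a' b b' ha hb]

lemma Sf_cs (α γ ε : ℝ) (hα1 : 1 < α) (hε : 0 < ε) (hγε : ε ≤ γ) (m : ℕ) (hm : 1 ≤ m)
    (a b : ℤ → ℝ) : Sf α γ ε m a b ^ 2 ≤ Sf α γ ε m a a * Sf α γ ε m b b := by
  have quad : ∀ lam : ℝ, 0 ≤ Sf α γ ε m a a * (lam * lam) + (2 * Sf α γ ε m a b) * lam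
      + Sf α γ ε m b b := by
    intro lam
    have hP := Sf_psd α γ ε hα1 hε hγε m hm (T := HSp m ⊕ HSp m)
      (Sum.elim (fun _ => lam) (fun _ => 1))
      (Sum.elim (fun x => (x, a)) (fun x => (x, b)))
    simp only [Fintype.sum_sum_type, Sum.elim_inl, Sum.elim_inr,
      Finset.sum_add_distrib] at hP
    have fold : ∀ (c d : ℝ) (u v' : ℤ → ℝ), (∑ x : HSp m, ∑ y : HSp m, c * d *
        Real.exp (-(1/2) * (qd α γ ε m (xv m x) u + qd α γ ε m (xv m y) v'
          + 2 * cr α γ ε m (xv m x) u (xv m y) v'))) = c * d * Sf α γ ε m u v' := by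
      intro c d u v'
      rw [Sf, Finset.mul_sum]
      exact Finset.sum_congr rfl (fun x _ => by rw [Finset.mul_sum])
    rw [fold, fold, fold, fold, Sf_symm α γ ε m b a] at hP
    ring_nf at hP ⊢
    linarith
  have hd := discrim_le_zero quad
  rw [discrim] at hd
  nlinarith [hd]


/-- Reflection positivity about the bond between sites `0` and `1`:
`Z(h)² ≤ Z(h⁺)·Z(h⁻)`, where `h⁺` agrees with `h` on `{1,…,m}` and is the
reflection `j ↦ h(1−j)` on `{1−m,…,0}`, and `h⁻` agrees with `h` on
`{1−m,…,0}` and is the reflection on `{1,…,m}`. -/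
theorem reflection_positivity_bound (α γ ε : ℝ) (hα1 : 1 < α) (hα2 : α < 2)
    (hε : 0 < ε) (hγε : ε ≤ γ) (m : ℕ) (hm : 1 ≤ m) (h : ℤ → ℝ) :
    Zf α γ ε m h ^ 2 ≤
      Zf α γ ε m (fun j => if 1 ≤ j then h j else h (1 - j)) *
        Zf α γ ε m (fun j => if j ≤ 0 then h j else h (1 - j)) := by
  have hplus : Zf α γ ε m (fun j => if 1 ≤ j then h j else h (1 - j)) = Sf α γ ε m h h := by
    rw [Zrw α γ ε m hm]
    refine Sf_congr α γ ε m ?_ ?_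
    · intro j hj
      obtain ⟨h1, _⟩ := Finset.mem_Icc.mp hj
      exact if_pos h1
    · intro j hj
      obtain ⟨h1, _⟩ := Finset.mem_Icc.mp hj
      show (if 1 ≤ 1 - j then h (1 - j) else h (1 - (1 - j))) = h j
      rw [if_neg (by omega), sub_sub_cancel]
  have hminus : Zf α γ ε m (fun j => if j ≤ 0 then h j else h (1 - j))
      = Sf α γ ε m (fun j => h (1 - j)) (fun j => h (1 - j)) := by
    rw [Zrw α γ ε m hm]
    refine Sf_congr α γ ε m ?_ ?_
    · intro j hj
      obtain ⟨h1, _⟩ := Finset.mem_Icc.mp hj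
      show (if j ≤ 0 then h j else h (1 - j)) = h (1 - j)
      rw [if_neg (by omega)]
    · intro j hj
      obtain ⟨h1, _⟩ := Finset.mem_Icc.mp hj
      show (if 1 - j ≤ 0 then h (1 - j) else h (1 - (1 - j))) = h (1 - j)
      rw [if_pos (by omega)]
  rw [Zrw α γ ε m hm h, hplus, hminus]
  exact Sf_cs α γ ε hα1 hε hγε m hm h (fun j => h (1 - j))
end

section
/- Fix 1 < α < 2 and γ ≥ ε > 0. For an integer m ≥ 1 let Λ = {1−m, …, m} ⊆ ℤ (a periodic lattice of 2m sites, indices taken mod 2m). For j, k ∈ Λ set J_{j,k} = ∑_{n∈ℤ} |j − k + 2mn|^{−α} if j ≢ k (mod 2m) and J_{j,j} = 0; set N_{j,k} = 1 if j − k ≡ ±1 (mod 2m) and 0 otherwise; and set K_{j,k} = (γ−ε)·N_{j,k} + ε·J_{j,k}. Define H(σ) = (1/2)·∑_{j,k∈Λ} K_{j,k}·(σ_j − σ_k)² for σ ∈ {−1,1}^Λ and the Gibbs expectation ⟨f⟩ = (∑_σ f(σ)e^{−H(σ)})/(∑_σ e^{−H(σ)}). Let Λ* = {kπ/m : k = 0,1,…,2m−1},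 and for p ∈ Λ* set g_m(p) = (1/(2m))·∑_{j,k∈Λ} cos(p(j−k))·⟨σ_jσ_k⟩ and E(p) = (1/2)·∑_{j∈Λ} K_{j,0}·(1 − cos(pj)). Suppose Gaussian domination holds, i.e., Z(h) ≤ Z(0) for all h : Λ → ℝ, where Z(h) = ∑_{σ ∈ {−1,1}^Λ} exp(−(1/2)·∑_{j,k∈Λ} K_{j,k}·(σ_j − σ_k − h_j + h_k)²). Then for every p ∈ Λ* with p ≠ 0: g_m(p) ≤ 1/(2·E(p)) (the infrared bound). -/
/-- The Hamiltonian `H(σ) = (1/2)·∑_{j,k∈Λ} K_{j,k}(σ_j − σ_k)²`. -/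
noncomputable def Hc (α γ ε : ℝ) (m : ℕ) (σ : Spin m) : ℝ :=
  (1 / 2) * ∑ j : Site m, ∑ k : Site m,
    Kc α γ ε m (j : ℤ) (k : ℤ) * ((σ j : ℝ) - (σ k : ℝ)) ^ 2

/-- The Gibbs two-point function
`⟨σ_j σ_k⟩ = (∑_σ σ_j σ_k e^{−H(σ)})/(∑_σ e^{−H(σ)})`. -/
noncomputable def corr (α γ ε : ℝ) (m : ℕ) (j k : Site m) : ℝ :=
  (∑ σ : Spin m, (σ j : ℝ) * (σ k : ℝ) * Real.exp (-Hc α γ ε m σ)) /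
    ∑ σ : Spin m, Real.exp (-Hc α γ ε m σ)

/-- `g_m(p) = (1/(2m))·∑_{j,k∈Λ} cos(p(j−k))·⟨σ_jσ_k⟩`. -/
noncomputable def gm (α γ ε : ℝ) (m : ℕ) (p : ℝ) : ℝ :=
  (1 / (2 * (m : ℝ))) * ∑ j : Site m, ∑ k : Site m,
    Real.cos (p * (((j : ℤ) - (k : ℤ) : ℤ) : ℝ)) * corr α γ ε m j k

/-- `E(p) = (1/2)·∑_{j∈Λ} K_{j,0}·(1 − cos(pj))`. -/
noncomputable def Ep (α γ ε : ℝ) (m : ℕ) (p : ℝ) : ℝ :=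
  (1 / 2) * ∑ j : Site m, Kc α γ ε m (j : ℤ) 0 * (1 - Real.cos (p * ((j : ℤ) : ℝ)))


namespace IRB

/-- `KK d = K_{d,0}`, the coupling as a function of the difference. -/
noncomputable def KK (α γ ε : ℝ) (m : ℕ) (d : ℤ) : ℝ := Kc α γ ε m d 0

lemma dvd_iff_sub (a u v : ℤ) (h : a ∣ u - v) : (a ∣ u ↔ a ∣ v) := by
  constructor
  · intro hu
    have := hu.sub h
    rw [show u - (u - v) = v by ring] at this
    exact this
  · intro hv
    have := h.add hv
    rw [show u - v + v = u by ring] at this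
    exact this

lemma Jc_symm (α : ℝ) (m : ℕ) (j k : ℤ) : Jc α m j k = Jc α m k j := by
  unfold Jc
  by_cases h : (2 * (m : ℤ)) ∣ (j - k)
  · rw [if_pos h, if_pos (by rw [show k - j = -(j-k) by ring]; exact h.neg_right)]
  · rw [if_neg h, if_neg (fun hh => h (by
      have := hh.neg_right
      rw [show -(k - j) = j - k by ring] at this
      exact this))]
    rw [← (Equiv.neg ℤ).tsum_eq (fun n : ℤ => |(k : ℝ) - (j : ℝ) + 2 * (m : ℝ) * (n : ℝ)| ^ (-α))]
    apply tsum_congr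
    intro n
    simp only [Equiv.neg_apply]
    rw [show (k : ℝ) - (j : ℝ) + 2 * (m : ℝ) * ((-n : ℤ) : ℝ)
        = -((j : ℝ) - (k : ℝ) + 2 * (m : ℝ) * (n : ℝ)) by push_cast; ring, abs_neg]

lemma Nc_symm (m : ℕ) (j k : ℤ) : Nc m j k = Nc m k j := by
  unfold Nc
  congr 1
  simp only [eq_iff_iff]
  constructor
  · rintro (h | h)
    · right
      have := h.neg_right; rw [show -(j - k - 1) = k - j + 1 by ring] at this; exact this
    · left
      have := h.neg_right; rw [show -(j - k + 1) = k - j - 1 by ring] at this; exact this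
  · rintro (h | h)
    · right
      have := h.neg_right; rw [show -(k - j - 1) = j - k + 1 by ring] at this; exact this
    · left
      have := h.neg_right; rw [show -(k - j + 1) = j - k - 1 by ring] at this; exact this

lemma Kc_symm (α γ ε : ℝ) (m : ℕ) (j k : ℤ) : Kc α γ ε m j k = Kc α γ ε m k j := by
  unfold Kc; rw [Nc_symm, Jc_symm]

lemma Kc_eq (α γ ε : ℝ) (m : ℕ) (j k : ℤ) : Kc α γ ε m j k = KK α γ ε m (j - k) := by
  unfold KK Kc Nc Jc; norm_num

lemma KK_shift (α γ ε : ℝ) (m : ℕ) (d : ℤ) :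
    KK α γ ε m (d + 2 * m) = KK α γ ε m d := by
  have hdvd : ∀ x : ℤ, ((2 * (m : ℤ)) ∣ x + 2 * m) ↔ ((2 * (m : ℤ)) ∣ x) :=
    fun x => dvd_iff_sub _ _ _ (by rw [show x + 2*(m:ℤ) - x = 2*m by ring])
  have ht : (∑' n : ℤ, |((d + 2 * (m:ℤ) : ℤ) : ℝ) - ((0:ℤ) : ℝ) + 2 * (m : ℝ) * (n : ℝ)| ^ (-α))
      = ∑' n : ℤ, |((d : ℤ) : ℝ) - ((0:ℤ) : ℝ) + 2 * (m : ℝ) * (n : ℝ)| ^ (-α) := by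
    rw [← (Equiv.addRight (1 : ℤ)).tsum_eq
      (fun n : ℤ => |((d : ℤ) : ℝ) - ((0:ℤ) : ℝ) + 2 * (m : ℝ) * (n : ℝ)| ^ (-α))]
    apply tsum_congr
    intro n
    simp only [Equiv.coe_addRight]
    congr 2
    push_cast; ring
  unfold KK Kc Nc Jc
  rw [ht]
  have h1 : ((2*(m:ℤ)) ∣ d + 2*m - 0 - 1) ↔ ((2*(m:ℤ)) ∣ d - 0 - 1) := by
    rw [show d + 2*(m:ℤ) - 0 - 1 = (d - 0 - 1) + 2*m by ring, hdvd]
  have h2 : ((2*(m:ℤ)) ∣ d + 2*m - 0 + 1) ↔ ((2*(m:ℤ)) ∣ d - 0 + 1) := by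
    rw [show d + 2*(m:ℤ) - 0 + 1 = (d - 0 + 1) + 2*m by ring, hdvd]
  have h3 : ((2*(m:ℤ)) ∣ d + 2*m - 0) ↔ ((2*(m:ℤ)) ∣ d - 0) := by
    rw [show d + 2*(m:ℤ) - 0 = (d - 0) + 2*m by ring, hdvd]
  simp only [h1, h2, h3]

lemma dvd_congr_fun (m : ℕ) (f : ℤ → ℝ) (hf : ∀ x, f (x + 2 * m) = f x) :
    ∀ x y : ℤ, ((2 * (m : ℤ)) ∣ x - y) → f x = f y := by
  have key : ∀ (t : ℤ) (x : ℤ), f (x + 2 * m * t) = f x := by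
    intro t
    induction t using Int.induction_on with
    | zero => simp
    | succ n ih =>
      intro x
      rw [show x + 2 * (m : ℤ) * (n + 1) = (x + 2 * m * n) + 2 * m by ring, hf, ih]
    | pred n ih =>
      intro x
      have h2 := hf (x + 2 * (m : ℤ) * (-n - 1))
      rw [show x + 2 * (m : ℤ) * (-n - 1) + 2 * m = x + 2 * m * (-n : ℤ) by ring] at h2
      rw [← h2, ih]
  intro x y h
  obtain ⟨t, ht⟩ := h
  rw [show x = y + 2 * (m : ℤ) * t by omega, key]

lemma KK_congr (α γ ε : ℝ) (m : ℕ) : ∀ x y : ℤ, ((2 * (m : ℤ)) ∣ x - y) →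
    KK α γ ε m x = KK α γ ε m y :=
  dvd_congr_fun m _ (KK_shift α γ ε m)

lemma KK_neg (α γ ε : ℝ) (m : ℕ) (d : ℤ) : KK α γ ε m (-d) = KK α γ ε m d := by
  unfold KK
  rw [Kc_symm, Kc_eq, zero_sub, neg_neg]
  rfl

lemma Jc_nonneg (α : ℝ) (m : ℕ) (j k : ℤ) : 0 ≤ Jc α m j k := by
  unfold Jc
  split_ifs with h
  · exact le_refl 0
  · exact tsum_nonneg fun n => Real.rpow_nonneg (abs_nonneg _) _

lemma Nc_nonneg (m : ℕ) (j k : ℤ) : 0 ≤ Nc m j k := by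
  unfold Nc; split_ifs <;> norm_num

lemma Kc_nonneg (α γ ε : ℝ) (hε : 0 < ε) (hγε : ε ≤ γ) (m : ℕ) (j k : ℤ) :
    0 ≤ Kc α γ ε m j k := by
  unfold Kc
  have := Nc_nonneg m j k
  have := Jc_nonneg α m j k
  nlinarith

end IRB

namespace IRB

/-- reduce `x` to its representative in `Icc (1-m) m` mod `2m`. -/
def rr (m : ℕ) (x : ℤ) : ℤ := (x - (1 - m)) % (2 * m) + (1 - m)

lemma rr_mem (m : ℕ) (hm : 1 ≤ m) (x : ℤ) :
    rr m x ∈ Finset.Icc (1 - (m : ℤ)) (m : ℤ) := by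
  have h2m : (0:ℤ) < 2 * m := by positivity
  have h0 : 0 ≤ (x - (1 - (m:ℤ))) % (2 * m) := Int.emod_nonneg _ (by omega)
  have h1 : (x - (1 - (m:ℤ))) % (2 * m) < 2 * m := Int.emod_lt_of_pos _ h2m
  unfold rr
  rw [Finset.mem_Icc]
  omega

lemma rr_dvd (m : ℕ) (x : ℤ) : (2 * (m : ℤ)) ∣ rr m x - x := by
  unfold rr
  have := Int.emod_add_mul_ediv (x - (1 - (m:ℤ))) (2 * m)
  exact ⟨-((x - (1 - (m:ℤ))) / (2 * m)), by linarith⟩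

lemma rr_eq_self (m : ℕ) (hm : 1 ≤ m) (x : ℤ)
    (hx : x ∈ Finset.Icc (1 - (m : ℤ)) (m : ℤ)) : rr m x = x := by
  rw [Finset.mem_Icc] at hx
  unfold rr
  rw [Int.emod_eq_of_lt (by omega) (by omega)]
  ring

lemma rr_congr (m : ℕ) (x y : ℤ) (h : (2 * (m : ℤ)) ∣ x - y) : rr m x = rr m y := by
  unfold rr
  have : (x - (1 - (m:ℤ))) % (2 * m) = (y - (1 - (m:ℤ))) % (2 * m) := by
    apply Int.ModEq.sub_right
    exact (Int.modEq_iff_dvd.mpr (by rw [show x - y = -(y - x) by ring] at h; exact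
      (dvd_neg.mp h)))
  rw [this]

lemma sum_shift (m : ℕ) (hm : 1 ≤ m) (f : ℤ → ℝ)
    (hf : ∀ x y : ℤ, ((2 * (m : ℤ)) ∣ x - y) → f x = f y) (j : ℤ) :
    ∑ k ∈ Finset.Icc (1 - (m : ℤ)) (m : ℤ), f (j - k)
      = ∑ d ∈ Finset.Icc (1 - (m : ℤ)) (m : ℤ), f d := by
  have hinv : ∀ a ∈ Finset.Icc (1 - (m : ℤ)) (m : ℤ), rr m (j - rr m (j - a)) = a := by
    intro a ha
    have h1 : (2 * (m : ℤ)) ∣ (j - rr m (j - a)) - a := by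
      have := rr_dvd m (j - a)
      have h2 : (j - rr m (j - a)) - a = -(rr m (j - a) - (j - a)) := by ring
      rw [h2]
      exact (rr_dvd m (j - a)).neg_right
    rw [rr_congr m _ a h1, rr_eq_self m hm a ha]
  refine Finset.sum_nbij' (fun k => rr m (j - k)) (fun d => rr m (j - d)) ?_ ?_ ?_ ?_ ?_
  · intro a _; exact rr_mem m hm _
  · intro a _; exact rr_mem m hm _
  · exact hinv
  · exact hinv
  · intro a _
    exact hf _ _ (by
      have := (rr_dvd m (j - a)).neg_right
      rw [show -(rr m (j - a) - (j - a)) = (j - a) - rr m (j - a) by ring] at this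
      exact this)

lemma two_add_sq_le_exp_add_exp (x : ℝ) : 2 + x ^ 2 ≤ Real.exp x + Real.exp (-x) := by
  have h1 : Real.exp x + Real.exp (-x) = 2 * Real.cosh x := by
    rw [Real.cosh_eq]; ring
  have h2 : Real.cosh x = 2 * Real.sinh (x / 2) ^ 2 + 1 := by
    have h3 := Real.cosh_two_mul (x / 2)
    have h4 := Real.cosh_sq (x / 2)
    rw [show 2 * (x / 2) = x by ring] at h3
    rw [h3, h4]; ring
  have h5 : (x / 2) ^ 2 ≤ Real.sinh (x / 2) ^ 2 := by
    have h6 : |x / 2| ≤ |Real.sinh (x / 2)| := by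
      rw [Real.abs_sinh]
      exact Real.self_le_sinh_iff.mpr (abs_nonneg _)
    calc (x / 2) ^ 2 = |x / 2| ^ 2 := (sq_abs _).symm
    _ ≤ |Real.sinh (x / 2)| ^ 2 := by
        apply pow_le_pow_left₀ (abs_nonneg _) h6
    _ = Real.sinh (x / 2) ^ 2 := sq_abs _
  nlinarith

lemma deriv_bound (c Z s : ℝ) (h : ∀ t : ℝ, 0 < t → t * s ≤ (Real.exp (t * c) - 1) * Z) :
    s ≤ c * Z := by
  have hd : HasDerivAt (fun t : ℝ => (Real.exp (t * c) - 1) * Z) (c * Z) 0 := by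
    have h1 : HasDerivAt (fun t : ℝ => t * c) c 0 := hasDerivAt_mul_const c
    have h2 : HasDerivAt (fun t : ℝ => Real.exp (t * c)) (Real.exp ((0:ℝ) * c) * c) 0 := h1.exp
    have h3 := (h2.sub_const 1).mul_const Z
    simpa using h3
  rw [hasDerivAt_iff_tendsto_slope] at hd
  have hto : Filter.Tendsto (slope (fun t : ℝ => (Real.exp (t * c) - 1) * Z) 0)
      (nhdsWithin 0 (Set.Ioi 0)) (nhds (c * Z)) :=
    hd.mono_left (nhdsWithin_mono 0 (fun x hx => ne_of_gt hx))
  refine ge_of_tendsto hto ?_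
  filter_upwards [self_mem_nhdsWithin] with t ht
  rw [slope_def_field]
  have ht0 : (0:ℝ) < t := ht
  rw [le_div_iff₀ (by simpa using ht0)]
  have hh := h t ht0
  simp only [zero_mul, Real.exp_zero, sub_self, zero_mul, sub_zero]
  linarith [hh]

end IRB

namespace IRB

/-- linear coefficient in the expansion of `Z(δv)`. -/
noncomputable def AA (α γ ε : ℝ) (m : ℕ) (v : ℤ → ℝ) (σ : Spin m) : ℝ :=
  ∑ j : Site m, ∑ k : Site m, Kc α γ ε m (j : ℤ) (k : ℤ) *
    (((σ j : ℝ) - (σ k : ℝ)) * (v (j : ℤ) - v (k : ℤ)))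

/-- quadratic coefficient in the expansion of `Z(δv)`. -/
noncomputable def CC (α γ ε : ℝ) (m : ℕ) (v : ℤ → ℝ) : ℝ :=
  ∑ j : Site m, ∑ k : Site m, Kc α γ ε m (j : ℤ) (k : ℤ) * (v (j : ℤ) - v (k : ℤ)) ^ 2

lemma Zf_expand (α γ ε : ℝ) (m : ℕ) (v : ℤ → ℝ) (δ : ℝ) :
    Zf α γ ε m (fun x => δ * v x)
      = ∑ σ : Spin m, Real.exp ((-Hc α γ ε m σ - δ ^ 2 / 2 * CC α γ ε m v)
          + δ * AA α γ ε m v σ) := by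
  unfold Zf
  refine Finset.sum_congr rfl fun σ _ => ?_
  congr 1
  have key : (∑ j : Site m, ∑ k : Site m, Kc α γ ε m (j : ℤ) (k : ℤ) *
        ((σ j : ℝ) - (σ k : ℝ) - δ * v (j : ℤ) + δ * v (k : ℤ)) ^ 2)
      = (∑ j : Site m, ∑ k : Site m, Kc α γ ε m (j : ℤ) (k : ℤ) *
          ((σ j : ℝ) - (σ k : ℝ)) ^ 2)
        + (δ ^ 2 * CC α γ ε m v - 2 * δ * AA α γ ε m v σ) := by
    unfold AA CC
    simp only [Finset.mul_sum, ← Finset.sum_sub_distrib, ← Finset.sum_add_distrib]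
    exact Finset.sum_congr rfl fun j _ => Finset.sum_congr rfl fun k _ => by ring
  rw [key]
  unfold Hc
  ring

lemma Zf_zero (α γ ε : ℝ) (m : ℕ) :
    Zf α γ ε m (fun _ => 0) = ∑ σ : Spin m, Real.exp (-Hc α γ ε m σ) := by
  unfold Zf Hc
  refine Finset.sum_congr rfl fun σ _ => ?_
  congr 1
  rw [neg_mul]
  congr 2
  exact Finset.sum_congr rfl fun j _ => Finset.sum_congr rfl fun k _ => by ring_nf

lemma S2_le (α γ ε : ℝ) (m : ℕ)
    (hGD : ∀ h : ℤ → ℝ, Zf α γ ε m h ≤ Zf α γ ε m (fun _ => 0)) (v : ℤ → ℝ) :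
    ∑ σ : Spin m, (AA α γ ε m v σ) ^ 2 * Real.exp (-Hc α γ ε m σ)
      ≤ CC α γ ε m v * ∑ σ : Spin m, Real.exp (-Hc α γ ε m σ) := by
  set Z0 := ∑ σ : Spin m, Real.exp (-Hc α γ ε m σ) with hZ0def
  set S2 := ∑ σ : Spin m, (AA α γ ε m v σ) ^ 2 * Real.exp (-Hc α γ ε m σ) with hS2def
  set C := CC α γ ε m v with hCdef
  have main : ∀ t : ℝ, 0 < t → t * S2 ≤ (Real.exp (t * (C / 2)) - 1) * (2 * Z0) := by
    intro t ht
    set δ := Real.sqrt t with hδdef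
    have hδ2 : δ ^ 2 = t := Real.sq_sqrt ht.le
    have h1 := hGD (fun x => δ * v x)
    have h2 := hGD (fun x => (-δ) * v x)
    rw [Zf_expand, Zf_zero] at h1 h2
    rw [hδ2] at h1
    rw [neg_sq, hδ2] at h2
    have hadd := add_le_add h1 h2
    rw [← Finset.sum_add_distrib] at hadd
    have step : ∀ σ : Spin m,
        Real.exp (-(t * (C/2))) * (Real.exp (-Hc α γ ε m σ) * (2 + t * (AA α γ ε m v σ) ^ 2))
        ≤ Real.exp ((-Hc α γ ε m σ - t / 2 * C) + δ * AA α γ ε m v σ)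
          + Real.exp ((-Hc α γ ε m σ - t / 2 * C) + (-δ) * AA α γ ε m v σ) := by
      intro σ
      have hc := two_add_sq_le_exp_add_exp (δ * AA α γ ε m v σ)
      have hsq : (δ * AA α γ ε m v σ) ^ 2 = t * (AA α γ ε m v σ) ^ 2 := by
        rw [mul_pow, hδ2]
      rw [hsq] at hc
      have hfac : Real.exp ((-Hc α γ ε m σ - t / 2 * C) + δ * AA α γ ε m v σ)
            + Real.exp ((-Hc α γ ε m σ - t / 2 * C) + (-δ) * AA α γ ε m v σ)
          = Real.exp (-(t * (C/2))) * Real.exp (-Hc α γ ε m σ) *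
            (Real.exp (δ * AA α γ ε m v σ) + Real.exp (-(δ * AA α γ ε m v σ))) := by
        rw [show (-Hc α γ ε m σ - t / 2 * C) + δ * AA α γ ε m v σ
              = (-(t * (C/2)) + (-Hc α γ ε m σ)) + δ * AA α γ ε m v σ by ring,
            show (-Hc α γ ε m σ - t / 2 * C) + (-δ) * AA α γ ε m v σ
              = (-(t * (C/2)) + (-Hc α γ ε m σ)) + (-(δ * AA α γ ε m v σ)) by ring,
            ]
        simp only [Real.exp_add]
        ring
      rw [hfac]
      rw [show Real.exp (-(t * (C/2))) * (Real.exp (-Hc α γ ε m σ) * (2 + t * (AA α γ ε m v σ) ^ 2))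
            = (Real.exp (-(t * (C/2))) * Real.exp (-Hc α γ ε m σ)) * (2 + t * (AA α γ ε m v σ) ^ 2)
          from by ring]
      exact mul_le_mul_of_nonneg_left hc
        (mul_pos (Real.exp_pos _) (Real.exp_pos _)).le
    have hsum2 := Finset.sum_le_sum (s := (Finset.univ : Finset (Spin m))) (fun σ _ => step σ)
    have hle : Real.exp (-(t * (C/2))) * (2 * Z0 + t * S2) ≤ 2 * Z0 := by
      calc Real.exp (-(t * (C/2))) * (2 * Z0 + t * S2)
          = ∑ σ : Spin m, Real.exp (-(t * (C/2))) *
              (Real.exp (-Hc α γ ε m σ) * (2 + t * (AA α γ ε m v σ) ^ 2)) := by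
            rw [hZ0def, hS2def]
            rw [← Finset.mul_sum]
            congr 1
            rw [Finset.mul_sum, Finset.mul_sum, ← Finset.sum_add_distrib]
            refine Finset.sum_congr rfl fun σ _ => by ring
        _ ≤ ∑ σ : Spin m, (Real.exp ((-Hc α γ ε m σ - t / 2 * C) + δ * AA α γ ε m v σ)
              + Real.exp ((-Hc α γ ε m σ - t / 2 * C) + (-δ) * AA α γ ε m v σ)) := hsum2
        _ ≤ Z0 + Z0 := hadd
        _ = 2 * Z0 := by ring
    have hexp : Real.exp (t * (C/2)) * Real.exp (-(t * (C/2))) = 1 := by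
      rw [← Real.exp_add]; simp
    have := mul_le_mul_of_nonneg_left hle (Real.exp_pos (t * (C/2))).le
    rw [← mul_assoc, hexp, one_mul] at this
    nlinarith [this]
  have := deriv_bound (C / 2) (2 * Z0) S2 main
  linarith [this]

end IRB

namespace IRB

lemma cos_congr (m : ℕ) (p : ℝ) (K : ℤ) (hpK : p * (2 * (m : ℝ)) = (K : ℝ) * (2 * Real.pi)) :
    ∀ x y : ℤ, ((2 * (m : ℤ)) ∣ x - y) → Real.cos (p * (x : ℝ)) = Real.cos (p * (y : ℝ)) := by
  intro x y h
  obtain ⟨t, ht⟩ := h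
  have hx : (x : ℝ) = (y : ℝ) + 2 * (m : ℝ) * (t : ℝ) := by
    have : x = y + 2 * (m : ℤ) * t := by omega
    rw [this]; push_cast; ring
  rw [hx, show p * ((y : ℝ) + 2 * (m : ℝ) * (t : ℝ))
      = p * (y : ℝ) + ((K * t : ℤ) : ℝ) * (2 * Real.pi) by push_cast; linear_combination (t : ℝ) * hpK]
  exact Real.cos_add_int_mul_two_pi _ _

lemma sin_congr (m : ℕ) (p : ℝ) (K : ℤ) (hpK : p * (2 * (m : ℝ)) = (K : ℝ) * (2 * Real.pi)) :
    ∀ x y : ℤ, ((2 * (m : ℤ)) ∣ x - y) → Real.sin (p * (x : ℝ)) = Real.sin (p * (y : ℝ)) := by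
  intro x y h
  obtain ⟨t, ht⟩ := h
  have hx : (x : ℝ) = (y : ℝ) + 2 * (m : ℝ) * (t : ℝ) := by
    have : x = y + 2 * (m : ℤ) * t := by omega
    rw [this]; push_cast; ring
  rw [hx, show p * ((y : ℝ) + 2 * (m : ℝ) * (t : ℝ))
      = p * (y : ℝ) + ((K * t : ℤ) : ℝ) * (2 * Real.pi) by push_cast; linear_combination (t : ℝ) * hpK]
  exact Real.sin_add_int_mul_two_pi _ _

lemma Ep_eq (α γ ε : ℝ) (m : ℕ) (p : ℝ) :
    ∑ d ∈ Finset.Icc (1 - (m : ℤ)) (m : ℤ), KK α γ ε m d * (1 - Real.cos (p * (d : ℝ)))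
      = 2 * Ep α γ ε m p := by
  unfold Ep
  rw [← Finset.sum_coe_sort (Finset.Icc (1 - (m : ℤ)) (m : ℤ))
    (fun d => KK α γ ε m d * (1 - Real.cos (p * (d : ℝ))))]
  unfold KK
  ring

lemma sin_sum_zero (α γ ε : ℝ) (m : ℕ) (hm : 1 ≤ m) (p : ℝ) (K : ℤ)
    (hpK : p * (2 * (m : ℝ)) = (K : ℝ) * (2 * Real.pi)) :
    ∑ d ∈ Finset.Icc (1 - (m : ℤ)) (m : ℤ), KK α γ ε m d * Real.sin (p * (d : ℝ)) = 0 := by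
  have hf : ∀ x y : ℤ, ((2 * (m : ℤ)) ∣ x - y) →
      KK α γ ε m x * Real.sin (p * (x : ℝ)) = KK α γ ε m y * Real.sin (p * (y : ℝ)) := by
    intro x y h
    rw [KK_congr α γ ε m x y h, sin_congr m p K hpK x y h]
  have h := sum_shift m hm (fun d => KK α γ ε m d * Real.sin (p * (d : ℝ))) hf 0
  have h2 : ∑ k ∈ Finset.Icc (1 - (m : ℤ)) (m : ℤ),
      KK α γ ε m (0 - k) * Real.sin (p * ((0 - k : ℤ) : ℝ))
      = ∑ k ∈ Finset.Icc (1 - (m : ℤ)) (m : ℤ),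
        -(KK α γ ε m k * Real.sin (p * (k : ℝ))) := by
    refine Finset.sum_congr rfl fun k _ => ?_
    rw [zero_sub, KK_neg, show ((-k : ℤ) : ℝ) = -(k : ℝ) by push_cast; ring, mul_neg,
      Real.sin_neg]
    ring
  rw [h2, Finset.sum_neg_distrib] at h
  linarith

lemma inner_sum (α γ ε : ℝ) (m : ℕ) (hm : 1 ≤ m) (p : ℝ) (K : ℤ)
    (hpK : p * (2 * (m : ℝ)) = (K : ℝ) * (2 * Real.pi)) (v w : ℤ → ℝ)
    (hvw : ∀ j k : ℤ, v k = v j * Real.cos (p * ((j - k : ℤ) : ℝ))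
      + w j * Real.sin (p * ((j - k : ℤ) : ℝ))) (j : ℤ) :
    ∑ k ∈ Finset.Icc (1 - (m : ℤ)) (m : ℤ), Kc α γ ε m j k * (v j - v k)
      = 2 * Ep α γ ε m p * v j := by
  have hF1 : ∀ x y : ℤ, ((2 * (m : ℤ)) ∣ x - y) →
      KK α γ ε m x * (1 - Real.cos (p * (x : ℝ))) = KK α γ ε m y * (1 - Real.cos (p * (y : ℝ))) := by
    intro x y h; rw [KK_congr α γ ε m x y h, cos_congr m p K hpK x y h]
  have hF2 : ∀ x y : ℤ, ((2 * (m : ℤ)) ∣ x - y) →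
      KK α γ ε m x * Real.sin (p * (x : ℝ)) = KK α γ ε m y * Real.sin (p * (y : ℝ)) := by
    intro x y h; rw [KK_congr α γ ε m x y h, sin_congr m p K hpK x y h]
  calc ∑ k ∈ Finset.Icc (1 - (m : ℤ)) (m : ℤ), Kc α γ ε m j k * (v j - v k)
      = ∑ k ∈ Finset.Icc (1 - (m : ℤ)) (m : ℤ),
          (v j * (KK α γ ε m (j - k) * (1 - Real.cos (p * ((j - k : ℤ) : ℝ))))
            - w j * (KK α γ ε m (j - k) * Real.sin (p * ((j - k : ℤ) : ℝ)))) := by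
        refine Finset.sum_congr rfl fun k _ => ?_
        rw [Kc_eq, hvw j k]
        ring
    _ = v j * ∑ k ∈ Finset.Icc (1 - (m : ℤ)) (m : ℤ),
          KK α γ ε m (j - k) * (1 - Real.cos (p * ((j - k : ℤ) : ℝ)))
        - w j * ∑ k ∈ Finset.Icc (1 - (m : ℤ)) (m : ℤ),
          KK α γ ε m (j - k) * Real.sin (p * ((j - k : ℤ) : ℝ)) := by
        rw [Finset.sum_sub_distrib, Finset.mul_sum, Finset.mul_sum]
    _ = v j * ∑ d ∈ Finset.Icc (1 - (m : ℤ)) (m : ℤ),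
          KK α γ ε m d * (1 - Real.cos (p * (d : ℝ)))
        - w j * ∑ d ∈ Finset.Icc (1 - (m : ℤ)) (m : ℤ),
          KK α γ ε m d * Real.sin (p * (d : ℝ)) := by
        rw [sum_shift m hm (fun d => KK α γ ε m d * (1 - Real.cos (p * (d : ℝ)))) hF1 j,
          sum_shift m hm (fun d => KK α γ ε m d * Real.sin (p * (d : ℝ))) hF2 j]
    _ = 2 * Ep α γ ε m p * v j := by
        rw [Ep_eq, sin_sum_zero α γ ε m hm p K hpK]
        ring

end IRB

namespace IRB

lemma AA_eq (α γ ε : ℝ) (m : ℕ) (hm : 1 ≤ m) (p : ℝ) (K : ℤ)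
    (hpK : p * (2 * (m : ℝ)) = (K : ℝ) * (2 * Real.pi)) (v w : ℤ → ℝ)
    (hvw : ∀ j k : ℤ, v k = v j * Real.cos (p * ((j - k : ℤ) : ℝ))
      + w j * Real.sin (p * ((j - k : ℤ) : ℝ))) (σ : Spin m) :
    AA α γ ε m v σ = 4 * Ep α γ ε m p * ∑ j : Site m, (σ j : ℝ) * v (j : ℤ) := by
  unfold AA
  have hsplit : (∑ j : Site m, ∑ k : Site m, Kc α γ ε m (j : ℤ) (k : ℤ) *
        (((σ j : ℝ) - (σ k : ℝ)) * (v (j : ℤ) - v (k : ℤ))))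
      = (∑ j : Site m, ∑ k : Site m,
          (σ j : ℝ) * (Kc α γ ε m (j : ℤ) (k : ℤ) * (v (j : ℤ) - v (k : ℤ))))
        - ∑ j : Site m, ∑ k : Site m,
          (σ k : ℝ) * (Kc α γ ε m (j : ℤ) (k : ℤ) * (v (j : ℤ) - v (k : ℤ))) := by
    simp only [← Finset.sum_sub_distrib]
    exact Finset.sum_congr rfl fun j _ => Finset.sum_congr rfl fun k _ => by ring
  have hswap : (∑ j : Site m, ∑ k : Site m,
        (σ k : ℝ) * (Kc α γ ε m (j : ℤ) (k : ℤ) * (v (j : ℤ) - v (k : ℤ))))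
      = ∑ j : Site m, ∑ k : Site m,
        -((σ j : ℝ) * (Kc α γ ε m (j : ℤ) (k : ℤ) * (v (j : ℤ) - v (k : ℤ)))) := by
    rw [Finset.sum_comm]
    refine Finset.sum_congr rfl fun a _ => Finset.sum_congr rfl fun b _ => ?_
    rw [Kc_symm α γ ε m (b : ℤ) (a : ℤ)]
    ring
  rw [hsplit, hswap]
  simp only [Finset.sum_neg_distrib]
  rw [sub_neg_eq_add]
  have hinner : ∀ j : Site m, (∑ k : Site m, Kc α γ ε m (j : ℤ) (k : ℤ) *
      (v (j : ℤ) - v (k : ℤ))) = 2 * Ep α γ ε m p * v (j : ℤ) := by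
    intro j
    rw [Finset.sum_coe_sort (Finset.Icc (1 - (m : ℤ)) (m : ℤ))
      (fun k => Kc α γ ε m (j : ℤ) k * (v (j : ℤ) - v k))]
    exact inner_sum α γ ε m hm p K hpK v w hvw (j : ℤ)
  have hfinal : (∑ j : Site m, ∑ k : Site m,
      (σ j : ℝ) * (Kc α γ ε m (j : ℤ) (k : ℤ) * (v (j : ℤ) - v (k : ℤ))))
      = ∑ j : Site m, (σ j : ℝ) * (2 * Ep α γ ε m p * v (j : ℤ)) := by
    refine Finset.sum_congr rfl fun j _ => ?_
    rw [← Finset.mul_sum, hinner j]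
  rw [hfinal, Finset.mul_sum]
  rw [← Finset.sum_add_distrib]
  refine Finset.sum_congr rfl fun j _ => by ring

lemma C_sum (α γ ε : ℝ) (m : ℕ) (hm : 1 ≤ m) (p : ℝ) (K : ℤ)
    (hpK : p * (2 * (m : ℝ)) = (K : ℝ) * (2 * Real.pi)) :
    CC α γ ε m (fun x : ℤ => Real.cos (p * (x : ℝ)))
      + CC α γ ε m (fun x : ℤ => Real.sin (p * (x : ℝ)))
      = 8 * (m : ℝ) * Ep α γ ε m p := by
  have hF1 : ∀ x y : ℤ, ((2 * (m : ℤ)) ∣ x - y) →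
      KK α γ ε m x * (1 - Real.cos (p * (x : ℝ))) = KK α γ ε m y * (1 - Real.cos (p * (y : ℝ))) := by
    intro x y h; rw [KK_congr α γ ε m x y h, cos_congr m p K hpK x y h]
  have hmerge : CC α γ ε m (fun x : ℤ => Real.cos (p * (x : ℝ)))
      + CC α γ ε m (fun x : ℤ => Real.sin (p * (x : ℝ)))
      = ∑ j : Site m, ∑ k : Site m,
        (Kc α γ ε m (j : ℤ) (k : ℤ) * (Real.cos (p * ((j : ℤ) : ℝ)) - Real.cos (p * ((k : ℤ) : ℝ))) ^ 2
          + Kc α γ ε m (j : ℤ) (k : ℤ) * (Real.sin (p * ((j : ℤ) : ℝ)) - Real.sin (p * ((k : ℤ) : ℝ))) ^ 2) := by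
    unfold CC
    rw [← Finset.sum_add_distrib]
    refine Finset.sum_congr rfl fun j _ => ?_
    rw [← Finset.sum_add_distrib]
  rw [hmerge]
  have hterm : ∀ j k : ℤ, Kc α γ ε m j k * (Real.cos (p * (j : ℝ)) - Real.cos (p * (k : ℝ))) ^ 2
      + Kc α γ ε m j k * (Real.sin (p * (j : ℝ)) - Real.sin (p * (k : ℝ))) ^ 2
      = 2 * (KK α γ ε m (j - k) * (1 - Real.cos (p * ((j - k : ℤ) : ℝ)))) := by
    intro j k
    have e1 := Real.sin_sq_add_cos_sq (p * (j : ℝ))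
    have e2 := Real.sin_sq_add_cos_sq (p * (k : ℝ))
    have e3 : Real.cos (p * ((j - k : ℤ) : ℝ))
        = Real.cos (p * (j : ℝ)) * Real.cos (p * (k : ℝ))
          + Real.sin (p * (j : ℝ)) * Real.sin (p * (k : ℝ)) := by
      rw [show p * ((j - k : ℤ) : ℝ) = p * (j : ℝ) - p * (k : ℝ) by push_cast; ring,
        Real.cos_sub]
    rw [Kc_eq]
    linear_combination (KK α γ ε m (j - k)) * e1 + (KK α γ ε m (j - k)) * e2
      + 2 * (KK α γ ε m (j - k)) * e3
  calc (∑ j : Site m, ∑ k : Site m,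
        (Kc α γ ε m (j : ℤ) (k : ℤ) * (Real.cos (p * ((j : ℤ) : ℝ)) - Real.cos (p * ((k : ℤ) : ℝ))) ^ 2
          + Kc α γ ε m (j : ℤ) (k : ℤ) * (Real.sin (p * ((j : ℤ) : ℝ)) - Real.sin (p * ((k : ℤ) : ℝ))) ^ 2))
      = ∑ j : Site m, (2 : ℝ) * (2 * Ep α γ ε m p) := by
        refine Finset.sum_congr rfl fun j _ => ?_
        rw [Finset.sum_congr rfl (fun (k : Site m) _ => hterm (j : ℤ) (k : ℤ))]
        rw [Finset.sum_coe_sort (Finset.Icc (1 - (m : ℤ)) (m : ℤ))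
          (fun k => 2 * (KK α γ ε m ((j : ℤ) - k) * (1 - Real.cos (p * (((j : ℤ) - k : ℤ) : ℝ)))))]
        rw [← Finset.mul_sum]
        rw [sum_shift m hm (fun d => KK α γ ε m d * (1 - Real.cos (p * (d : ℝ)))) hF1 (j : ℤ)]
        rw [Ep_eq]
    _ = 8 * (m : ℝ) * Ep α γ ε m p := by
        rw [Finset.sum_const]
        have hcard : Fintype.card (Site m) = 2 * m := by
          rw [Fintype.card_coe, Int.card_Icc]
          have : ((m : ℤ) + 1 - (1 - m)) = 2 * m := by ring
          rw [this]
          omega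
        rw [Finset.card_univ, hcard, nsmul_eq_mul]
        push_cast
        ring

lemma Ep_pos (α γ ε : ℝ) (hα1 : 1 < α) (hε : 0 < ε) (hγε : ε ≤ γ) (m : ℕ) (hm : 1 ≤ m)
    (p : ℝ) (hp1 : 0 < p) (hp2 : p < 2 * Real.pi) : 0 < Ep α γ ε m p := by
  have hm1 : (1 : ℤ) ≤ (m : ℤ) := by exact_mod_cast hm
  unfold Ep
  rw [Finset.sum_coe_sort (Finset.Icc (1 - (m : ℤ)) (m : ℤ))
    (fun d => Kc α γ ε m d 0 * (1 - Real.cos (p * (d : ℝ))))]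
  have hpos : 0 < ∑ d ∈ Finset.Icc (1 - (m : ℤ)) (m : ℤ),
      Kc α γ ε m d 0 * (1 - Real.cos (p * (d : ℝ))) := by
    apply Finset.sum_pos'
    · intro d _
      apply mul_nonneg (Kc_nonneg α γ ε hε hγε m d 0)
      nlinarith [Real.cos_le_one (p * (d : ℝ))]
    · refine ⟨1, Finset.mem_Icc.mpr ⟨by linarith [hm1], hm1⟩, ?_⟩
      have hJ : 1 ≤ Jc α m 1 0 := by
        have hnd : ¬ ((2 * (m : ℤ)) ∣ 1 - 0) := by
          intro h
          have := Int.le_of_dvd (by norm_num) h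
          omega
        unfold Jc
        rw [if_neg hnd]
        have hsummable : Summable (fun n : ℤ =>
            |((1 : ℤ) : ℝ) - ((0 : ℤ) : ℝ) + 2 * (m : ℝ) * (n : ℝ)| ^ (-α)) := by
          have hs := Real.summable_abs_int_rpow hα1
          have hinj : Function.Injective (fun n : ℤ => 1 + 2 * (m : ℤ) * n) := by
            intro a b hab
            have h' : 1 + 2 * (m : ℤ) * a = 1 + 2 * (m : ℤ) * b := hab
            have h2 : (2 * (m : ℤ)) * a = (2 * (m : ℤ)) * b := by linarith
            exact mul_left_cancel₀ (by omega : (2 * (m : ℤ)) ≠ 0) h2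
          have hcomp := hs.comp_injective hinj
          refine hcomp.congr fun n => ?_
          simp only [Function.comp_apply]
          congr 1
          push_cast
          ring
        have hnn : ∀ n : ℤ, 0 ≤ |((1 : ℤ) : ℝ) - ((0 : ℤ) : ℝ) + 2 * (m : ℝ) * (n : ℝ)| ^ (-α) :=
          fun n => Real.rpow_nonneg (abs_nonneg _) _
        have hle := Summable.le_tsum hsummable 0 (fun n _ => hnn n)
        have h0 : |((1 : ℤ) : ℝ) - ((0 : ℤ) : ℝ) + 2 * (m : ℝ) * ((0 : ℤ) : ℝ)| ^ (-α) = 1 := by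
          norm_num
        rw [h0] at hle
        exact hle
      have hK : ε ≤ Kc α γ ε m 1 0 := by
        unfold Kc
        nlinarith [Nc_nonneg m 1 0, hJ, hε, hγε]
      have hcos : Real.cos p < 1 := by
        have hne : Real.cos p ≠ 1 := fun h => by
          have h0 := (Real.cos_eq_one_iff_of_lt_of_lt (by linarith [Real.pi_pos]) hp2).mp h
          linarith
        exact lt_of_le_of_ne (Real.cos_le_one p) hne
      have h1 : p * ((1 : ℤ) : ℝ) = p := by norm_num
      rw [h1]
      exact mul_pos (lt_of_lt_of_le hε hK) (by linarith)
  linarith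

end IRB

/-- The infrared bound: if Gaussian domination `Z(h) ≤ Z(0)` holds, then for
every nonzero `p = kπ/m ∈ Λ*` one has `g_m(p) ≤ 1/(2E(p))`. -/
theorem infrared_bound (α γ ε : ℝ) (hα1 : 1 < α) (hα2 : α < 2)
    (hε : 0 < ε) (hγε : ε ≤ γ) (m : ℕ) (hm : 1 ≤ m)
    (hGD : ∀ h : ℤ → ℝ, Zf α γ ε m h ≤ Zf α γ ε m (fun _ => 0)) :
    ∀ k : ℕ, k < 2 * m → k ≠ 0 →
      gm α γ ε m ((k : ℝ) * Real.pi / (m : ℝ)) ≤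
        1 / (2 * Ep α γ ε m ((k : ℝ) * Real.pi / (m : ℝ))) := by
  intro k hk2m hk0
  have hm1 : (1 : ℝ) ≤ (m : ℝ) := by exact_mod_cast hm
  have hmpos : (0 : ℝ) < (m : ℝ) := by linarith
  set p : ℝ := (k : ℝ) * Real.pi / (m : ℝ) with hpdef
  have hpK : p * (2 * (m : ℝ)) = ((k : ℤ) : ℝ) * (2 * Real.pi) := by
    rw [hpdef]
    push_cast
    field_simp
  have hppos : 0 < p := by
    apply div_pos (mul_pos (by exact_mod_cast Nat.pos_of_ne_zero hk0) Real.pi_pos) hmpos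
  have hplt : p < 2 * Real.pi := by
    rw [hpdef, div_lt_iff₀ hmpos]
    have hkr : (k : ℝ) < 2 * (m : ℝ) := by exact_mod_cast hk2m
    nlinarith [Real.pi_pos]
  have hE : 0 < Ep α γ ε m p := IRB.Ep_pos α γ ε hα1 hε hγε m hm p hppos hplt
  haveI : Nonempty (Spin m) := ⟨fun _ => ⟨1, by simp⟩⟩
  have hZ0 : 0 < ∑ σ : Spin m, Real.exp (-Hc α γ ε m σ) :=
    Finset.sum_pos (fun σ _ => Real.exp_pos _) Finset.univ_nonempty
  -- the two test functions and their rotation identities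
  have hvwc : ∀ j k' : ℤ, (fun x : ℤ => Real.cos (p * (x : ℝ))) k'
      = (fun x : ℤ => Real.cos (p * (x : ℝ))) j * Real.cos (p * ((j - k' : ℤ) : ℝ))
        + (fun x : ℤ => Real.sin (p * (x : ℝ))) j * Real.sin (p * ((j - k' : ℤ) : ℝ)) := by
    intro j k'
    simp only
    rw [show p * ((j - k' : ℤ) : ℝ) = p * (j : ℝ) - p * (k' : ℝ) by push_cast; ring,
      ← Real.cos_sub, show p * (j : ℝ) - (p * (j : ℝ) - p * (k' : ℝ)) = p * (k' : ℝ) by ring]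
  have hvws : ∀ j k' : ℤ, (fun x : ℤ => Real.sin (p * (x : ℝ))) k'
      = (fun x : ℤ => Real.sin (p * (x : ℝ))) j * Real.cos (p * ((j - k' : ℤ) : ℝ))
        + (fun x : ℤ => -Real.cos (p * (x : ℝ))) j * Real.sin (p * ((j - k' : ℤ) : ℝ)) := by
    intro j k'
    simp only
    rw [show p * ((j - k' : ℤ) : ℝ) = p * (j : ℝ) - p * (k' : ℝ) by push_cast; ring,
      show Real.sin (p * (j : ℝ)) * Real.cos (p * (j : ℝ) - p * (k' : ℝ))
          + -Real.cos (p * (j : ℝ)) * Real.sin (p * (j : ℝ) - p * (k' : ℝ))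
        = Real.sin (p * (j : ℝ)) * Real.cos (p * (j : ℝ) - p * (k' : ℝ))
          - Real.cos (p * (j : ℝ)) * Real.sin (p * (j : ℝ) - p * (k' : ℝ)) by ring,
      ← Real.sin_sub, show p * (j : ℝ) - (p * (j : ℝ) - p * (k' : ℝ)) = p * (k' : ℝ) by ring]
  have hAc := IRB.AA_eq α γ ε m hm p (k : ℤ) hpK (fun x : ℤ => Real.cos (p * (x : ℝ)))
    (fun x : ℤ => Real.sin (p * (x : ℝ))) hvwc
  have hAs := IRB.AA_eq α γ ε m hm p (k : ℤ) hpK (fun x : ℤ => Real.sin (p * (x : ℝ)))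
    (fun x : ℤ => -Real.cos (p * (x : ℝ))) hvws
  have hCsum := IRB.C_sum α γ ε m hm p (k : ℤ) hpK
  have hSc := IRB.S2_le α γ ε m hGD (fun x : ℤ => Real.cos (p * (x : ℝ)))
  have hSs := IRB.S2_le α γ ε m hGD (fun x : ℤ => Real.sin (p * (x : ℝ)))
  -- correlation identity
  have hcorr : ∀ j k' : Site m, (∑ σ : Spin m, (σ j : ℝ) * (σ k' : ℝ) * Real.exp (-Hc α γ ε m σ))
      = corr α γ ε m j k' * ∑ σ : Spin m, Real.exp (-Hc α γ ε m σ) := by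
    intro j k'
    unfold corr
    rw [div_mul_cancel₀ _ (ne_of_gt hZ0)]
  -- square expansion
  have hX : ∀ σ : Spin m,
      (∑ j : Site m, (σ j : ℝ) * Real.cos (p * ((j : ℤ) : ℝ))) ^ 2
        + (∑ j : Site m, (σ j : ℝ) * Real.sin (p * ((j : ℤ) : ℝ))) ^ 2
      = ∑ j : Site m, ∑ k' : Site m,
          (σ j : ℝ) * (σ k' : ℝ) * Real.cos (p * (((j : ℤ) - (k' : ℤ) : ℤ) : ℝ)) := by
    intro σ
    rw [sq, sq, Finset.sum_mul_sum, Finset.sum_mul_sum, ← Finset.sum_add_distrib]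
    refine Finset.sum_congr rfl fun j _ => ?_
    rw [← Finset.sum_add_distrib]
    refine Finset.sum_congr rfl fun k' _ => ?_
    have e3 : Real.cos (p * (((j : ℤ) - (k' : ℤ) : ℤ) : ℝ))
        = Real.cos (p * ((j : ℤ) : ℝ)) * Real.cos (p * ((k' : ℤ) : ℝ))
          + Real.sin (p * ((j : ℤ) : ℝ)) * Real.sin (p * ((k' : ℤ) : ℝ)) := by
      rw [show p * (((j : ℤ) - (k' : ℤ) : ℤ) : ℝ) = p * ((j : ℤ) : ℝ) - p * ((k' : ℤ) : ℝ)
        by push_cast; ring, Real.cos_sub]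
    linear_combination (-((σ j : ℝ) * (σ k' : ℝ))) * e3
  -- combine the two Gaussian-domination bounds
  have h1 : (∑ σ : Spin m,
      ((IRB.AA α γ ε m (fun x : ℤ => Real.cos (p * (x : ℝ))) σ) ^ 2
        + (IRB.AA α γ ε m (fun x : ℤ => Real.sin (p * (x : ℝ))) σ) ^ 2) * Real.exp (-Hc α γ ε m σ))
      ≤ (8 * (m : ℝ) * Ep α γ ε m p) * ∑ σ : Spin m, Real.exp (-Hc α γ ε m σ) := by
    have hadd := add_le_add hSc hSs
    rw [← Finset.sum_add_distrib] at hadd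
    calc (∑ σ : Spin m,
        ((IRB.AA α γ ε m (fun x : ℤ => Real.cos (p * (x : ℝ))) σ) ^ 2
          + (IRB.AA α γ ε m (fun x : ℤ => Real.sin (p * (x : ℝ))) σ) ^ 2) * Real.exp (-Hc α γ ε m σ))
        = ∑ σ : Spin m,
          ((IRB.AA α γ ε m (fun x : ℤ => Real.cos (p * (x : ℝ))) σ) ^ 2 * Real.exp (-Hc α γ ε m σ)
            + (IRB.AA α γ ε m (fun x : ℤ => Real.sin (p * (x : ℝ))) σ) ^ 2 * Real.exp (-Hc α γ ε m σ)) := by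
          exact Finset.sum_congr rfl fun σ _ => by ring
      _ ≤ IRB.CC α γ ε m (fun x : ℤ => Real.cos (p * (x : ℝ))) * (∑ σ : Spin m, Real.exp (-Hc α γ ε m σ))
          + IRB.CC α γ ε m (fun x : ℤ => Real.sin (p * (x : ℝ))) * ∑ σ : Spin m, Real.exp (-Hc α γ ε m σ) := hadd
      _ = (IRB.CC α γ ε m (fun x : ℤ => Real.cos (p * (x : ℝ)))
            + IRB.CC α γ ε m (fun x : ℤ => Real.sin (p * (x : ℝ)))) * ∑ σ : Spin m, Real.exp (-Hc α γ ε m σ) := by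
          ring
      _ = (8 * (m : ℝ) * Ep α γ ε m p) * ∑ σ : Spin m, Real.exp (-Hc α γ ε m σ) := by
          rw [hCsum]
  -- rewrite the left side of h1 via the spin-wave identities
  have h2 : (∑ σ : Spin m,
      ((IRB.AA α γ ε m (fun x : ℤ => Real.cos (p * (x : ℝ))) σ) ^ 2
        + (IRB.AA α γ ε m (fun x : ℤ => Real.sin (p * (x : ℝ))) σ) ^ 2) * Real.exp (-Hc α γ ε m σ))
      = 16 * (Ep α γ ε m p) ^ 2 * ∑ σ : Spin m,
          (∑ j : Site m, ∑ k' : Site m,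
            (σ j : ℝ) * (σ k' : ℝ) * Real.cos (p * (((j : ℤ) - (k' : ℤ) : ℤ) : ℝ)))
            * Real.exp (-Hc α γ ε m σ) := by
    rw [Finset.mul_sum]
    refine Finset.sum_congr rfl fun σ _ => ?_
    rw [hAc σ, hAs σ, ← hX σ]
    ring
  -- exchange the sums and identify the correlation function
  have h3 : (∑ σ : Spin m,
      (∑ j : Site m, ∑ k' : Site m,
        (σ j : ℝ) * (σ k' : ℝ) * Real.cos (p * (((j : ℤ) - (k' : ℤ) : ℤ) : ℝ)))
        * Real.exp (-Hc α γ ε m σ))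
      = (2 * (m : ℝ) * gm α γ ε m p) * ∑ σ : Spin m, Real.exp (-Hc α γ ε m σ) := by
    have ha : (∑ σ : Spin m,
        (∑ j : Site m, ∑ k' : Site m,
          (σ j : ℝ) * (σ k' : ℝ) * Real.cos (p * (((j : ℤ) - (k' : ℤ) : ℤ) : ℝ)))
          * Real.exp (-Hc α γ ε m σ))
        = ∑ j : Site m, ∑ k' : Site m, Real.cos (p * (((j : ℤ) - (k' : ℤ) : ℤ) : ℝ))
            * ∑ σ : Spin m, (σ j : ℝ) * (σ k' : ℝ) * Real.exp (-Hc α γ ε m σ) := by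
      simp only [Finset.sum_mul]
      rw [Finset.sum_comm]
      refine Finset.sum_congr rfl fun j _ => ?_
      rw [Finset.sum_comm]
      refine Finset.sum_congr rfl fun k' _ => ?_
      rw [Finset.mul_sum]
      exact Finset.sum_congr rfl fun σ _ => by ring
    rw [ha]
    simp only [hcorr]
    have hb : (∑ j : Site m, ∑ k' : Site m, Real.cos (p * (((j : ℤ) - (k' : ℤ) : ℤ) : ℝ))
        * (corr α γ ε m j k' * ∑ σ : Spin m, Real.exp (-Hc α γ ε m σ)))
        = (∑ j : Site m, ∑ k' : Site m, Real.cos (p * (((j : ℤ) - (k' : ℤ) : ℤ) : ℝ))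
            * corr α γ ε m j k') * ∑ σ : Spin m, Real.exp (-Hc α γ ε m σ) := by
      simp only [Finset.sum_mul]
      exact Finset.sum_congr rfl fun j _ => Finset.sum_congr rfl fun k' _ => by ring
    rw [hb]
    have hg : (∑ j : Site m, ∑ k' : Site m, Real.cos (p * (((j : ℤ) - (k' : ℤ) : ℤ) : ℝ))
        * corr α γ ε m j k') = 2 * (m : ℝ) * gm α γ ε m p := by
      unfold gm
      field_simp
    rw [hg]
  -- final arithmetic
  rw [h2, h3] at h1
  have hZne := ne_of_gt hZ0
  have hbig' : (16 * (Ep α γ ε m p) ^ 2 * (2 * (m : ℝ) * gm α γ ε m p))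
      * (∑ σ : Spin m, Real.exp (-Hc α γ ε m σ))
      ≤ (8 * (m : ℝ) * Ep α γ ε m p) * ∑ σ : Spin m, Real.exp (-Hc α γ ε m σ) := by
    calc (16 * (Ep α γ ε m p) ^ 2 * (2 * (m : ℝ) * gm α γ ε m p))
        * (∑ σ : Spin m, Real.exp (-Hc α γ ε m σ))
        = 16 * (Ep α γ ε m p) ^ 2 * ((2 * (m : ℝ) * gm α γ ε m p)
            * ∑ σ : Spin m, Real.exp (-Hc α γ ε m σ)) := by ring
      _ ≤ _ := h1
  have hfin := le_of_mul_le_mul_right hbig' hZ0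
  have h2E : (0 : ℝ) < 2 * Ep α γ ε m p := by linarith
  rw [le_div_iff₀ h2E]
  have h16 : (0 : ℝ) < 16 * (m : ℝ) * Ep α γ ε m p := by positivity
  have hkey : (16 * (m : ℝ) * Ep α γ ε m p) * (gm α γ ε m p * (2 * Ep α γ ε m p))
      ≤ (16 * (m : ℝ) * Ep α γ ε m p) * (1 / 2) := by
    calc (16 * (m : ℝ) * Ep α γ ε m p) * (gm α γ ε m p * (2 * Ep α γ ε m p))
        = 16 * (Ep α γ ε m p) ^ 2 * (2 * (m : ℝ) * gm α γ ε m p) := by ring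
      _ ≤ 8 * (m : ℝ) * Ep α γ ε m p := hfin
      _ = (16 * (m : ℝ) * Ep α γ ε m p) * (1 / 2) := by ring
  have := le_of_mul_le_mul_left hkey h16
  linarith
end

section
/- Fix 1 < α < 2. For an integer m ≥ 1 let Λ = {1−m, …, m} ⊆ ℤ (a periodic lattice of 2m sites, indices taken mod 2m), let J_{j,k} = ∑_{n∈ℤ} |j − k + 2mn|^{−α} for j ≢ k (mod 2m) with J_{j,j} = 0, let Λ* = {kπ/m : k = 0,1,…,2m−1}, and for p ∈ Λ* set R_m(p) = ∑_{n∈Λ, n≠0} J_{0,n}·(1 − cos(pn)). Then sup_{m ≥ 1} (1/(2m))·∑_{p ∈ Λ*, p ≠ 0} 1/R_m(p) < ∞. -/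
/-- The periodic lattice `Λ = {1−m, …, m}` of `2m` sites. -/
noncomputable abbrev Lam (m : ℕ) : Finset ℤ := Finset.Icc (1 - (m : ℤ)) (m : ℤ)

/-- `R_m(p) = ∑_{n∈Λ, n≠0} J_{0,n}·(1 − cos(pn))`. -/
noncomputable def Rm (α : ℝ) (m : ℕ) (p : ℝ) : ℝ :=
  ∑ n ∈ (Lam m).erase 0, Jc α m 0 n * (1 - Real.cos (p * (n : ℝ)))

open Real Finset

lemma summable_aux (α : ℝ) (hα : 1 < α) (c d : ℤ) (hd : d ≠ 0) :
    Summable (fun n : ℤ => |(c : ℝ) + (d : ℝ) * (n : ℝ)| ^ (-α)) := by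
  have h := Real.summable_abs_int_rpow hα
  have hi : Function.Injective (fun n : ℤ => c + d * n) := by
    intro a b hab
    simp only [add_right_inj] at hab
    exact mul_left_cancel₀ (by exact_mod_cast hd) hab
  have := h.comp_injective hi
  convert this using 1
  · rfl
  funext n
  simp only [Function.comp_apply]
  push_cast
  ring_nf

lemma Jc_ge (α : ℝ) (hα : 1 < α) (m : ℕ) (hm : 1 ≤ m) (n : ℤ)
    (h1 : 1 ≤ n) (h2 : n ≤ (m : ℤ)) : ((n : ℝ)) ^ (-α) ≤ Jc α m 0 n := by
  have hndvd : ¬ (2 * (m : ℤ)) ∣ (0 - n) := by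
    intro hdvd
    rw [zero_sub, Int.dvd_neg] at hdvd
    have := Int.le_of_dvd (by omega) hdvd
    omega
  rw [Jc, if_neg hndvd]
  have hs : Summable (fun k : ℤ => |((0:ℤ) : ℝ) - (n : ℝ) + 2 * (m : ℝ) * (k : ℝ)| ^ (-α)) := by
    have := summable_aux α hα (-n) (2 * m) (by omega)
    convert this using 2 with k
    push_cast
    ring_nf
  have hle := Summable.le_tsum hs 0 (fun b _ => by positivity)
  refine le_trans (le_of_eq ?_) hle
  congr 1
  push_cast
  rw [show (0:ℝ) - (n:ℝ) + 2*(m:ℝ)*0 = -(n:ℝ) from by ring, abs_neg,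
    abs_of_nonneg (by exact_mod_cast (by omega : (0:ℤ) ≤ n))]

lemma one_sub_cos_ge (x : ℝ) (h0 : 0 ≤ x) (h : x ≤ Real.pi) :
    2 / Real.pi ^ 2 * x ^ 2 ≤ 1 - Real.cos x := by
  have := Real.cos_le_one_sub_mul_cos_sq (x := x) (by rwa [abs_of_nonneg h0])
  linarith

lemma sum_sq_ge (N : ℕ) : (N : ℝ) ^ 3 / 3 ≤ ∑ n ∈ Finset.Icc 1 N, (n : ℝ) ^ 2 := by
  induction N with
  | zero => simp
  | succ N ih =>
    rw [Finset.sum_Icc_succ_top (by omega)]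
    push_cast
    nlinarith [ih, (show (0:ℝ) ≤ N by positivity)]

lemma sum_rpow_le (s : ℝ) (hs0 : 0 < s) (hs1 : s ≤ 1) (M : ℕ) :
    ∑ k ∈ Finset.Icc 1 M, (k : ℝ) ^ (s - 1) ≤ (M : ℝ) ^ s / s := by
  have key : ∀ k ∈ Finset.Icc 1 M, (k : ℝ) ^ (s - 1)
      ≤ ((k : ℝ) ^ s - ((k : ℝ) - 1) ^ s) / s := by
    intro k hk
    rw [Finset.mem_Icc] at hk
    have hk1 : (1 : ℝ) ≤ (k : ℝ) := by exact_mod_cast hk.1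
    have hkpos : (0 : ℝ) < (k : ℝ) := by linarith
    have hb : (-1 : ℝ) ≤ -1 / (k : ℝ) := by
      rw [neg_div]
      simp only [neg_le_neg_iff]
      rw [div_le_one hkpos]
      exact hk1
    have hbern := rpow_one_add_le_one_add_mul_self hb hs0.le hs1
    have h1 : (1 : ℝ) + (-1) / (k : ℝ) = ((k : ℝ) - 1) / (k : ℝ) := by
      field_simp
      ring
    rw [h1] at hbern
    have hdiv : (((k : ℝ) - 1) / (k : ℝ)) ^ s = ((k : ℝ) - 1) ^ s / (k : ℝ) ^ s := by
      rw [Real.div_rpow (by linarith) hkpos.le]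
    rw [hdiv] at hbern
    have hks : (0 : ℝ) < (k : ℝ) ^ s := Real.rpow_pos_of_pos hkpos s
    rw [div_le_iff₀ hks] at hbern
    have hsub : (k : ℝ) ^ (s - 1) = (k : ℝ) ^ s / (k : ℝ) := by
      rw [Real.rpow_sub hkpos, Real.rpow_one]
    rw [le_div_iff₀ hs0, hsub]
    have : (1 + s * (-1 / (k : ℝ))) * (k : ℝ) ^ s
        = (k : ℝ) ^ s - s * ((k : ℝ) ^ s / (k : ℝ)) := by
      field_simp
      ring
    nlinarith [hbern]
  calc ∑ k ∈ Finset.Icc 1 M, (k : ℝ) ^ (s - 1)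
      ≤ ∑ k ∈ Finset.Icc 1 M, ((k : ℝ) ^ s - ((k : ℝ) - 1) ^ s) / s :=
        Finset.sum_le_sum key
    _ = (∑ k ∈ Finset.Icc 1 M, ((k : ℝ) ^ s - ((k : ℝ) - 1) ^ s)) / s :=
        (Finset.sum_div _ _ _).symm
    _ = (M : ℝ) ^ s / s := by
        congr 1
        rw [show Finset.Icc 1 M = Finset.Ico 1 (M + 1) by rfl]
        rw [Finset.sum_Ico_eq_sum_range]
        have : ∀ i ∈ Finset.range (M + 1 - 1),
            (((1 + i : ℕ) : ℝ) ^ s - (((1 + i : ℕ) : ℝ) - 1) ^ s)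
            = ((fun j : ℕ => ((j : ℝ)) ^ s) (i + 1) - (fun j : ℕ => ((j : ℝ)) ^ s) i) := by
          intro i _
          push_cast
          ring_nf
        rw [Finset.sum_congr rfl this, Finset.sum_range_sub (fun j : ℕ => ((j : ℝ)) ^ s)]
        simp [Real.zero_rpow hs0.ne']

lemma Rm_reflect (α : ℝ) (m k : ℕ) (hm : 1 ≤ m) (hk : k ≤ 2 * m) :
    Rm α m ((k : ℝ) * Real.pi / m) = Rm α m (((2 * m - k : ℕ) : ℝ) * Real.pi / m) := by
  unfold Rm
  refine Finset.sum_congr rfl fun n _ => ?_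
  congr 2
  have hmne : (m : ℝ) ≠ 0 := by positivity
  have hcast : ((2 * m - k : ℕ) : ℝ) = 2 * (m : ℝ) - (k : ℝ) := by
    push_cast [hk]
    ring
  rw [hcast]
  have harg : (2 * (m : ℝ) - (k : ℝ)) * Real.pi / m * (n : ℝ)
      = (n : ℝ) * (2 * Real.pi) - ((k : ℝ) * Real.pi / m * (n : ℝ)) := by
    field_simp
  rw [harg, Real.cos_int_mul_two_pi_sub]

lemma Rm_lower (α : ℝ) (hα1 : 1 < α) (hα2 : α < 2) (m k : ℕ)
    (hm : 1 ≤ m) (hk1 : 1 ≤ k) (hk2 : k ≤ m) :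
    (1 / 12) * (((k : ℝ) / m)) ^ (α - 1) ≤ Rm α m ((k : ℝ) * Real.pi / m) := by
  have hmpos : (0 : ℝ) < m := by exact_mod_cast hm
  have hkpos : (0 : ℝ) < k := by exact_mod_cast hk1
  have hπ := Real.pi_pos
  set q : ℝ := (k : ℝ) * Real.pi / m with hq
  have hqpos : 0 < q := by positivity
  set N : ℕ := m / k with hNdef
  have hN1 : 1 ≤ N := (Nat.one_le_div_iff (by omega)).mpr hk2
  have hNm : N ≤ m := Nat.div_le_self m k
  have hkN : N * k ≤ m := Nat.div_mul_le_self m k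
  have hmlt : m < N * k + k := Nat.lt_div_mul_add (by omega)
  have hNpos : (0:ℝ) < N := by exact_mod_cast hN1
  have hNle : (N:ℝ) ≤ (m:ℝ)/(k:ℝ) := by
    rw [le_div_iff₀ hkpos]; exact_mod_cast hkN
  have hNge : (m:ℝ)/(2*(k:ℝ)) ≤ (N:ℝ) := by
    rw [div_le_iff₀ (by positivity)]
    have h1 : (m:ℝ) < N*k + k := by exact_mod_cast hmlt
    have h2 : (k:ℝ) ≤ (N:ℝ)*(k:ℝ) := le_mul_of_one_le_left hkpos.le (by exact_mod_cast hN1)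
    nlinarith
  set S : Finset ℤ :=
    (Finset.Icc 1 N).map ⟨(fun j : ℕ => (j:ℤ)), fun a b h => by simpa using h⟩ with hS
  have hsub : S ⊆ (Lam m).erase 0 := by
    intro x hx
    simp only [hS, Finset.mem_map, Finset.mem_Icc, Function.Embedding.coeFn_mk] at hx
    obtain ⟨j, ⟨hj1, hj2⟩, rfl⟩ := hx
    dsimp only [DFunLike.coe]
    refine Finset.mem_erase.mpr ⟨by exact_mod_cast Nat.one_le_iff_ne_zero.mp hj1, ?_⟩
    refine Finset.mem_Icc.mpr ⟨by omega, by exact_mod_cast le_trans hj2 hNm⟩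
  have hnonneg : ∀ n ∈ (Lam m).erase 0, 0 ≤ Jc α m 0 n * (1 - Real.cos (q * n)) := by
    intro n _
    apply mul_nonneg
    · unfold Jc
      split
      · exact le_refl 0
      · exact tsum_nonneg fun _ => by positivity
    · linarith [Real.cos_le_one (q * n)]
  have hstep1 : ∑ n ∈ S, Jc α m 0 n * (1 - Real.cos (q * n)) ≤ Rm α m q :=
    Finset.sum_le_sum_of_subset_of_nonneg hsub (fun n hn _ => hnonneg n hn)
  rw [Finset.sum_map] at hstep1
  dsimp only [DFunLike.coe] at hstep1
  have hkey : ∀ j ∈ Finset.Icc 1 N,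
      (N:ℝ)^(-α) * (2/Real.pi^2) * q^2 * (j:ℝ)^2
        ≤ Jc α m 0 (j:ℤ) * (1 - Real.cos (q * ((j:ℤ):ℝ))) := by
    intro j hj
    rw [Finset.mem_Icc] at hj
    have hj1 : (1:ℝ) ≤ (j:ℝ) := by exact_mod_cast hj.1
    have hjN : (j:ℝ) ≤ (N:ℝ) := by exact_mod_cast hj.2
    have hJ1 : ((j:ℝ))^(-α) ≤ Jc α m 0 (j:ℤ) := by
      have := Jc_ge α hα1 m hm (j:ℤ) (by exact_mod_cast hj.1)
        (by exact_mod_cast le_trans hj.2 hNm)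
      simpa using this
    have hJ2 : (N:ℝ)^(-α) ≤ ((j:ℝ))^(-α) :=
      Real.rpow_le_rpow_of_nonpos (by linarith) hjN (by linarith)
    have hqj : q * (j:ℝ) ≤ Real.pi := by
      rw [hq]
      rw [div_mul_eq_mul_div, div_le_iff₀ hmpos]
      have : (j:ℝ) * (k:ℝ) ≤ (m:ℝ) := by
        have : j * k ≤ N * k := Nat.mul_le_mul_right k hj.2
        exact_mod_cast le_trans this hkN
      nlinarith
    have hcos : 2/Real.pi^2 * (q*(j:ℝ))^2 ≤ 1 - Real.cos (q * (j:ℝ)) :=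
      one_sub_cos_ge _ (by positivity) hqj
    have hcos_nonneg : (0:ℝ) ≤ 2/Real.pi^2 * (q*(j:ℝ))^2 := by positivity
    have hb_nonneg : (0:ℝ) ≤ Jc α m 0 (j:ℤ) :=
      le_trans (Real.rpow_nonneg (by linarith) (-α)) hJ1
    have hmul := mul_le_mul (hJ2.trans hJ1) hcos hcos_nonneg hb_nonneg
    have hcast : ((j:ℤ):ℝ) = (j:ℝ) := by push_cast; rfl
    rw [hcast]
    refine le_trans (le_of_eq (by ring)) hmul
  set coeff : ℝ := (N:ℝ)^(-α) * (2/Real.pi^2) * q^2 with hcoeff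
  have hcoeff_nonneg : 0 ≤ coeff := by positivity
  have hchain : coeff * ((N:ℝ)^3/3) ≤ Rm α m ((k : ℝ) * Real.pi / m) := by
    calc coeff * ((N:ℝ)^3/3)
        ≤ coeff * ∑ j ∈ Finset.Icc 1 N, (j:ℝ)^2 := by
          have := sum_sq_ge N
          apply mul_le_mul_of_nonneg_left _ hcoeff_nonneg
          linarith [sum_sq_ge N]
      _ = ∑ j ∈ Finset.Icc 1 N, coeff * (j:ℝ)^2 := Finset.mul_sum _ _ _
      _ ≤ ∑ j ∈ Finset.Icc 1 N, Jc α m 0 (j:ℤ) * (1 - Real.cos (q * ((j:ℤ):ℝ))) := by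
          refine Finset.sum_le_sum fun j hj => ?_
          have := hkey j hj
          calc coeff * (j:ℝ)^2 = (N:ℝ)^(-α) * (2/Real.pi^2) * q^2 * (j:ℝ)^2 := by
                rw [hcoeff]
            _ ≤ _ := hkey j hj
      _ ≤ Rm α m q := by
          refine le_trans (le_of_eq ?_) hstep1
          refine Finset.sum_congr rfl fun j _ => ?_
          push_cast
          ring_nf
  have hA : ((k:ℝ)/m)^α ≤ (N:ℝ)^(-α) := by
    have h1 : ((m:ℝ)/k)^(-α) ≤ (N:ℝ)^(-α) :=
      Real.rpow_le_rpow_of_nonpos hNpos hNle (by linarith)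
    have h2 : ((m:ℝ)/k)^(-α) = ((k:ℝ)/m)^α := by
      rw [Real.rpow_neg (by positivity), ← Real.inv_rpow (by positivity), inv_div]
    linarith [h1, h2.ge, h2.le]
  have hB : ((m:ℝ)/(2*k))^3 ≤ (N:ℝ)^3 := pow_le_pow_left₀ (by positivity) hNge 3
  have hq2 : (2/Real.pi^2) * q^2 = 2*(k:ℝ)^2/(m:ℝ)^2 := by
    rw [hq]; field_simp
  have hrw : ((k:ℝ)/m)^(α-1) = ((k:ℝ)/m)^α * ((m:ℝ)/k) := by
    rw [Real.rpow_sub (by positivity), Real.rpow_one, div_div_eq_mul_div]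
    ring
  have hfinal : (1/12) * ((k:ℝ)/m)^(α-1) ≤ coeff * ((N:ℝ)^3/3) := by
    have hPnn : (0:ℝ) ≤ ((k:ℝ)/m)^α := Real.rpow_nonneg (by positivity) α
    calc (1/12) * ((k:ℝ)/m)^(α-1)
        = ((k:ℝ)/m)^α * ((m:ℝ)/(2*k))^3 * (2*(k:ℝ)^2/(m:ℝ)^2) / 3 := by
          rw [hrw]; field_simp; ring
      _ ≤ (N:ℝ)^(-α) * (N:ℝ)^3 * (2*(k:ℝ)^2/(m:ℝ)^2) / 3 := by
          gcongr
      _ = coeff * ((N:ℝ)^3/3) := by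
          rw [hcoeff, ← hq2]; ring
  exact le_trans hfinal hchain

lemma inv_Rm_le (α : ℝ) (hα1 : 1 < α) (hα2 : α < 2) (m k : ℕ)
    (hm : 1 ≤ m) (h1 : 1 ≤ k) (h2 : k ≤ m) :
    (Rm α m ((k : ℝ) * Real.pi / m))⁻¹ ≤ 12 * (m:ℝ)^(α-1) * (k:ℝ)^(1-α) := by
  have hmpos : (0:ℝ) < m := by exact_mod_cast hm
  have hkpos : (0:ℝ) < k := by exact_mod_cast h1
  have hlow := Rm_lower α hα1 hα2 m k hm h1 h2
  have hcpos : (0:ℝ) < (1/12) * (((k:ℝ)/m)) ^ (α-1) := by positivity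
  have hRpos : 0 < Rm α m ((k : ℝ) * Real.pi / m) := lt_of_lt_of_le hcpos hlow
  have hinv : (Rm α m ((k : ℝ) * Real.pi / m))⁻¹ ≤ ((1/12) * (((k:ℝ)/m)) ^ (α-1))⁻¹ := by
    gcongr
  refine le_trans hinv (le_of_eq ?_)
  have e2 : ((((k:ℝ)/m))^(α-1))⁻¹ = (m:ℝ)^(α-1) * (k:ℝ)^(1-α) := by
    rw [← Real.rpow_neg (by positivity), show -(α-1) = 1-α by ring,
      Real.div_rpow (by positivity) (by positivity), div_eq_mul_inv,
      ← Real.rpow_neg (by positivity), show -(1-α) = α-1 by ring]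
    ring
  rw [mul_inv, e2]
  ring

/-- Uniform boundedness of the lattice sums of `1/R_m(p)` over the nonzero
modes `p = kπ/m ∈ Λ*`, for `1 < α < 2`:
`sup_{m≥1} (1/(2m)) ∑_{p∈Λ*, p≠0} 1/R_m(p) < ∞`. -/
theorem sup_inverse_Rm_sum_finite (α : ℝ) (hα1 : 1 < α) (hα2 : α < 2) :
    ∃ B : ℝ, ∀ m : ℕ, 1 ≤ m →
      (1 / (2 * (m : ℝ))) *
          ∑ k ∈ Finset.Ico 1 (2 * m), (Rm α m ((k : ℝ) * Real.pi / (m : ℝ)))⁻¹ ≤ B := by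
  set s : ℝ := 2 - α with hsdef
  have hs0 : 0 < s := by rw [hsdef]; linarith
  have hs1 : s ≤ 1 := by rw [hsdef]; linarith
  refine ⟨48 / s, fun m hm => ?_⟩
  have hmpos : (0:ℝ) < m := by exact_mod_cast hm
  have hterm : ∀ k ∈ Finset.Ico 1 (2*m),
      (Rm α m ((k:ℝ) * Real.pi / m))⁻¹
        ≤ 12 * (m:ℝ)^(α-1) * ((k:ℝ)^(1-α) + ((2*m-k:ℕ):ℝ)^(1-α)) := by
    intro k hk
    rw [Finset.mem_Ico] at hk
    obtain ⟨hk1, hk2⟩ := hk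
    rw [mul_add]
    by_cases hkm : k ≤ m
    · have := inv_Rm_le α hα1 hα2 m k hm hk1 hkm
      have h0 : (0:ℝ) ≤ 12 * (m:ℝ)^(α-1) * ((2*m-k:ℕ):ℝ)^(1-α) := by positivity
      linarith
    · push_neg at hkm
      have hrefl := Rm_reflect α m k hm (by omega)
      have h1' : 1 ≤ 2*m - k := by omega
      have h2' : 2*m - k ≤ m := by omega
      have := inv_Rm_le α hα1 hα2 m (2*m-k) hm h1' h2'
      rw [hrefl]
      have h0 : (0:ℝ) ≤ 12 * (m:ℝ)^(α-1) * (k:ℝ)^(1-α) := by positivity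
      linarith
  have hA : ∑ k ∈ Finset.Ico 1 (2*m), (k:ℝ)^(1-α) ≤ (2*(m:ℝ))^s / s := by
    have hsub : Finset.Ico 1 (2*m) ⊆ Finset.Icc 1 (2*m) := Finset.Ico_subset_Icc_self
    have h2 := sum_rpow_le s hs0 hs1 (2*m)
    calc ∑ k ∈ Finset.Ico 1 (2*m), (k:ℝ)^(1-α)
        = ∑ k ∈ Finset.Ico 1 (2*m), (k:ℝ)^(s-1) := by
          refine Finset.sum_congr rfl fun k _ => ?_
          congr 1
          rw [hsdef]; ring
      _ ≤ ∑ k ∈ Finset.Icc 1 (2*m), (k:ℝ)^(s-1) := Finset.sum_le_sum_of_subset_of_nonneg hsub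
          (fun k _ _ => Real.rpow_nonneg (by positivity) (s-1))
      _ ≤ ((2*m : ℕ):ℝ)^s / s := h2
      _ = (2*(m:ℝ))^s / s := by push_cast; ring_nf
  have hBA : ∑ k ∈ Finset.Ico 1 (2*m), ((2*m-k:ℕ):ℝ)^(1-α)
      = ∑ k ∈ Finset.Ico 1 (2*m), (k:ℝ)^(1-α) := by
    refine Finset.sum_nbij' (i := fun k => 2*m - k) (j := fun k => 2*m - k)
      ?_ ?_ ?_ ?_ ?_
    · intro a ha; simp only [Finset.mem_Ico] at ha ⊢; omega
    · intro a ha; simp only [Finset.mem_Ico] at ha ⊢; omega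
    · intro a ha; simp only [Finset.mem_Ico] at ha; show 2*m - (2*m - a) = a; omega
    · intro a ha; simp only [Finset.mem_Ico] at ha; show 2*m - (2*m - a) = a; omega
    · intro a ha; rfl
  have hsum : ∑ k ∈ Finset.Ico 1 (2*m), (Rm α m ((k:ℝ) * Real.pi / m))⁻¹
      ≤ 96 * (m:ℝ) / s := by
    calc ∑ k ∈ Finset.Ico 1 (2*m), (Rm α m ((k:ℝ) * Real.pi / m))⁻¹
        ≤ ∑ k ∈ Finset.Ico 1 (2*m),
            12 * (m:ℝ)^(α-1) * ((k:ℝ)^(1-α) + ((2*m-k:ℕ):ℝ)^(1-α)) :=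
          Finset.sum_le_sum hterm
      _ = 12 * (m:ℝ)^(α-1) * ((∑ k ∈ Finset.Ico 1 (2*m), (k:ℝ)^(1-α))
            + ∑ k ∈ Finset.Ico 1 (2*m), ((2*m-k:ℕ):ℝ)^(1-α)) := by
          rw [← Finset.mul_sum, Finset.sum_add_distrib]
      _ ≤ 12 * (m:ℝ)^(α-1) * ((2*(m:ℝ))^s / s + (2*(m:ℝ))^s / s) := by
          refine mul_le_mul_of_nonneg_left ?_ (by positivity)
          have hB' : ∑ k ∈ Finset.Ico 1 (2*m), ((2*m-k:ℕ):ℝ)^(1-α) ≤ (2*(m:ℝ))^s / s := by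
            rw [hBA]; exact hA
          exact add_le_add hA hB'
      _ = 24 * (m:ℝ)^(α-1) * ((2*(m:ℝ))^s / s) := by ring
      _ ≤ 24 * (m:ℝ)^(α-1) * (4 * (m:ℝ)^s / s) := by
          refine mul_le_mul_of_nonneg_left ?_ (by positivity)
          refine div_le_div_of_nonneg_right ?_ hs0.le |>.trans_eq rfl
          calc (2*(m:ℝ))^s = 2^s * (m:ℝ)^s :=
                  Real.mul_rpow (by norm_num) (by positivity)
              _ ≤ 4 * (m:ℝ)^s := by
                  refine mul_le_mul_of_nonneg_right ?_ (by positivity)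
                  calc (2:ℝ)^s ≤ (2:ℝ)^(2:ℝ) :=
                        Real.rpow_le_rpow_of_exponent_le (by norm_num) (by linarith)
                      _ = 4 := by
                          rw [show ((2:ℝ):ℝ) = ((2:ℕ):ℝ) by norm_num, Real.rpow_natCast]
                          norm_num
      _ = 96 * ((m:ℝ)^(α-1) * (m:ℝ)^s) / s := by ring
      _ = 96 * (m:ℝ) / s := by
          rw [← Real.rpow_add hmpos, show α - 1 + s = 1 by rw [hsdef]; ring, Real.rpow_one]
  calc (1 / (2 * (m : ℝ))) * ∑ k ∈ Finset.Ico 1 (2 * m), (Rm α m ((k : ℝ) * Real.pi / (m : ℝ)))⁻¹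
      ≤ (1 / (2 * (m : ℝ))) * (96 * (m:ℝ) / s) :=
        mul_le_mul_of_nonneg_left hsum (by positivity)
      _ = 48 / s := by field_simp; ring
end
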